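/- arXiv:2501.09208 — 4 statements merged into one kernel-verified Lean document; each statement's English description precedes it below -/
import Mathlib

section
/- Set-valued standard tableaux of shape (e+t,e)/(f,0) with c+e-f+t entries in the first row and d+e entries in the second row are in bijection with two-coloured Motzkin paths from (0,f) to (n,t) with c umber horizontal steps, d denim horizontal steps, e-f+t up-steps, and e down-steps (so n = c+d+2e-f+t steps in total), where an umber horizontal step occurs neither before the first up-step nor at height 0, and a denim horizontal step does not occur before the first down-step. -/
/-- Steps of a two-coloured Motzkin path. -/
inductive MStep : Type
  | up : MStep
  | down : MStep
  | hu : MStep   -- umber horizontal step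
  | hd : MStep   -- denim horizontal step
  deriving DecidableEq

/-- The height change of a step. -/
def MStep.val : MStep → ℤ
  | .up => 1
  | .down => -1
  | .hu => 0
  | .hd => 0

/-- The ending height of a path starting at height `h0`. -/
def endHeight (h0 : ℤ) (l : List MStep) : ℤ := h0 + (l.map MStep.val).sum

/-- A list of steps is a (two-coloured) Motzkin path starting at height `h0` if it
never runs below the x-axis. -/
def IsMotzkin (h0 : ℤ) (l : List MStep) : Prop :=
  ∀ p : List MStep, p <+: l → 0 ≤ endHeight h0 p

/-- The cells of the two-rowed skew shape `(e+t,e)/(f,0)`, rows indexed by `0` (first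
row) and `1` (second row), columns `1`-indexed: the first row has cells in columns
`f+1,…,e+t`, the second row in columns `1,…,e`. -/
def InShape (e t f : ℕ) (p : ℕ × ℕ) : Prop :=
  (p.1 = 0 ∧ f + 1 ≤ p.2 ∧ p.2 ≤ e + t) ∨ (p.1 = 1 ∧ 1 ≤ p.2 ∧ p.2 ≤ e)

/-- `T` is a set-valued standard tableau of shape `(e+t,e)/(f,0)` with entries
`1,…,n`: each cell of the shape gets a nonempty set, the sets partition `{1,…,n}`,
and every number in a cell is less than all numbers in cells weakly to the right and
weakly below (the cell itself excluded). -/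
def IsSVT (n e t f : ℕ) (T : ℕ × ℕ → Finset ℕ) : Prop :=
  (∀ p, ¬ InShape e t f p → T p = ∅) ∧
  (∀ p, InShape e t f p → (T p).Nonempty) ∧
  (∀ p, ∀ k ∈ T p, k ∈ Finset.Icc 1 n) ∧
  (∀ k ∈ Finset.Icc 1 n, ∃! p : ℕ × ℕ, k ∈ T p) ∧
  (∀ p q : ℕ × ℕ, InShape e t f p → InShape e t f q → p ≠ q → p.1 ≤ q.1 → p.2 ≤ q.2 →
    ∀ a ∈ T p, ∀ b ∈ T q, a < b)

/-- The number of entries of `T` in row `r`, for a two-rowed tableau with at most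
`m` columns. -/
def rowEntries (m r : ℕ) (T : ℕ × ℕ → Finset ℕ) : ℕ :=
  ∑ j ∈ Finset.range (m + 1), (T (r, j)).card

lemma sum_map_val (p : List MStep) :
    (p.map MStep.val).sum = (p.count MStep.up : ℤ) - (p.count MStep.down : ℤ) := by
  induction p with
  | nil => simp
  | cons a p ih =>
    rw [List.map_cons, List.sum_cons, ih]
    cases a <;> simp [List.count_cons, MStep.val] <;> push_cast <;> ring

lemma endHeight_eq (h0 : ℤ) (p : List MStep) :
    endHeight h0 p = h0 + (p.count MStep.up : ℤ) - (p.count MStep.down : ℤ) := by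
  rw [endHeight, sum_map_val]; ring

lemma count_take_mono (l : List MStep) (x : MStep) {a b : ℕ} (h : a ≤ b) :
    (l.take a).count x ≤ (l.take b).count x := by
  have h2 : (l.take b).take a = l.take (min a b) := List.take_take
  rw [Nat.min_eq_left h] at h2
  rw [← h2]
  exact ((l.take b).take_sublist a).count_le x

lemma count_take_succ (l : List MStep) (x : MStep) {k : ℕ} (h : k < l.length) :
    (l.take (k+1)).count x = (l.take k).count x + if l.getD k MStep.up = x then 1 else 0 := by
  rw [List.take_succ, List.getD_eq_getElem l MStep.up h]
  have : l[k]? = some l[k] := List.getElem?_eq_getElem h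
  rw [this]
  rw [Option.toList_some, List.count_append, List.count_singleton']

lemma count_take_len (l : List MStep) (x : MStep) : (l.take l.length).count x = l.count x := by
  simp

/-- bridge between count on take and card of filter over range -/
lemma count_take_eq_card (l : List MStep) (x : MStep) :
    ∀ k, k ≤ l.length →
      (l.take k).count x = ((Finset.range k).filter fun i => l.getD i MStep.up = x).card := by
  intro k
  induction k with
  | zero => simp
  | succ k ih =>
    intro hk
    have hk' : k < l.length := hk
    rw [count_take_succ l x hk', ih (le_of_lt hk'), Finset.range_add_one, Finset.filter_insert]
    split
    · rw [Finset.card_insert_of_notMem (by simp)]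
    · simp

/-- first occurrence lemma -/
lemma exists_first (l : List MStep) (x : MStep) (m : ℕ) (h1 : 1 ≤ m) (h2 : m ≤ l.count x) :
    ∃ k, 1 ≤ k ∧ k ≤ l.length ∧ (l.take k).count x = m ∧ l.getD (k-1) MStep.up = x ∧
      ∀ k' < k, (l.take k').count x < m := by
  have hex : ∃ k, m ≤ (l.take k).count x := ⟨l.length, by simpa using h2⟩
  classical
  set k := Nat.find hex with hkdef
  have hk : m ≤ (l.take k).count x := Nat.find_spec hex
  have hmin : ∀ k' < k, (l.take k').count x < m := fun k' hk' => by
    have := Nat.find_min hex hk'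
    omega
  have hk1 : 1 ≤ k := by
    rcases Nat.eq_zero_or_pos k with h | h
    · exfalso; rw [h] at hk; simp at hk; omega
    · exact h
  have hklen : k ≤ l.length := by
    by_contra h
    push_neg at h
    have := hmin l.length h
    simp at this; omega
  have hklt : k - 1 < l.length := by omega
  have hstep := count_take_succ l x hklt
  have hksucc : k - 1 + 1 = k := by omega
  rw [hksucc] at hstep
  have hprev := hmin (k-1) (by omega)
  have heq : (l.take k).count x = m := by
    rcases (by split <;> omega : (if l.getD (k-1) MStep.up = x then 1 else 0) ≤ 1) with h
    omega
  refine ⟨k, hk1, hklen, heq, ?_, hmin⟩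
  by_contra h
  rw [if_neg h] at hstep
  omega

/-- the cell of the `k`-th entry -/
def cellOf (f : ℕ) (l : List MStep) (k : ℕ) : ℕ × ℕ :=
  match l.getD (k-1) MStep.up with
  | .up => (0, f + (l.take k).count MStep.up)
  | .hu => (0, f + (l.take k).count MStep.up)
  | .down => (1, (l.take k).count MStep.down)
  | .hd => (1, (l.take k).count MStep.down)

/-- the tableau built from a path -/
def Gtab (n f : ℕ) (l : List MStep) : ℕ × ℕ → Finset ℕ :=
  fun p => (Finset.Icc 1 n).filter fun k => cellOf f l k = p

lemma cellOf_row0 {l : List MStep} {k : ℕ} (f : ℕ)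
    (h : l.getD (k-1) MStep.up = MStep.up ∨ l.getD (k-1) MStep.up = MStep.hu) :
    cellOf f l k = (0, f + (l.take k).count MStep.up) := by
  rcases h with h | h <;> (unfold cellOf; rw [h])

lemma cellOf_row1 {l : List MStep} {k : ℕ} (f : ℕ)
    (h : l.getD (k-1) MStep.up = MStep.down ∨ l.getD (k-1) MStep.up = MStep.hd) :
    cellOf f l k = (1, (l.take k).count MStep.down) := by
  rcases h with h | h <;> (unfold cellOf; rw [h])

lemma cellOf_cases (f : ℕ) (l : List MStep) (k : ℕ) :
    (cellOf f l k).1 = 0 ∧ (l.getD (k-1) MStep.up = MStep.up ∨ l.getD (k-1) MStep.up = MStep.hu)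
      ∧ cellOf f l k = (0, f + (l.take k).count MStep.up) ∨
    (cellOf f l k).1 = 1 ∧ (l.getD (k-1) MStep.up = MStep.down ∨ l.getD (k-1) MStep.up = MStep.hd)
      ∧ cellOf f l k = (1, (l.take k).count MStep.down) := by
  cases h : l.getD (k-1) MStep.up <;> (unfold cellOf; rw [h]; simp)

/-- the `k`-th step as a concatenation -/
lemma take_eq_concat {l : List MStep} {k : ℕ} (h1 : 1 ≤ k) (h2 : k ≤ l.length) :
    l.take k = l.take (k-1) ++ [l.getD (k-1) MStep.up] := by
  have hk : k - 1 < l.length := by omega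
  have hks : k = (k-1) + 1 := by omega
  have h3 : l.take ((k-1)+1) = l.take (k-1) ++ l[k-1]?.toList := List.take_succ
  rw [List.getElem?_eq_getElem hk, Option.toList_some] at h3
  rw [List.getD_eq_getElem l MStep.up hk]
  conv_lhs => rw [hks]
  exact h3

lemma getD_mem_take {l : List MStep} {k : ℕ} (h1 : 1 ≤ k) (h2 : k ≤ l.length) :
    l.getD (k-1) MStep.up ∈ l.take k := by
  rw [take_eq_concat h1 h2]; simp

lemma count_take_le (l : List MStep) (x : MStep) (k : ℕ) :
    (l.take k).count x ≤ l.count x := (l.take_sublist k).count_le x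

lemma endHeight_take (f : ℕ) (l : List MStep) (k : ℕ) :
    endHeight (f : ℤ) (l.take k) =
      (f : ℤ) + ((l.take k).count MStep.up : ℤ) - ((l.take k).count MStep.down : ℤ) :=
  endHeight_eq _ _

/-- generic index shift between `range n` and `Icc 1 n` -/
lemma card_shift (n : ℕ) (P : ℕ → Prop) [DecidablePred P] :
    ((Finset.range n).filter fun i => P (i+1)).card = ((Finset.Icc 1 n).filter P).card := by
  apply Finset.card_nbij' (fun i => i + 1) (fun k => k - 1)
  · intro i hi
    simp only [Finset.mem_coe, Finset.mem_filter, Finset.mem_range] at hi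
    simp only [Finset.mem_coe, Finset.mem_filter, Finset.mem_Icc]
    exact ⟨⟨by omega, by omega⟩, hi.2⟩
  · intro k hk
    simp only [Finset.mem_coe, Finset.mem_filter, Finset.mem_Icc] at hk
    simp only [Finset.mem_coe, Finset.mem_filter, Finset.mem_range]
    refine ⟨by omega, ?_⟩
    have h : k - 1 + 1 = k := by omega
    rw [h]; exact hk.2
  · intro i _
    simp
  · intro k hk
    simp only [Finset.mem_coe, Finset.mem_filter, Finset.mem_Icc] at hk
    beta_reduce
    omega

lemma count_eq_card_Icc (l : List MStep) (x : MStep) {n : ℕ} (hlen : l.length = n) :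
    l.count x = ((Finset.Icc 1 n).filter fun k => l.getD (k-1) MStep.up = x).card := by
  have h1 : l.count x = (l.take n).count x := by rw [← hlen]; simp
  rw [h1, count_take_eq_card l x n (by omega), ← card_shift n (fun k => l.getD (k-1) MStep.up = x)]
  congr 1

section Forward

variable {n t c d e f : ℕ} {l : List MStep}

/-- every numbered cell lies in the shape -/
lemma cellOf_inShape (hf : f ≤ e + t)
    (hup : l.count MStep.up = e + t - f) (hdn : l.count MStep.down = e)
    (hHu : ∀ p : List MStep, p ++ [MStep.hu] <+: l → (MStep.up ∈ p ∧ endHeight (f : ℤ) p ≠ 0))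
    (hHd : ∀ p : List MStep, p ++ [MStep.hd] <+: l → MStep.down ∈ p)
    {k : ℕ} (h1 : 1 ≤ k) (h2 : k ≤ l.length) :
    InShape e t f (cellOf f l k) := by
  have htk : l.take (k-1) ++ [l.getD (k-1) MStep.up] <+: l := by
    rw [← take_eq_concat h1 h2]; exact l.take_prefix k
  rcases cellOf_cases f l k with ⟨_, hs, heq⟩ | ⟨_, hs, heq⟩
  · left
    rw [heq]
    have hle : (l.take k).count MStep.up ≤ e + t - f := hup ▸ count_take_le l _ k
    have hge : 1 ≤ (l.take k).count MStep.up := by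
      rcases hs with hs | hs
      · exact List.count_pos_iff.mpr (hs ▸ getD_mem_take h1 h2)
      · have hmem := (hHu (l.take (k-1)) (hs ▸ htk)).1
        have : 1 ≤ (l.take (k-1)).count MStep.up := List.count_pos_iff.mpr hmem
        exact le_trans this (count_take_mono l _ (by omega))
    exact ⟨rfl, by omega, by omega⟩
  · right
    rw [heq]
    have hle : (l.take k).count MStep.down ≤ e := hdn ▸ count_take_le l _ k
    have hge : 1 ≤ (l.take k).count MStep.down := by
      rcases hs with hs | hs
      · exact List.count_pos_iff.mpr (hs ▸ getD_mem_take h1 h2)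
      · have hmem := hHd (l.take (k-1)) (hs ▸ htk)
        have : 1 ≤ (l.take (k-1)).count MStep.down := List.count_pos_iff.mpr hmem
        exact le_trans this (count_take_mono l _ (by omega))
    exact ⟨rfl, hge, hle⟩

lemma isSVT_Gtab (hf : f ≤ e + t)
    (hM : IsMotzkin (f : ℤ) l) (hlen : l.length = n)
    (hup : l.count MStep.up = e + t - f) (hdn : l.count MStep.down = e)
    (hHu : ∀ p : List MStep, p ++ [MStep.hu] <+: l → (MStep.up ∈ p ∧ endHeight (f : ℤ) p ≠ 0))
    (hHd : ∀ p : List MStep, p ++ [MStep.hd] <+: l → MStep.down ∈ p) :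
    IsSVT n e t f (Gtab n f l) := by
  have hshape : ∀ k, 1 ≤ k → k ≤ n → InShape e t f (cellOf f l k) := fun k h1 h2 =>
    cellOf_inShape hf hup hdn hHu hHd h1 (by omega)
  refine ⟨?_, ?_, ?_, ?_, ?_⟩
  · -- empty outside shape
    intro p hp
    rw [Gtab, Finset.filter_eq_empty_iff]
    intro k hk
    rw [Finset.mem_Icc] at hk
    intro hcell
    exact hp (hcell ▸ hshape k hk.1 hk.2)
  · -- nonempty in shape
    intro p hp
    rcases hp with ⟨hp0, hp1, hp2⟩ | ⟨hp0, hp1, hp2⟩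
    · obtain ⟨k, hk1, hk2, hk3, hk4, -⟩ :=
        exists_first l MStep.up (p.2 - f) (by omega) (by omega)
      refine ⟨k, Finset.mem_filter.mpr ⟨Finset.mem_Icc.mpr ⟨hk1, by omega⟩, ?_⟩⟩
      rw [cellOf_row0 f (Or.inl hk4), hk3]
      ext
      · simp [hp0]
      · simp; omega
    · obtain ⟨k, hk1, hk2, hk3, hk4, -⟩ :=
        exists_first l MStep.down p.2 (by omega) (by omega)
      refine ⟨k, Finset.mem_filter.mpr ⟨Finset.mem_Icc.mpr ⟨hk1, by omega⟩, ?_⟩⟩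
      rw [cellOf_row1 f (Or.inl hk4), hk3]
      ext
      · simp [hp0]
      · simp
  · -- entries in Icc
    intro p k hk
    exact (Finset.mem_filter.mp hk).1
  · -- unique cell
    intro k hk
    exact ⟨cellOf f l k, Finset.mem_filter.mpr ⟨hk, rfl⟩,
      fun q hq => ((Finset.mem_filter.mp hq).2).symm⟩
  · -- order condition
    intro p q hp hq hpq hrow hcol a ha b hb
    obtain ⟨haI, hacell⟩ := Finset.mem_filter.mp ha
    obtain ⟨hbI, hbcell⟩ := Finset.mem_filter.mp hb
    rw [Finset.mem_Icc] at haI hbI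
    rcases cellOf_cases f l a with ⟨-, hsa, haeq⟩ | ⟨-, hsa, haeq⟩ <;>
      rcases cellOf_cases f l b with ⟨-, hsb, hbeq⟩ | ⟨-, hsb, hbeq⟩
    · -- both row 0
      rw [hacell] at haeq; rw [hbcell] at hbeq
      have hUab : (l.take a).count MStep.up < (l.take b).count MStep.up := by
        have h1 : p.2 = f + (l.take a).count MStep.up := by rw [haeq]
        have h2 : q.2 = f + (l.take b).count MStep.up := by rw [hbeq]
        have hne : p.2 ≠ q.2 := by
          intro hc; exact hpq (by rw [haeq, hbeq, ← h1, ← h2, hc])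
        omega
      by_contra hab
      exact absurd (count_take_mono l MStep.up (by omega : b ≤ a)) (by omega)
    · -- a row 0, b row 1 : height argument
      rw [hacell] at haeq; rw [hbcell] at hbeq
      by_contra hab
      push_neg at hab
      have hDab : (l.take b).count MStep.down ≤ (l.take a).count MStep.down :=
        count_take_mono l MStep.down hab
      have hcol' : f + (l.take a).count MStep.up ≤ (l.take b).count MStep.down := by
        have h1 : p.2 = f + (l.take a).count MStep.up := by rw [haeq]
        have h2 : q.2 = (l.take b).count MStep.down := by rw [hbeq]
        omega
      have hMa : 0 ≤ endHeight (f : ℤ) (l.take a) := hM _ (l.take_prefix a)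
      rw [endHeight_take] at hMa
      have hDa : (l.take a).count MStep.down = f + (l.take a).count MStep.up := by omega
      have halen : a - 1 < l.length := by omega
      have hsucc : a - 1 + 1 = a := by omega
      have hcu := count_take_succ l MStep.up halen
      have hcd := count_take_succ l MStep.down halen
      rw [hsucc] at hcu hcd
      rcases hsa with hsa | hsa
      · rw [if_pos hsa] at hcu
        rw [if_neg (by rw [hsa]; intro h; exact absurd h (by decide))] at hcd
        have hMa' : 0 ≤ endHeight (f : ℤ) (l.take (a-1)) := hM _ (l.take_prefix (a-1))
        rw [endHeight_take] at hMa'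
        omega
      · have htk : l.take (a-1) ++ [MStep.hu] <+: l := by
          rw [← hsa, ← take_eq_concat haI.1 (by omega)]; exact l.take_prefix a
        have hne := (hHu _ htk).2
        rw [if_neg (by rw [hsa]; intro h; exact absurd h (by decide))] at hcu
        rw [if_neg (by rw [hsa]; intro h; exact absurd h (by decide))] at hcd
        apply hne
        rw [endHeight_take]
        omega
    · -- a row 1, b row 0 : impossible
      rw [hacell] at haeq; rw [hbcell] at hbeq
      rw [haeq, hbeq] at hrow
      simp at hrow
    · -- both row 1
      rw [hacell] at haeq; rw [hbcell] at hbeq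
      have hDab : (l.take a).count MStep.down < (l.take b).count MStep.down := by
        have h1 : p.2 = (l.take a).count MStep.down := by rw [haeq]
        have h2 : q.2 = (l.take b).count MStep.down := by rw [hbeq]
        have hne : p.2 ≠ q.2 := by
          intro hc; exact hpq (by rw [haeq, hbeq, ← h1, ← h2, hc])
        omega
      by_contra hab
      exact absurd (count_take_mono l MStep.down (by omega : b ≤ a)) (by omega)

end Forward

section Forward2

variable {n t c d e f : ℕ} {l : List MStep}

lemma rowEntries_Gtab0 (hf : f ≤ e + t)
    (hup : l.count MStep.up = e + t - f) (hdn : l.count MStep.down = e)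
    (hHu : ∀ p : List MStep, p ++ [MStep.hu] <+: l → (MStep.up ∈ p ∧ endHeight (f : ℤ) p ≠ 0))
    (hHd : ∀ p : List MStep, p ++ [MStep.hd] <+: l → MStep.down ∈ p)
    (hlen : l.length = n) :
    rowEntries (e + t) 0 (Gtab n f l) = l.count MStep.up + l.count MStep.hu := by
  classical
  set S := (Finset.Icc 1 n).filter (fun k => (cellOf f l k).1 = 0) with hS
  have hcard : S.card = ∑ j ∈ Finset.range (e + t + 1),
      (S.filter fun k => (cellOf f l k).2 = j).card := by
    apply Finset.card_eq_sum_card_fiberwise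
    intro x hx
    rw [hS, Finset.mem_coe, Finset.mem_filter, Finset.mem_Icc] at hx
    simp only [Finset.mem_coe, Finset.mem_range]
    have := cellOf_inShape hf hup hdn hHu hHd hx.1.1 (by omega)
    rcases this with ⟨h0, -, h2⟩ | ⟨h0, -, h2⟩ <;> omega
  have hfib : ∀ j, S.filter (fun k => (cellOf f l k).2 = j) = Gtab n f l (0, j) := by
    intro j
    rw [hS, Gtab, Finset.filter_filter]
    apply Finset.filter_congr
    intro k _
    constructor
    · rintro ⟨hh1, hh2⟩; exact Prod.ext hh1 hh2
    · intro hh; rw [hh]; exact ⟨rfl, rfl⟩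
  have h1 : rowEntries (e + t) 0 (Gtab n f l) = S.card := by
    rw [rowEntries, hcard]
    exact Finset.sum_congr rfl fun j _ => by rw [hfib j]
  have h2 : S = ((Finset.Icc 1 n).filter fun k => l.getD (k-1) MStep.up = MStep.up) ∪
      ((Finset.Icc 1 n).filter fun k => l.getD (k-1) MStep.up = MStep.hu) := by
    ext k
    simp only [hS, Finset.mem_filter, Finset.mem_union]
    constructor
    · rintro ⟨hk, hrow⟩
      rcases cellOf_cases f l k with ⟨-, hs, -⟩ | ⟨hh, -, -⟩
      · rcases hs with hs | hs
        · exact Or.inl ⟨hk, hs⟩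
        · exact Or.inr ⟨hk, hs⟩
      · omega
    · rintro (⟨hk, hs⟩ | ⟨hk, hs⟩) <;>
        exact ⟨hk, by rw [cellOf_row0 f (by tauto)]⟩
  have hdisj : Disjoint ((Finset.Icc 1 n).filter fun k => l.getD (k-1) MStep.up = MStep.up)
      ((Finset.Icc 1 n).filter fun k => l.getD (k-1) MStep.up = MStep.hu) := by
    rw [Finset.disjoint_left]
    intro k hk1 hk2
    rw [Finset.mem_filter] at hk1 hk2
    rw [hk1.2] at hk2
    exact absurd hk2.2 (by decide)
  rw [h1, h2, Finset.card_union_of_disjoint hdisj,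
    ← count_eq_card_Icc l MStep.up hlen, ← count_eq_card_Icc l MStep.hu hlen]

lemma rowEntries_Gtab1 (hf : f ≤ e + t)
    (hup : l.count MStep.up = e + t - f) (hdn : l.count MStep.down = e)
    (hHu : ∀ p : List MStep, p ++ [MStep.hu] <+: l → (MStep.up ∈ p ∧ endHeight (f : ℤ) p ≠ 0))
    (hHd : ∀ p : List MStep, p ++ [MStep.hd] <+: l → MStep.down ∈ p)
    (hlen : l.length = n) :
    rowEntries (e + t) 1 (Gtab n f l) = l.count MStep.down + l.count MStep.hd := by
  classical
  set S := (Finset.Icc 1 n).filter (fun k => (cellOf f l k).1 = 1) with hS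
  have hcard : S.card = ∑ j ∈ Finset.range (e + t + 1),
      (S.filter fun k => (cellOf f l k).2 = j).card := by
    apply Finset.card_eq_sum_card_fiberwise
    intro x hx
    rw [hS, Finset.mem_coe, Finset.mem_filter, Finset.mem_Icc] at hx
    simp only [Finset.mem_coe, Finset.mem_range]
    have := cellOf_inShape hf hup hdn hHu hHd hx.1.1 (by omega)
    rcases this with ⟨h0, -, h2⟩ | ⟨h0, -, h2⟩ <;> omega
  have hfib : ∀ j, S.filter (fun k => (cellOf f l k).2 = j) = Gtab n f l (1, j) := by
    intro j
    rw [hS, Gtab, Finset.filter_filter]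
    apply Finset.filter_congr
    intro k _
    constructor
    · rintro ⟨hh1, hh2⟩; exact Prod.ext hh1 hh2
    · intro hh; rw [hh]; exact ⟨rfl, rfl⟩
  have h1 : rowEntries (e + t) 1 (Gtab n f l) = S.card := by
    rw [rowEntries, hcard]
    exact Finset.sum_congr rfl fun j _ => by rw [hfib j]
  have h2 : S = ((Finset.Icc 1 n).filter fun k => l.getD (k-1) MStep.up = MStep.down) ∪
      ((Finset.Icc 1 n).filter fun k => l.getD (k-1) MStep.up = MStep.hd) := by
    ext k
    simp only [hS, Finset.mem_filter, Finset.mem_union]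
    constructor
    · rintro ⟨hk, hrow⟩
      rcases cellOf_cases f l k with ⟨hh, -, -⟩ | ⟨-, hs, -⟩
      · omega
      · rcases hs with hs | hs
        · exact Or.inl ⟨hk, hs⟩
        · exact Or.inr ⟨hk, hs⟩
    · rintro (⟨hk, hs⟩ | ⟨hk, hs⟩) <;>
        exact ⟨hk, by rw [cellOf_row1 f (by tauto)]⟩
  have hdisj : Disjoint ((Finset.Icc 1 n).filter fun k => l.getD (k-1) MStep.up = MStep.down)
      ((Finset.Icc 1 n).filter fun k => l.getD (k-1) MStep.up = MStep.hd) := by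
    rw [Finset.disjoint_left]
    intro k hk1 hk2
    rw [Finset.mem_filter] at hk1 hk2
    rw [hk1.2] at hk2
    exact absurd hk2.2 (by decide)
  rw [h1, h2, Finset.card_union_of_disjoint hdisj,
    ← count_eq_card_Icc l MStep.down hlen, ← count_eq_card_Icc l MStep.hd hlen]

/-- an up or down step is the minimum of its cell -/
lemma no_earlier {a : ℕ} (h1 : 1 ≤ a) (h2 : a ≤ l.length)
    (hs : l.getD (a-1) MStep.up = MStep.up ∨ l.getD (a-1) MStep.up = MStep.down) :
    ∀ a', 1 ≤ a' → a' < a → cellOf f l a' ≠ cellOf f l a := by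
  intro a' ha1 ha2 hcell
  have halen : a - 1 < l.length := by omega
  have hsucc : a - 1 + 1 = a := by omega
  rcases hs with hs | hs
  · have hcu := count_take_succ l MStep.up halen
    rw [hsucc, if_pos hs] at hcu
    rw [cellOf_row0 f (Or.inl hs)] at hcell
    have hmono := count_take_mono l MStep.up (by omega : a' ≤ a - 1)
    rcases cellOf_cases f l a' with ⟨-, -, heq⟩ | ⟨-, -, heq⟩ <;> rw [heq] at hcell
    · have := (Prod.ext_iff.mp hcell).2
      simp only at this
      omega
    · exact absurd (Prod.ext_iff.mp hcell).1 (by simp)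
  · have hcu := count_take_succ l MStep.down halen
    rw [hsucc, if_pos hs] at hcu
    rw [cellOf_row1 f (Or.inl hs)] at hcell
    have hmono := count_take_mono l MStep.down (by omega : a' ≤ a - 1)
    rcases cellOf_cases f l a' with ⟨-, -, heq⟩ | ⟨-, -, heq⟩ <;> rw [heq] at hcell
    · exact absurd (Prod.ext_iff.mp hcell).1 (by simp)
    · have := (Prod.ext_iff.mp hcell).2
      simp only at this
      omega

/-- a horizontal step has an earlier entry in the same cell -/
lemma exists_earlier
    (hHu : ∀ p : List MStep, p ++ [MStep.hu] <+: l → (MStep.up ∈ p ∧ endHeight (f : ℤ) p ≠ 0))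
    (hHd : ∀ p : List MStep, p ++ [MStep.hd] <+: l → MStep.down ∈ p)
    {a : ℕ} (h1 : 1 ≤ a) (h2 : a ≤ l.length)
    (hs : l.getD (a-1) MStep.up = MStep.hu ∨ l.getD (a-1) MStep.up = MStep.hd) :
    ∃ a', 1 ≤ a' ∧ a' < a ∧ cellOf f l a' = cellOf f l a := by
  have halen : a - 1 < l.length := by omega
  have hsucc : a - 1 + 1 = a := by omega
  have htk : l.take (a-1) ++ [l.getD (a-1) MStep.up] <+: l := by
    rw [← take_eq_concat h1 h2]; exact l.take_prefix a
  rcases hs with hs | hs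
  · have hcu := count_take_succ l MStep.up halen
    rw [hsucc, if_neg (by rw [hs]; exact fun h => absurd h (by decide))] at hcu
    have hmem := (hHu _ (hs ▸ htk)).1
    have hpos : 1 ≤ (l.take (a-1)).count MStep.up := List.count_pos_iff.mpr hmem
    set m := (l.take a).count MStep.up with hm
    obtain ⟨k, hk1, hk2, hk3, hk4, hk5⟩ := exists_first l MStep.up m (by omega)
      (le_trans (le_of_eq hm.symm) (count_take_le l _ a))
    refine ⟨k, hk1, ?_, ?_⟩
    · by_contra hc
      push_neg at hc
      have := hk5 (a-1)
      rcases Nat.lt_or_ge (a-1) k with hlt | hge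
      · omega
      · have := count_take_mono l MStep.up hge
        have := hk5 (a-1)
        omega
    · rw [cellOf_row0 f (Or.inl hk4), cellOf_row0 f (Or.inr hs), hk3]
  · have hcd := count_take_succ l MStep.down halen
    rw [hsucc, if_neg (by rw [hs]; exact fun h => absurd h (by decide))] at hcd
    have hmem := hHd _ (hs ▸ htk)
    have hpos : 1 ≤ (l.take (a-1)).count MStep.down := List.count_pos_iff.mpr hmem
    set m := (l.take a).count MStep.down with hm
    obtain ⟨k, hk1, hk2, hk3, hk4, hk5⟩ := exists_first l MStep.down m (by omega)
      (le_trans (le_of_eq hm.symm) (count_take_le l _ a))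
    refine ⟨k, hk1, ?_, ?_⟩
    · by_contra hc
      push_neg at hc
      rcases Nat.lt_or_ge (a-1) k with hlt | hge
      · have := hk5 (a-1) (by omega)
        omega
      · have := count_take_mono l MStep.down hge
        omega
    · rw [cellOf_row1 f (Or.inl hk4), cellOf_row1 f (Or.inr hs), hk3]

end Forward2

section Inj

variable {n t c d e f : ℕ}

lemma Gtab_inj {l l' : List MStep}
    (hHu : ∀ p : List MStep, p ++ [MStep.hu] <+: l → (MStep.up ∈ p ∧ endHeight (f : ℤ) p ≠ 0))
    (hHd : ∀ p : List MStep, p ++ [MStep.hd] <+: l → MStep.down ∈ p)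
    (hHu' : ∀ p : List MStep, p ++ [MStep.hu] <+: l' → (MStep.up ∈ p ∧ endHeight (f : ℤ) p ≠ 0))
    (hHd' : ∀ p : List MStep, p ++ [MStep.hd] <+: l' → MStep.down ∈ p)
    (hlen : l.length = n) (hlen' : l'.length = n)
    (h : Gtab n f l = Gtab n f l') : l = l' := by
  have hcell : ∀ k, 1 ≤ k → k ≤ n → cellOf f l' k = cellOf f l k := by
    intro k hk1 hk2
    have hmem : k ∈ Gtab n f l (cellOf f l k) :=
      Finset.mem_filter.mpr ⟨Finset.mem_Icc.mpr ⟨hk1, hk2⟩, rfl⟩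
    rw [h] at hmem
    exact (Finset.mem_filter.mp hmem).2
  have hstep : ∀ k, 1 ≤ k → k ≤ n → l.getD (k-1) MStep.up = l'.getD (k-1) MStep.up := by
    intro k hk1 hk2
    have hl2 : k ≤ l.length := by omega
    have hl2' : k ≤ l'.length := by omega
    have hc0 : cellOf f l' k = cellOf f l k := hcell k hk1 hk2
    have hup_hu : l.getD (k-1) MStep.up = MStep.up →
        l'.getD (k-1) MStep.up = MStep.hu → False := by
      intro hsl hsl'
      obtain ⟨a', ha1, ha2, ha3⟩ := exists_earlier hHu' hHd' hk1 hl2' (Or.inl hsl')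
      have h₁ : cellOf f l' a' = cellOf f l a' := hcell a' ha1 (by omega)
      exact no_earlier hk1 hl2 (Or.inl hsl) a' ha1 ha2 (by rw [← h₁, ha3, hc0])
    have hhu_up : l.getD (k-1) MStep.up = MStep.hu →
        l'.getD (k-1) MStep.up = MStep.up → False := by
      intro hsl hsl'
      obtain ⟨a', ha1, ha2, ha3⟩ := exists_earlier hHu hHd hk1 hl2 (Or.inl hsl)
      have h₁ : cellOf f l' a' = cellOf f l a' := hcell a' ha1 (by omega)
      exact no_earlier hk1 hl2' (Or.inl hsl') a' ha1 ha2 (by rw [h₁, ha3, ← hc0])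
    have hdn_hd : l.getD (k-1) MStep.up = MStep.down →
        l'.getD (k-1) MStep.up = MStep.hd → False := by
      intro hsl hsl'
      obtain ⟨a', ha1, ha2, ha3⟩ := exists_earlier hHu' hHd' hk1 hl2' (Or.inr hsl')
      have h₁ : cellOf f l' a' = cellOf f l a' := hcell a' ha1 (by omega)
      exact no_earlier hk1 hl2 (Or.inr hsl) a' ha1 ha2 (by rw [← h₁, ha3, hc0])
    have hhd_dn : l.getD (k-1) MStep.up = MStep.hd →
        l'.getD (k-1) MStep.up = MStep.down → False := by
      intro hsl hsl'
      obtain ⟨a', ha1, ha2, ha3⟩ := exists_earlier hHu hHd hk1 hl2 (Or.inr hsl)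
      have h₁ : cellOf f l' a' = cellOf f l a' := hcell a' ha1 (by omega)
      exact no_earlier hk1 hl2' (Or.inr hsl') a' ha1 ha2 (by rw [h₁, ha3, ← hc0])
    cases hsl : l.getD (k-1) MStep.up <;> cases hsl' : l'.getD (k-1) MStep.up
    case up.up => rfl
    case down.down => rfl
    case hu.hu => rfl
    case hd.hd => rfl
    case up.hu => exact absurd (hup_hu hsl hsl') not_false
    case hu.up => exact absurd (hhu_up hsl hsl') not_false
    case down.hd => exact absurd (hdn_hd hsl hsl') not_false
    case hd.down => exact absurd (hhd_dn hsl hsl') not_false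
    case up.down =>
      rw [cellOf_row0 f (Or.inl hsl)] at hc0
      rw [cellOf_row1 f (Or.inl hsl')] at hc0
      exact absurd (Prod.ext_iff.mp hc0).1 (by omega)
    case up.hd =>
      rw [cellOf_row0 f (Or.inl hsl)] at hc0
      rw [cellOf_row1 f (Or.inr hsl')] at hc0
      exact absurd (Prod.ext_iff.mp hc0).1 (by omega)
    case down.up =>
      rw [cellOf_row1 f (Or.inl hsl)] at hc0
      rw [cellOf_row0 f (Or.inl hsl')] at hc0
      exact absurd (Prod.ext_iff.mp hc0).1 (by omega)
    case down.hu =>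
      rw [cellOf_row1 f (Or.inl hsl)] at hc0
      rw [cellOf_row0 f (Or.inr hsl')] at hc0
      exact absurd (Prod.ext_iff.mp hc0).1 (by omega)
    case hu.down =>
      rw [cellOf_row0 f (Or.inr hsl)] at hc0
      rw [cellOf_row1 f (Or.inl hsl')] at hc0
      exact absurd (Prod.ext_iff.mp hc0).1 (by omega)
    case hu.hd =>
      rw [cellOf_row0 f (Or.inr hsl)] at hc0
      rw [cellOf_row1 f (Or.inr hsl')] at hc0
      exact absurd (Prod.ext_iff.mp hc0).1 (by omega)
    case hd.up =>
      rw [cellOf_row1 f (Or.inr hsl)] at hc0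
      rw [cellOf_row0 f (Or.inl hsl')] at hc0
      exact absurd (Prod.ext_iff.mp hc0).1 (by omega)
    case hd.hu =>
      rw [cellOf_row1 f (Or.inr hsl)] at hc0
      rw [cellOf_row0 f (Or.inr hsl')] at hc0
      exact absurd (Prod.ext_iff.mp hc0).1 (by omega)
  apply List.ext_getElem (by omega)
  intro i hi hi'
  have h1 : l.getD i MStep.up = l[i] := List.getD_eq_getElem l MStep.up hi
  have h2 : l'.getD i MStep.up = l'[i] := List.getD_eq_getElem l' MStep.up hi'
  have h3 := hstep (i+1) (by omega) (by omega)
  simp only [Nat.add_sub_cancel] at h3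
  rw [← h1, ← h2, h3]

end Inj

section Reverse

open Classical in
/-- the cell containing `k` -/
noncomputable def cellT (T : ℕ × ℕ → Finset ℕ) (k : ℕ) : ℕ × ℕ :=
  if h : ∃ p, k ∈ T p then h.choose else (0, 0)

open Classical in
/-- the minimum of the cell `p` -/
noncomputable def minc (T : ℕ × ℕ → Finset ℕ) (p : ℕ × ℕ) : ℕ :=
  if h : (T p).Nonempty then (T p).min' h else 0

open Classical in
/-- the step associated to the number `k` -/
noncomputable def stepT (T : ℕ × ℕ → Finset ℕ) (k : ℕ) : MStep :=
  if (cellT T k).1 = 0 then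
    (if ∀ k' ∈ T (cellT T k), k ≤ k' then MStep.up else MStep.hu)
  else
    (if ∀ k' ∈ T (cellT T k), k ≤ k' then MStep.down else MStep.hd)

/-- the path associated to a tableau -/
noncomputable def pathOf (T : ℕ × ℕ → Finset ℕ) (n : ℕ) : List MStep :=
  (List.range n).map (fun i => stepT T (i+1))

variable {n t c d e f : ℕ} {T : ℕ × ℕ → Finset ℕ}

lemma mem_cellT {k : ℕ} (h : ∃ p, k ∈ T p) : k ∈ T (cellT T k) := by
  rw [cellT, dif_pos h]
  exact h.choose_spec

lemma cellT_eq (hT : IsSVT n e t f T) {k : ℕ} {p : ℕ × ℕ} (hk : k ∈ T p) : cellT T k = p := by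
  obtain ⟨q, hq, huniq⟩ := hT.2.2.2.1 k (hT.2.2.1 p k hk)
  rw [huniq _ (mem_cellT ⟨p, hk⟩), huniq _ hk]

lemma mem_cellT' (hT : IsSVT n e t f T) {k : ℕ} (hk : k ∈ Finset.Icc 1 n) :
    k ∈ T (cellT T k) := by
  obtain ⟨q, hq, -⟩ := hT.2.2.2.1 k hk
  exact mem_cellT ⟨q, hq⟩

lemma cellT_inShape (hT : IsSVT n e t f T) {k : ℕ} (hk : k ∈ Finset.Icc 1 n) :
    InShape e t f (cellT T k) := by
  by_contra h
  have := hT.1 _ h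
  have := mem_cellT' hT hk
  simp_all

lemma minc_mem (hT : IsSVT n e t f T) {p : ℕ × ℕ} (hp : InShape e t f p) : minc T p ∈ T p := by
  rw [minc, dif_pos (hT.2.1 p hp)]
  exact Finset.min'_mem _ _

lemma minc_le (hT : IsSVT n e t f T) {p : ℕ × ℕ} (hp : InShape e t f p) {k : ℕ}
    (hk : k ∈ T p) : minc T p ≤ k := by
  rw [minc, dif_pos (hT.2.1 p hp)]
  exact Finset.min'_le _ _ hk

lemma stepT_up_iff (k : ℕ) : stepT T k = MStep.up ↔
    (cellT T k).1 = 0 ∧ ∀ k' ∈ T (cellT T k), k ≤ k' := by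
  rw [stepT]; split_ifs with h1 h2 <;> simp_all

lemma stepT_hu_iff (k : ℕ) : stepT T k = MStep.hu ↔
    (cellT T k).1 = 0 ∧ ¬ ∀ k' ∈ T (cellT T k), k ≤ k' := by
  rw [stepT]; split_ifs with h1 h2 <;> simp_all

lemma stepT_down_iff (k : ℕ) : stepT T k = MStep.down ↔
    ¬ (cellT T k).1 = 0 ∧ ∀ k' ∈ T (cellT T k), k ≤ k' := by
  rw [stepT]; split_ifs with h1 h2 <;> simp_all

lemma stepT_hd_iff (k : ℕ) : stepT T k = MStep.hd ↔
    ¬ (cellT T k).1 = 0 ∧ ¬ ∀ k' ∈ T (cellT T k), k ≤ k' := by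
  rw [stepT]; split_ifs with h1 h2 <;> simp_all

lemma length_pathOf : (pathOf T n).length = n := by simp [pathOf]

lemma getD_pathOf {i : ℕ} (hi : i < n) : (pathOf T n).getD i MStep.up = stepT T (i+1) := by
  rw [pathOf, List.getD_eq_getElem _ _ (by simpa using hi)]
  simp

/-- up-steps among the first `k` match row-0 cells with minimum at most `k` -/
lemma countA (hT : IsSVT n e t f T) {k : ℕ} (hk : k ≤ n) :
    ((Finset.range k).filter fun i => stepT T (i+1) = MStep.up).card =
    ((Finset.Icc (f+1) (e+t)).filter fun j => minc T (0, j) ≤ k).card := by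
  apply Finset.card_nbij' (fun i => (cellT T (i+1)).2) (fun j => minc T (0, j) - 1)
  · intro i hi
    rw [Finset.mem_coe, Finset.mem_filter, Finset.mem_range] at hi
    obtain ⟨hik, hstep⟩ := hi
    obtain ⟨hrow, hmin⟩ := (stepT_up_iff (i+1)).mp hstep
    have hicc : i + 1 ∈ Finset.Icc 1 n := Finset.mem_Icc.mpr ⟨by omega, by omega⟩
    have hshape := cellT_inShape hT hicc
    have hcellmem := mem_cellT' hT hicc
    rcases hshape with ⟨h0, h1, h2⟩ | ⟨h0, -, -⟩
    · simp only [Finset.mem_coe, Finset.mem_filter, Finset.mem_Icc]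
      refine ⟨⟨h1, h2⟩, ?_⟩
      have hpe : (0, (cellT T (i+1)).2) = cellT T (i+1) := Prod.ext h0.symm rfl
      rw [hpe]
      exact le_trans (minc_le hT (hpe ▸ (Or.inl ⟨rfl, h1, h2⟩)) hcellmem) (by omega)
    · omega
  · intro j hj
    rw [Finset.mem_coe, Finset.mem_filter, Finset.mem_Icc] at hj
    obtain ⟨⟨hj1, hj2⟩, hjk⟩ := hj
    have hshape : InShape e t f (0, j) := Or.inl ⟨rfl, hj1, hj2⟩
    have hmem := minc_mem hT hshape
    have hicc := hT.2.2.1 _ _ hmem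
    rw [Finset.mem_Icc] at hicc
    have hm1 : minc T (0, j) - 1 + 1 = minc T (0, j) := by omega
    simp only [Finset.mem_coe, Finset.mem_filter, Finset.mem_range, hm1]
    refine ⟨by omega, (stepT_up_iff _).mpr ?_⟩
    rw [cellT_eq hT hmem]
    exact ⟨rfl, fun k' hk' => minc_le hT hshape hk'⟩
  · intro i hi
    rw [Finset.mem_coe, Finset.mem_filter, Finset.mem_range] at hi
    obtain ⟨hik, hstep⟩ := hi
    obtain ⟨hrow, hmin⟩ := (stepT_up_iff (i+1)).mp hstep
    have hicc : i + 1 ∈ Finset.Icc 1 n := Finset.mem_Icc.mpr ⟨by omega, by omega⟩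
    have hcellmem := mem_cellT' hT hicc
    have hpe : (0, (cellT T (i+1)).2) = cellT T (i+1) := Prod.ext hrow.symm rfl
    have hshape := cellT_inShape hT hicc
    have heq : minc T (0, (cellT T (i+1)).2) = i + 1 := by
      rw [hpe]
      exact le_antisymm (minc_le hT hshape hcellmem) (hmin _ (minc_mem hT hshape))
    beta_reduce
    omega
  · intro j hj
    rw [Finset.mem_coe, Finset.mem_filter, Finset.mem_Icc] at hj
    obtain ⟨⟨hj1, hj2⟩, hjk⟩ := hj
    have hshape : InShape e t f (0, j) := Or.inl ⟨rfl, hj1, hj2⟩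
    have hmem := minc_mem hT hshape
    have hicc := hT.2.2.1 _ _ hmem
    rw [Finset.mem_Icc] at hicc
    have hm1 : minc T (0, j) - 1 + 1 = minc T (0, j) := by omega
    beta_reduce
    rw [hm1, cellT_eq hT hmem]

/-- down-steps among the first `k` match row-1 cells with minimum at most `k` -/
lemma countB (hT : IsSVT n e t f T) {k : ℕ} (hk : k ≤ n) :
    ((Finset.range k).filter fun i => stepT T (i+1) = MStep.down).card =
    ((Finset.Icc 1 e).filter fun j => minc T (1, j) ≤ k).card := by
  apply Finset.card_nbij' (fun i => (cellT T (i+1)).2) (fun j => minc T (1, j) - 1)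
  · intro i hi
    rw [Finset.mem_coe, Finset.mem_filter, Finset.mem_range] at hi
    obtain ⟨hik, hstep⟩ := hi
    obtain ⟨hrow, hmin⟩ := (stepT_down_iff (i+1)).mp hstep
    have hicc : i + 1 ∈ Finset.Icc 1 n := Finset.mem_Icc.mpr ⟨by omega, by omega⟩
    have hshape := cellT_inShape hT hicc
    have hcellmem := mem_cellT' hT hicc
    rcases hshape with ⟨h0, -, -⟩ | ⟨h0, h1, h2⟩
    · omega
    · simp only [Finset.mem_coe, Finset.mem_filter, Finset.mem_Icc]
      refine ⟨⟨h1, h2⟩, ?_⟩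
      have hpe : (1, (cellT T (i+1)).2) = cellT T (i+1) := Prod.ext h0.symm rfl
      rw [hpe]
      exact le_trans (minc_le hT (hpe ▸ (Or.inr ⟨rfl, h1, h2⟩)) hcellmem) (by omega)
  · intro j hj
    rw [Finset.mem_coe, Finset.mem_filter, Finset.mem_Icc] at hj
    obtain ⟨⟨hj1, hj2⟩, hjk⟩ := hj
    have hshape : InShape e t f (1, j) := Or.inr ⟨rfl, hj1, hj2⟩
    have hmem := minc_mem hT hshape
    have hicc := hT.2.2.1 _ _ hmem
    rw [Finset.mem_Icc] at hicc
    have hm1 : minc T (1, j) - 1 + 1 = minc T (1, j) := by omega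
    simp only [Finset.mem_coe, Finset.mem_filter, Finset.mem_range, hm1]
    refine ⟨by omega, (stepT_down_iff _).mpr ?_⟩
    rw [cellT_eq hT hmem]
    exact ⟨by simp, fun k' hk' => minc_le hT hshape hk'⟩
  · intro i hi
    rw [Finset.mem_coe, Finset.mem_filter, Finset.mem_range] at hi
    obtain ⟨hik, hstep⟩ := hi
    obtain ⟨hrow, hmin⟩ := (stepT_down_iff (i+1)).mp hstep
    have hicc : i + 1 ∈ Finset.Icc 1 n := Finset.mem_Icc.mpr ⟨by omega, by omega⟩
    have hcellmem := mem_cellT' hT hicc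
    have hshape := cellT_inShape hT hicc
    have hrow1 : (cellT T (i+1)).1 = 1 := by
      rcases hshape with ⟨h0, -, -⟩ | ⟨h0, -, -⟩ <;> omega
    have hpe : (1, (cellT T (i+1)).2) = cellT T (i+1) := Prod.ext hrow1.symm rfl
    have heq : minc T (1, (cellT T (i+1)).2) = i + 1 := by
      rw [hpe]
      exact le_antisymm (minc_le hT hshape hcellmem) (hmin _ (minc_mem hT hshape))
    beta_reduce
    omega
  · intro j hj
    rw [Finset.mem_coe, Finset.mem_filter, Finset.mem_Icc] at hj
    obtain ⟨⟨hj1, hj2⟩, hjk⟩ := hj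
    have hshape : InShape e t f (1, j) := Or.inr ⟨rfl, hj1, hj2⟩
    have hmem := minc_mem hT hshape
    have hicc := hT.2.2.1 _ _ hmem
    rw [Finset.mem_Icc] at hicc
    have hm1 : minc T (1, j) - 1 + 1 = minc T (1, j) := by omega
    beta_reduce
    rw [hm1, cellT_eq hT hmem]

end Reverse

section Reverse2

variable {n t c d e f : ℕ} {T : ℕ × ℕ → Finset ℕ}

lemma count_pathOf_take (x : MStep) {k : ℕ} (hk : k ≤ n) :
    ((pathOf T n).take k).count x =
      ((Finset.range k).filter fun i => stepT T (i+1) = x).card := by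
  rw [count_take_eq_card _ x k (by rw [length_pathOf]; omega)]
  congr 1
  apply Finset.filter_congr
  intro i hi
  rw [Finset.mem_range] at hi
  rw [getD_pathOf (by omega)]

lemma count_pathOf (x : MStep) :
    (pathOf T n).count x = ((Finset.range n).filter fun i => stepT T (i+1) = x).card := by
  have h : ((pathOf T n).take n) = pathOf T n := by
    apply List.take_of_length_le
    rw [length_pathOf]
  rw [← h, count_pathOf_take x le_rfl]

lemma minc_le_n (hT : IsSVT n e t f T) {p : ℕ × ℕ} (hp : InShape e t f p) : minc T p ≤ n := by
  have := hT.2.2.1 _ _ (minc_mem hT hp)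
  rw [Finset.mem_Icc] at this
  omega

lemma count_up_pathOf (hT : IsSVT n e t f T) : (pathOf T n).count MStep.up = e + t - f := by
  rw [count_pathOf, countA hT le_rfl]
  have h : (Finset.Icc (f+1) (e+t)).filter (fun j => minc T (0, j) ≤ n) =
      Finset.Icc (f+1) (e+t) := by
    apply Finset.filter_true_of_mem
    intro j hj
    rw [Finset.mem_Icc] at hj
    exact minc_le_n hT (Or.inl ⟨rfl, hj.1, hj.2⟩)
  rw [h, Nat.card_Icc]
  omega

lemma count_down_pathOf (hT : IsSVT n e t f T) : (pathOf T n).count MStep.down = e := by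
  rw [count_pathOf, countB hT le_rfl]
  have h : (Finset.Icc 1 e).filter (fun j => minc T (1, j) ≤ n) = Finset.Icc 1 e := by
    apply Finset.filter_true_of_mem
    intro j hj
    rw [Finset.mem_Icc] at hj
    exact minc_le_n hT (Or.inr ⟨rfl, hj.1, hj.2⟩)
  rw [h, Nat.card_Icc]
  omega

lemma fiber_cellT (hT : IsSVT n e t f T) (p : ℕ × ℕ) :
    (Finset.Icc 1 n).filter (fun k => cellT T k = p) = T p := by
  ext k
  rw [Finset.mem_filter]
  constructor
  · rintro ⟨hk, hc⟩
    exact hc ▸ mem_cellT' hT hk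
  · intro hk
    exact ⟨hT.2.2.1 _ _ hk, cellT_eq hT hk⟩

lemma card_row (hT : IsSVT n e t f T) (r : ℕ) (hr : r = 0 ∨ r = 1) :
    ((Finset.Icc 1 n).filter fun k => (cellT T k).1 = r).card = rowEntries (e + t) r T := by
  classical
  rw [rowEntries]
  rw [Finset.card_eq_sum_card_fiberwise
    (f := fun k => (cellT T k).2) (t := Finset.range (e + t + 1)) ?_]
  · apply Finset.sum_congr rfl
    intro j _
    rw [← fiber_cellT hT (r, j), Finset.filter_filter]
    congr 1
    apply Finset.filter_congr
    intro k _
    constructor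
    · rintro ⟨h1, h2⟩; exact Prod.ext h1 h2
    · intro h; rw [h]; exact ⟨rfl, rfl⟩
  · intro x hx
    rw [Finset.mem_coe, Finset.mem_filter] at hx
    have := cellT_inShape hT hx.1
    rw [Finset.mem_coe, Finset.mem_range]
    show (cellT T x).2 < e + t + 1
    rcases this with ⟨-, -, h2⟩ | ⟨-, -, h2⟩ <;> omega

lemma row0_split (hT : IsSVT n e t f T) :
    (Finset.Icc 1 n).filter (fun k => (cellT T k).1 = 0) =
      ((Finset.Icc 1 n).filter fun k => stepT T k = MStep.up) ∪
      ((Finset.Icc 1 n).filter fun k => stepT T k = MStep.hu) := by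
  ext k
  simp only [Finset.mem_filter, Finset.mem_union]
  constructor
  · rintro ⟨hk, hrow⟩
    by_cases hm : ∀ k' ∈ T (cellT T k), k ≤ k'
    · exact Or.inl ⟨hk, (stepT_up_iff k).mpr ⟨hrow, hm⟩⟩
    · exact Or.inr ⟨hk, (stepT_hu_iff k).mpr ⟨hrow, hm⟩⟩
  · rintro (⟨hk, hs⟩ | ⟨hk, hs⟩)
    · exact ⟨hk, ((stepT_up_iff k).mp hs).1⟩
    · exact ⟨hk, ((stepT_hu_iff k).mp hs).1⟩

lemma row1_split (hT : IsSVT n e t f T) :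
    (Finset.Icc 1 n).filter (fun k => (cellT T k).1 = 1) =
      ((Finset.Icc 1 n).filter fun k => stepT T k = MStep.down) ∪
      ((Finset.Icc 1 n).filter fun k => stepT T k = MStep.hd) := by
  ext k
  simp only [Finset.mem_filter, Finset.mem_union]
  constructor
  · rintro ⟨hk, hrow⟩
    have hrow' : ¬ (cellT T k).1 = 0 := by omega
    by_cases hm : ∀ k' ∈ T (cellT T k), k ≤ k'
    · exact Or.inl ⟨hk, (stepT_down_iff k).mpr ⟨hrow', hm⟩⟩
    · exact Or.inr ⟨hk, (stepT_hd_iff k).mpr ⟨hrow', hm⟩⟩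
  · rintro (⟨hk, hs⟩ | ⟨hk, hs⟩)
    · refine ⟨hk, ?_⟩
      have h0 := ((stepT_down_iff k).mp hs).1
      rcases cellT_inShape hT hk with ⟨h1, -, -⟩ | ⟨h1, -, -⟩ <;> omega
    · refine ⟨hk, ?_⟩
      have h0 := ((stepT_hd_iff k).mp hs).1
      rcases cellT_inShape hT hk with ⟨h1, -, -⟩ | ⟨h1, -, -⟩ <;> omega

lemma step_disj (x y : MStep) (hxy : x ≠ y) :
    Disjoint ((Finset.Icc 1 n).filter fun k => stepT T k = x)
      ((Finset.Icc 1 n).filter fun k => stepT T k = y) := by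
  rw [Finset.disjoint_left]
  intro k h1 h2
  rw [Finset.mem_filter] at h1 h2
  exact hxy (h1.2 ▸ h2.2 ▸ rfl)

lemma count_hu_pathOf (hT : IsSVT n e t f T) (hf : f ≤ e + t)
    (hr0 : rowEntries (e + t) 0 T = c + (e + t - f)) :
    (pathOf T n).count MStep.hu = c := by
  have hsplit := congrArg Finset.card (row0_split hT)
  rw [Finset.card_union_of_disjoint (step_disj MStep.up MStep.hu (by decide)),
    card_row hT 0 (Or.inl rfl), hr0] at hsplit
  have hup : ((Finset.Icc 1 n).filter fun k => stepT T k = MStep.up).card = e + t - f := by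
    rw [← card_shift n (fun k => stepT T k = MStep.up)]
    rw [← count_pathOf MStep.up (T := T), count_up_pathOf hT]
  rw [count_pathOf, card_shift n (fun k => stepT T k = MStep.hu)]
  omega

lemma count_hd_pathOf (hT : IsSVT n e t f T)
    (hr1 : rowEntries (e + t) 1 T = d + e) :
    (pathOf T n).count MStep.hd = d := by
  have hsplit := congrArg Finset.card (row1_split hT)
  rw [Finset.card_union_of_disjoint (step_disj MStep.down MStep.hd (by decide)),
    card_row hT 1 (Or.inr rfl), hr1] at hsplit
  have hdn : ((Finset.Icc 1 n).filter fun k => stepT T k = MStep.down).card = e := by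
    rw [← card_shift n (fun k => stepT T k = MStep.down)]
    rw [← count_pathOf MStep.down (T := T), count_down_pathOf hT]
  rw [count_pathOf, card_shift n (fun k => stepT T k = MStep.hd)]
  omega

lemma B_le_A (hT : IsSVT n e t f T) (hf : f ≤ e + t) (k : ℕ) :
    ((Finset.Icc 1 e).filter fun j => minc T (1, j) ≤ k).card ≤
      f + ((Finset.Icc (f+1) (e+t)).filter fun j => minc T (0, j) ≤ k).card := by
  have hsub : (Finset.Icc 1 e).filter (fun j => minc T (1, j) ≤ k) ⊆
      Finset.Icc 1 f ∪ (Finset.Icc (f+1) (e+t)).filter (fun j => minc T (0, j) ≤ k) := by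
    intro j hj
    rw [Finset.mem_filter, Finset.mem_Icc] at hj
    obtain ⟨⟨hj1, hj2⟩, hjk⟩ := hj
    rw [Finset.mem_union, Finset.mem_Icc, Finset.mem_filter, Finset.mem_Icc]
    by_cases hjf : j ≤ f
    · exact Or.inl ⟨hj1, hjf⟩
    · right
      have hsh0 : InShape e t f (0, j) := Or.inl ⟨rfl, by omega, by omega⟩
      have hsh1 : InShape e t f (1, j) := Or.inr ⟨rfl, hj1, hj2⟩
      have hlt : minc T (0, j) < minc T (1, j) :=
        hT.2.2.2.2 (0, j) (1, j) hsh0 hsh1 (by simp) (by simp) le_rfl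
          _ (minc_mem hT hsh0) _ (minc_mem hT hsh1)
      exact ⟨⟨by omega, by omega⟩, by omega⟩
  calc ((Finset.Icc 1 e).filter fun j => minc T (1, j) ≤ k).card
      ≤ (Finset.Icc 1 f ∪ (Finset.Icc (f+1) (e+t)).filter
          (fun j => minc T (0, j) ≤ k)).card := Finset.card_le_card hsub
    _ ≤ (Finset.Icc 1 f).card +
        ((Finset.Icc (f+1) (e+t)).filter (fun j => minc T (0, j) ≤ k)).card :=
          Finset.card_union_le _ _
    _ = f + _ := by rw [Nat.card_Icc]; omega

lemma isMotzkin_pathOf (hT : IsSVT n e t f T) (hf : f ≤ e + t) :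
    IsMotzkin (f : ℤ) (pathOf T n) := by
  intro p hp
  have hlenp : p.length ≤ n := by
    have := hp.length_le
    rwa [length_pathOf] at this
  have hpt : p = (pathOf T n).take p.length := List.prefix_iff_eq_take.mp hp
  rw [hpt, endHeight_take, count_pathOf_take _ hlenp, count_pathOf_take _ hlenp,
    countA hT hlenp, countB hT hlenp]
  have := B_le_A hT hf p.length
  omega

lemma endHeight_pathOf (hT : IsSVT n e t f T) (hf : f ≤ e + t) :
    endHeight (f : ℤ) (pathOf T n) = (t : ℤ) := by
  have h : pathOf T n = ((pathOf T n).take n) := by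
    refine (List.take_of_length_le ?_).symm
    rw [length_pathOf]
  rw [h, endHeight_take, count_pathOf_take _ le_rfl, count_pathOf_take _ le_rfl,
    countA hT le_rfl, countB hT le_rfl]
  have h0 : (Finset.Icc (f+1) (e+t)).filter (fun j => minc T (0, j) ≤ n) =
      Finset.Icc (f+1) (e+t) := by
    apply Finset.filter_true_of_mem
    intro j hj
    rw [Finset.mem_Icc] at hj
    exact minc_le_n hT (Or.inl ⟨rfl, hj.1, hj.2⟩)
  have h1 : (Finset.Icc 1 e).filter (fun j => minc T (1, j) ≤ n) = Finset.Icc 1 e := by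
    apply Finset.filter_true_of_mem
    intro j hj
    rw [Finset.mem_Icc] at hj
    exact minc_le_n hT (Or.inr ⟨rfl, hj.1, hj.2⟩)
  rw [h0, h1, Nat.card_Icc, Nat.card_Icc]
  omega

lemma prefix_concat_step {p : List MStep} {x : MStep} (hp : p ++ [x] <+: pathOf T n) :
    p.length + 1 ≤ n ∧ p = (pathOf T n).take p.length ∧ stepT T (p.length + 1) = x := by
  have hlen : p.length + 1 ≤ n := by
    have := hp.length_le
    rw [length_pathOf, List.length_append, List.length_singleton] at this
    omega
  have hp2 : p <+: pathOf T n := (List.prefix_append p [x]).trans hp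
  have hpt : p = (pathOf T n).take p.length := List.prefix_iff_eq_take.mp hp2
  refine ⟨hlen, hpt, ?_⟩
  have hpt2 : p ++ [x] = (pathOf T n).take (p.length + 1) := by
    have := List.prefix_iff_eq_take.mp hp
    rwa [List.length_append, List.length_singleton] at this
  have hconc : (pathOf T n).take (p.length + 1) =
      (pathOf T n).take p.length ++ [(pathOf T n).getD p.length MStep.up] := by
    have := take_eq_concat (l := pathOf T n) (k := p.length + 1) (by omega)
      (by rw [length_pathOf]; omega)
    simpa using this
  rw [hconc, ← hpt] at hpt2
  have := List.append_cancel_left hpt2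
  have hx : x = (pathOf T n).getD p.length MStep.up := by
    simpa using this
  rw [hx, getD_pathOf (by omega)]

end Reverse2

section Reverse3

variable {n t c d e f : ℕ} {T : ℕ × ℕ → Finset ℕ}

lemma mem_take_of_step {m k : ℕ} (x : MStep) (h1 : 1 ≤ m) (h2 : m ≤ k) (h3 : k ≤ n)
    (hs : stepT T m = x) : x ∈ (pathOf T n).take k := by
  rw [← List.count_pos_iff, count_pathOf_take x h3]
  apply Finset.card_pos.mpr
  refine ⟨m - 1, Finset.mem_filter.mpr ⟨Finset.mem_range.mpr (by omega), ?_⟩⟩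
  have hm : m - 1 + 1 = m := by omega
  rw [hm, hs]

lemma colour_hu_pathOf (hT : IsSVT n e t f T) (hf : f ≤ e + t) :
    ∀ p : List MStep, p ++ [MStep.hu] <+: pathOf T n →
      (MStep.up ∈ p ∧ endHeight (f : ℤ) p ≠ 0) := by
  intro p hp
  obtain ⟨hlen, hpt, hstep⟩ := prefix_concat_step hp
  set k := p.length + 1 with hkdef
  obtain ⟨hrow, hnm⟩ := (stepT_hu_iff k).mp hstep
  push_neg at hnm
  obtain ⟨k', hk'mem, hk'lt⟩ := hnm
  have hkicc : k ∈ Finset.Icc 1 n := Finset.mem_Icc.mpr ⟨by omega, by omega⟩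
  have hkT : k ∈ T (cellT T k) := mem_cellT' hT hkicc
  have hshape := cellT_inShape hT hkicc
  rcases hshape with ⟨-, hj1, hj2⟩ | ⟨h0, -, -⟩
  swap
  · omega
  set j := (cellT T k).2 with hjdef
  have hpe : (0, j) = cellT T k := Prod.ext hrow.symm rfl
  have hsh0 : InShape e t f (0, j) := Or.inl ⟨rfl, hj1, hj2⟩
  have hmle : minc T (0, j) ≤ k' := minc_le hT hsh0 (hpe ▸ hk'mem)
  have hmicc := hT.2.2.1 _ _ (minc_mem hT hsh0)
  rw [Finset.mem_Icc] at hmicc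
  have hstepm : stepT T (minc T (0, j)) = MStep.up := by
    apply (stepT_up_iff _).mpr
    rw [cellT_eq hT (minc_mem hT hsh0)]
    exact ⟨rfl, fun a ha => minc_le hT hsh0 ha⟩
  constructor
  · rw [hpt]
    exact mem_take_of_step MStep.up (by omega) (by omega) (by omega) hstepm
  · -- height is positive
    rw [hpt, endHeight_take, count_pathOf_take _ (by omega), count_pathOf_take _ (by omega),
      countA hT (by omega), countB hT (by omega)]
    have hA : j - f ≤ ((Finset.Icc (f+1) (e+t)).filter
        fun j'' => minc T (0, j'') ≤ p.length).card := by
      have hsub : Finset.Icc (f+1) j ⊆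
          (Finset.Icc (f+1) (e+t)).filter (fun j'' => minc T (0, j'') ≤ p.length) := by
        intro j'' hj''
        rw [Finset.mem_Icc] at hj''
        rw [Finset.mem_filter, Finset.mem_Icc]
        refine ⟨⟨hj''.1, by omega⟩, ?_⟩
        rcases Nat.lt_or_ge j'' j with hlt | hge
        · have hsh'' : InShape e t f (0, j'') := Or.inl ⟨rfl, hj''.1, by omega⟩
          have := hT.2.2.2.2 (0, j'') (0, j) hsh'' hsh0
            (by simp; omega) le_rfl (by simpa using hj''.2)
            _ (minc_mem hT hsh'') _ (hpe ▸ hkT)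
          omega
        · have hjj : j'' = j := by omega
          rw [hjj]
          omega
      have := Finset.card_le_card hsub
      rw [Nat.card_Icc] at this
      omega
    have hB : ((Finset.Icc 1 e).filter fun j' => minc T (1, j') ≤ p.length).card ≤ j - 1 := by
      have hsub : (Finset.Icc 1 e).filter (fun j' => minc T (1, j') ≤ p.length) ⊆
          Finset.Icc 1 (j - 1) := by
        intro j' hj'
        rw [Finset.mem_filter, Finset.mem_Icc] at hj'
        obtain ⟨⟨ha, hb⟩, hc⟩ := hj'
        rw [Finset.mem_Icc]
        refine ⟨ha, ?_⟩
        by_contra hcon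
        have hge : j ≤ j' := by omega
        have hsh1 : InShape e t f (1, j') := Or.inr ⟨rfl, ha, hb⟩
        have := hT.2.2.2.2 (0, j) (1, j') hsh0 hsh1 (by simp) (by simp) hge
          _ (hpe ▸ hkT) _ (minc_mem hT hsh1)
        omega
      have := Finset.card_le_card hsub
      rw [Nat.card_Icc] at this
      omega
    omega

lemma colour_hd_pathOf (hT : IsSVT n e t f T) :
    ∀ p : List MStep, p ++ [MStep.hd] <+: pathOf T n → MStep.down ∈ p := by
  intro p hp
  obtain ⟨hlen, hpt, hstep⟩ := prefix_concat_step hp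
  set k := p.length + 1 with hkdef
  obtain ⟨hrow, hnm⟩ := (stepT_hd_iff k).mp hstep
  push_neg at hnm
  obtain ⟨k', hk'mem, hk'lt⟩ := hnm
  have hkicc : k ∈ Finset.Icc 1 n := Finset.mem_Icc.mpr ⟨by omega, by omega⟩
  have hkT : k ∈ T (cellT T k) := mem_cellT' hT hkicc
  have hshape := cellT_inShape hT hkicc
  rcases hshape with ⟨h0, -, -⟩ | ⟨h0, hj1, hj2⟩
  · omega
  set j := (cellT T k).2 with hjdef
  have hpe : (1, j) = cellT T k := Prod.ext h0.symm rfl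
  have hsh1 : InShape e t f (1, j) := Or.inr ⟨rfl, hj1, hj2⟩
  have hmle : minc T (1, j) ≤ k' := minc_le hT hsh1 (hpe ▸ hk'mem)
  have hmicc := hT.2.2.1 _ _ (minc_mem hT hsh1)
  rw [Finset.mem_Icc] at hmicc
  have hstepm : stepT T (minc T (1, j)) = MStep.down := by
    apply (stepT_down_iff _).mpr
    rw [cellT_eq hT (minc_mem hT hsh1)]
    exact ⟨by simp, fun a ha => minc_le hT hsh1 ha⟩
  rw [hpt]
  exact mem_take_of_step MStep.down (by omega) (by omega) (by omega) hstepm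

lemma cellOf_pathOf (hT : IsSVT n e t f T) (hf : f ≤ e + t) {k : ℕ}
    (hk : k ∈ Finset.Icc 1 n) : cellOf f (pathOf T n) k = cellT T k := by
  have hkn := Finset.mem_Icc.mp hk
  have hkT : k ∈ T (cellT T k) := mem_cellT' hT hk
  have hgd : (pathOf T n).getD (k-1) MStep.up = stepT T k := by
    have h1 : k - 1 + 1 = k := by omega
    rw [getD_pathOf (by omega), h1]
  rcases cellT_inShape hT hk with ⟨h0, hj1, hj2⟩ | ⟨h0, hj1, hj2⟩
  · -- row 0
    set j := (cellT T k).2 with hjdef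
    have hpe : (0, j) = cellT T k := Prod.ext h0.symm rfl
    have hsh0 : InShape e t f (0, j) := Or.inl ⟨rfl, hj1, hj2⟩
    have hsteps : (pathOf T n).getD (k-1) MStep.up = MStep.up ∨
        (pathOf T n).getD (k-1) MStep.up = MStep.hu := by
      rw [hgd]
      by_cases hm : ∀ k' ∈ T (cellT T k), k ≤ k'
      · exact Or.inl ((stepT_up_iff k).mpr ⟨h0, hm⟩)
      · exact Or.inr ((stepT_hu_iff k).mpr ⟨h0, hm⟩)
    rw [cellOf_row0 f hsteps]
    have hcnt : ((pathOf T n).take k).count MStep.up = j - f := by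
      rw [count_pathOf_take _ (by omega), countA hT (by omega)]
      have hset : (Finset.Icc (f+1) (e+t)).filter (fun j'' => minc T (0, j'') ≤ k) =
          Finset.Icc (f+1) j := by
        ext j''
        rw [Finset.mem_filter, Finset.mem_Icc, Finset.mem_Icc]
        constructor
        · rintro ⟨⟨ha, hb⟩, hc⟩
          refine ⟨ha, ?_⟩
          by_contra hcon
          have hsh'' : InShape e t f (0, j'') := Or.inl ⟨rfl, ha, hb⟩
          have := hT.2.2.2.2 (0, j) (0, j'') hsh0 hsh'' (by simp; omega) le_rfl
            (by simp; omega) _ (hpe ▸ hkT) _ (minc_mem hT hsh'')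
          omega
        · rintro ⟨ha, hb⟩
          refine ⟨⟨ha, by omega⟩, ?_⟩
          rcases Nat.lt_or_ge j'' j with hlt | hge
          · have hsh'' : InShape e t f (0, j'') := Or.inl ⟨rfl, ha, by omega⟩
            have := hT.2.2.2.2 (0, j'') (0, j) hsh'' hsh0 (by simp; omega) le_rfl
              (by simpa using hb) _ (minc_mem hT hsh'') _ (hpe ▸ hkT)
            omega
          · have hjj : j'' = j := by omega
            rw [hjj]
            exact minc_le hT hsh0 (hpe ▸ hkT)
      rw [hset, Nat.card_Icc]
      omega
    rw [hcnt, ← hpe]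
    have : f + (j - f) = j := by omega
    rw [this]
  · -- row 1
    set j := (cellT T k).2 with hjdef
    have hpe : (1, j) = cellT T k := Prod.ext h0.symm rfl
    have hsh1 : InShape e t f (1, j) := Or.inr ⟨rfl, hj1, hj2⟩
    have hrow' : ¬ (cellT T k).1 = 0 := by omega
    have hsteps : (pathOf T n).getD (k-1) MStep.up = MStep.down ∨
        (pathOf T n).getD (k-1) MStep.up = MStep.hd := by
      rw [hgd]
      by_cases hm : ∀ k' ∈ T (cellT T k), k ≤ k'
      · exact Or.inl ((stepT_down_iff k).mpr ⟨hrow', hm⟩)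
      · exact Or.inr ((stepT_hd_iff k).mpr ⟨hrow', hm⟩)
    rw [cellOf_row1 f hsteps]
    have hcnt : ((pathOf T n).take k).count MStep.down = j := by
      rw [count_pathOf_take _ (by omega), countB hT (by omega)]
      have hset : (Finset.Icc 1 e).filter (fun j'' => minc T (1, j'') ≤ k) =
          Finset.Icc 1 j := by
        ext j''
        rw [Finset.mem_filter, Finset.mem_Icc, Finset.mem_Icc]
        constructor
        · rintro ⟨⟨ha, hb⟩, hc⟩
          refine ⟨ha, ?_⟩
          by_contra hcon
          have hsh'' : InShape e t f (1, j'') := Or.inr ⟨rfl, ha, hb⟩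
          have := hT.2.2.2.2 (1, j) (1, j'') hsh1 hsh'' (by simp; omega) le_rfl
            (by simp; omega) _ (hpe ▸ hkT) _ (minc_mem hT hsh'')
          omega
        · rintro ⟨ha, hb⟩
          refine ⟨⟨ha, by omega⟩, ?_⟩
          rcases Nat.lt_or_ge j'' j with hlt | hge
          · have hsh'' : InShape e t f (1, j'') := Or.inr ⟨rfl, ha, by omega⟩
            have := hT.2.2.2.2 (1, j'') (1, j) hsh'' hsh1 (by simp; omega) le_rfl
              (by simpa using hb) _ (minc_mem hT hsh'') _ (hpe ▸ hkT)
            omega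
          · have hjj : j'' = j := by omega
            rw [hjj]
            exact minc_le hT hsh1 (hpe ▸ hkT)
      rw [hset, Nat.card_Icc]
      omega
    rw [hcnt, ← hpe]

lemma Gtab_pathOf (hT : IsSVT n e t f T) (hf : f ≤ e + t) :
    Gtab n f (pathOf T n) = T := by
  funext p
  ext k
  rw [Gtab, Finset.mem_filter]
  constructor
  · rintro ⟨hk, hc⟩
    rw [cellOf_pathOf hT hf hk] at hc
    exact hc ▸ mem_cellT' hT hk
  · intro hk
    have hicc := hT.2.2.1 _ _ hk
    exact ⟨hicc, by rw [cellOf_pathOf hT hf hicc]; exact cellT_eq hT hk⟩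

end Reverse3

/-- Set-valued standard tableaux of shape `(e+t,e)/(f,0)` with `c+e-f+t` entries in the
first row and `d+e` entries in the second row are in bijection with two-coloured
Motzkin paths from `(0,f)` to `(n,t)` with `c` umber horizontal steps, `d` denim
horizontal steps, `e-f+t` up-steps and `e` down-steps (hence `n = c+d+2e-f+t` steps in
total), where an umber horizontal step occurs neither before the first up-step nor at
height `0`, and a denim horizontal step does not occur before the first down-step. -/
theorem svt_equiv_motzkin (n t c d e f : ℕ) (hf : f ≤ e + t) (hn : c + d + 2 * e + t = n + f) :
    Nonempty
      ({T : ℕ × ℕ → Finset ℕ // IsSVT n e t f T ∧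
          rowEntries (e + t) 0 T = c + (e + t - f) ∧ rowEntries (e + t) 1 T = d + e} ≃
       {l : List MStep // IsMotzkin (f : ℤ) l ∧ endHeight (f : ℤ) l = (t : ℤ) ∧
          l.length = n ∧
          l.count MStep.hu = c ∧ l.count MStep.hd = d ∧
          l.count MStep.up = e + t - f ∧ l.count MStep.down = e ∧
          (∀ p : List MStep, p ++ [MStep.hu] <+: l →
            (MStep.up ∈ p ∧ endHeight (f : ℤ) p ≠ 0)) ∧
          (∀ p : List MStep, p ++ [MStep.hd] <+: l → MStep.down ∈ p)}) := by
  classical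
  set Path := {l : List MStep // IsMotzkin (f : ℤ) l ∧ endHeight (f : ℤ) l = (t : ℤ) ∧
          l.length = n ∧
          l.count MStep.hu = c ∧ l.count MStep.hd = d ∧
          l.count MStep.up = e + t - f ∧ l.count MStep.down = e ∧
          (∀ p : List MStep, p ++ [MStep.hu] <+: l →
            (MStep.up ∈ p ∧ endHeight (f : ℤ) p ≠ 0)) ∧
          (∀ p : List MStep, p ++ [MStep.hd] <+: l → MStep.down ∈ p)} with hPath
  set Tab := {T : ℕ × ℕ → Finset ℕ // IsSVT n e t f T ∧
          rowEntries (e + t) 0 T = c + (e + t - f) ∧ rowEntries (e + t) 1 T = d + e} with hTab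
  have hmap : ∀ l : Path, IsSVT n e t f (Gtab n f l.1) ∧
      rowEntries (e + t) 0 (Gtab n f l.1) = c + (e + t - f) ∧
      rowEntries (e + t) 1 (Gtab n f l.1) = d + e := by
    rintro ⟨l, hM, hend, hlen, hchu, hchd, hcup, hcdn, hHu, hHd⟩
    refine ⟨isSVT_Gtab hf hM hlen hcup hcdn hHu hHd, ?_, ?_⟩
    · rw [rowEntries_Gtab0 hf hcup hcdn hHu hHd hlen, hcup, hchu]
      omega
    · rw [rowEntries_Gtab1 hf hcup hcdn hHu hHd hlen, hcdn, hchd]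
      omega
  set Φ : Path → Tab := fun l => ⟨Gtab n f l.1, hmap l⟩ with hΦ
  have hbij : Function.Bijective Φ := by
    constructor
    · rintro ⟨l1, hl1⟩ ⟨l2, hl2⟩ h
      have hG : Gtab n f l1 = Gtab n f l2 := congrArg Subtype.val h
      exact Subtype.ext (Gtab_inj hl1.2.2.2.2.2.2.2.1 hl1.2.2.2.2.2.2.2.2
        hl2.2.2.2.2.2.2.2.1 hl2.2.2.2.2.2.2.2.2 hl1.2.2.1 hl2.2.2.1 hG)
    · rintro ⟨T, hT, hr0, hr1⟩
      refine ⟨⟨pathOf T n, isMotzkin_pathOf hT hf, endHeight_pathOf hT hf, length_pathOf,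
        count_hu_pathOf hT hf hr0, count_hd_pathOf hT hr1, count_up_pathOf hT,
        count_down_pathOf hT, colour_hu_pathOf hT hf, colour_hd_pathOf hT⟩, ?_⟩
      exact Subtype.ext (Gtab_pathOf hT hf)
  exact ⟨(Equiv.ofBijective Φ hbij).symm⟩
end

section
/- Let n and m be positive integers and t a non-negative integer. The number of set-valued standard tableaux of shape (e+t,e), for some non-negative integer e, with m entries in the first row and n entries in total, equals [m=n]·C(n-1,t-1) + [m<n]·(t/(n-1))·C(n,m)·C(n-1,m-t-1) + (1/(n-1))·C(n-1,m)·C(n-1,m-t-1), where [S] is 1 if S holds and 0 otherwise. -/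
/-- Binomial coefficient `C(a,b)` for integers `a`, `b`, with the convention that it
vanishes when `b < 0` or `b > a`. -/
def zchoose (a b : ℤ) : ℤ :=
  if 0 ≤ b ∧ b ≤ a then (a.toNat).choose b.toNat else 0


namespace SVTAlg

lemma zchoose_natCast (a b : ℕ) : zchoose (a : ℤ) (b : ℤ) = (a.choose b : ℤ) := by
  unfold zchoose
  by_cases h : (b : ℤ) ≤ (a : ℤ)
  · rw [if_pos ⟨Int.ofNat_nonneg b, h⟩]; simp
  · rw [if_neg (by omega)]
    have : a < b := by omega
    rw [Nat.choose_eq_zero_of_lt this]; simp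

lemma zchoose_neg {a b : ℤ} (h : b < 0) : zchoose a b = 0 := if_neg (by omega)

lemma zchoose_gt {a b : ℤ} (h : a < b) : zchoose a b = 0 := if_neg (by omega)

lemma zchoose_zero {a : ℤ} (h : 0 ≤ a) : zchoose a 0 = 1 := by
  unfold zchoose; rw [if_pos ⟨le_refl 0, h⟩]; simp

lemma zchoose_self {a : ℤ} (h : 0 ≤ a) : zchoose a a = 1 := by
  unfold zchoose; rw [if_pos ⟨h, le_refl a⟩]; simp [Nat.choose_self]

lemma zchoose_symm {a b : ℤ} : zchoose a (a - b) = zchoose a b := by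
  unfold zchoose
  by_cases h : 0 ≤ b ∧ b ≤ a
  · rw [if_pos (by omega), if_pos h]
    have h1 : (a - b).toNat = a.toNat - b.toNat := by omega
    rw [h1, Nat.choose_symm (by omega)]
  · rw [if_neg (by omega), if_neg h]

lemma zchoose_pascal {a b : ℤ} (ha : 1 ≤ a) :
    zchoose a b = zchoose (a - 1) b + zchoose (a - 1) (b - 1) := by
  obtain ⟨A, rfl⟩ : ∃ A : ℕ, a = (A : ℤ) + 1 := ⟨(a - 1).toNat, by omega⟩
  rcases lt_or_ge b 0 with hb | hb
  · rw [zchoose_neg hb, zchoose_neg hb, zchoose_neg (by omega)]; norm_num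
  rcases eq_or_lt_of_le hb with hb0 | hb1
  · rw [← hb0]
    rw [show ((A : ℤ) + 1 - 1) = (A : ℤ) by ring]
    rw [zchoose_zero (by positivity), zchoose_zero (Int.ofNat_nonneg A),
      zchoose_neg (by omega)]
    norm_num
  · obtain ⟨B, rfl⟩ : ∃ B : ℕ, b = (B : ℤ) + 1 := ⟨(b - 1).toNat, by omega⟩
    rw [show ((A : ℤ) + 1 - 1) = (A : ℤ) by ring,
      show ((B : ℤ) + 1 - 1) = (B : ℤ) by ring,
      show ((A : ℤ) + 1) = ((A + 1 : ℕ) : ℤ) by push_cast; ring,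
      show ((B : ℤ) + 1) = ((B + 1 : ℕ) : ℤ) by push_cast; ring,
      zchoose_natCast, zchoose_natCast, zchoose_natCast]
    norm_cast
    rw [Nat.choose_succ_succ, Nat.add_comm]

lemma zchoose_absorb {a b : ℤ} (ha : 0 ≤ a) :
    b * zchoose a b = a * zchoose (a - 1) (b - 1) := by
  rcases lt_or_ge b 1 with hb | hb
  · rcases lt_or_ge b 0 with hb0 | hb0
    · rw [zchoose_neg hb0, zchoose_neg (by omega)]; ring
    · have hb' : b = 0 := by omega
      subst hb'
      have h0 : zchoose (a - 1) (0 - 1) = 0 := zchoose_neg (by omega)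
      rw [h0]; ring
  · rcases eq_or_lt_of_le ha with ha0 | ha1
    · rw [zchoose_gt (by omega), zchoose_gt (by omega)]; ring
    · obtain ⟨A, rfl⟩ : ∃ A : ℕ, a = (A : ℤ) + 1 := ⟨(a - 1).toNat, by omega⟩
      obtain ⟨B, rfl⟩ : ∃ B : ℕ, b = (B : ℤ) + 1 := ⟨(b - 1).toNat, by omega⟩
      rw [show ((A : ℤ) + 1 - 1) = (A : ℤ) by ring,
        show ((B : ℤ) + 1 - 1) = (B : ℤ) by ring,
        show ((A : ℤ) + 1) = ((A + 1 : ℕ) : ℤ) by push_cast; ring,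
        show ((B : ℤ) + 1) = ((B + 1 : ℕ) : ℤ) by push_cast; ring,
        zchoose_natCast, zchoose_natCast]
      norm_cast
      rw [mul_comm]
      exact (Nat.add_one_mul_choose_eq A B).symm

lemma zchoose_absorb2 {a b : ℤ} (ha : 0 ≤ a) :
    (a - b) * zchoose a b = a * zchoose (a - 1) b := by
  rcases eq_or_lt_of_le ha with ha0 | ha1
  · rcases lt_trichotomy b 0 with h | h | h
    · rw [zchoose_neg h, zchoose_neg h]; ring
    · subst h; rw [← ha0]; simp
    · rw [zchoose_gt (by omega), zchoose_gt (by omega)]; ring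
  · have hp : zchoose a b = zchoose (a - 1) b + zchoose (a - 1) (b - 1) :=
      zchoose_pascal (by omega)
    have hab : b * zchoose a b = a * zchoose (a - 1) (b - 1) := zchoose_absorb ha
    linear_combination a * hp - hab


def Rz (n m t : ℤ) : ℚ :=
  (if m = n then 1 else 0) * (zchoose (n - 1) (t - 1) : ℚ)
    + (if m < n then 1 else 0) * ((t : ℚ) / ((n : ℚ) - 1))
        * (zchoose n m : ℚ) * (zchoose (n - 1) (m - t - 1) : ℚ)
    + (1 / ((n : ℚ) - 1)) * (zchoose (n - 1) m : ℚ) * (zchoose (n - 1) (m - t - 1) : ℚ)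

lemma Rz_eq_zero {n m : ℤ} (h : n < m) (t : ℤ) : Rz n m t = 0 := by
  unfold Rz
  rw [if_neg (by omega), if_neg (by omega), zchoose_gt (by omega : n - 1 < m)]
  push_cast; ring

lemma Rz_self {n : ℤ} (h : 1 ≤ n) (t : ℤ) : Rz n n t = (zchoose (n - 1) (t - 1) : ℚ) := by
  unfold Rz
  rw [if_pos rfl, if_neg (lt_irrefl n), zchoose_gt (by omega : n - 1 < n)]
  push_cast; ring

lemma zchoose_zero_left (s : ℤ) : zchoose 0 s = if s = 0 then 1 else 0 := by
  rcases lt_trichotomy s 0 with h | h | h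
  · rw [zchoose_neg h, if_neg (by omega)]
  · subst h; rw [zchoose_zero le_rfl, if_pos rfl]
  · rw [zchoose_gt h, if_neg (by omega)]

lemma Rz_one (m t : ℤ) : Rz 1 m t = (if m = 1 then 1 else 0) * (zchoose 0 (t - 1) : ℚ) := by
  unfold Rz
  norm_num

set_option maxHeartbeats 3000000 in
lemma Rz_rec {u m t : ℤ} (hu : 2 ≤ u) (hm : 1 ≤ m) (ht : 0 ≤ t) :
    Rz (u + 1) m t = (if 1 ≤ t then Rz u (m - 1) t + Rz u (m - 1) (t - 1) else 0)
      + (if m = u then 0 else Rz u m t) + Rz u m (t + 1) := by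
  have hu0 : ((u : ℤ) : ℚ) ≠ 0 := by
    have : (0 : ℚ) < ((u : ℤ) : ℚ) := by exact_mod_cast (by omega : (0:ℤ) < u)
    exact ne_of_gt this
  have hu1 : ((u : ℤ) : ℚ) - 1 ≠ 0 := by
    have : (1 : ℚ) < ((u : ℤ) : ℚ) := by exact_mod_cast (by omega : (1:ℤ) < u)
    exact sub_ne_zero.mpr (ne_of_gt this)
  have hup1 : ((u : ℤ) : ℚ) + 1 ≠ 0 := by
    have h0 : (0 : ℚ) < ((u : ℤ) : ℚ) := by exact_mod_cast (by omega : (0:ℤ) < u)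
    intro hc; linarith
  rcases lt_trichotomy m u with hmu | rfl | hmu
  · -- generic case m < u
    have hum : ((u : ℤ) : ℚ) + 1 - ((m : ℤ) : ℚ) ≠ 0 := by
      have : ((m : ℤ) : ℚ) < ((u : ℤ) : ℚ) := by exact_mod_cast hmu
      intro hc; linarith [this]
    have e1 : (zchoose (u + 1) m : ℚ)
        = (((u : ℤ) : ℚ) + 1) * (zchoose u m : ℚ) / (((u : ℤ) : ℚ) + 1 - m) := by
      rw [eq_div_iff hum]
      have h := zchoose_absorb2 (a := u + 1) (b := m) (by omega)
      rw [show (u + 1 - 1 : ℤ) = u from by ring] at h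
      have hq : (((u : ℤ) : ℚ) + 1 - m) * (zchoose (u + 1) m : ℚ)
          = (((u : ℤ) : ℚ) + 1) * (zchoose u m : ℚ) := by exact_mod_cast h
      linear_combination hq
    have e2 : (zchoose u (m - 1) : ℚ)
        = ((m : ℤ) : ℚ) * (zchoose (u + 1) m : ℚ) / (((u : ℤ) : ℚ) + 1) := by
      rw [eq_div_iff hup1]
      have h := zchoose_absorb (a := u + 1) (b := m) (by omega)
      rw [show (u + 1 - 1 : ℤ) = u from by ring] at h
      have hq : ((m : ℤ) : ℚ) * (zchoose (u + 1) m : ℚ)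
          = (((u : ℤ) : ℚ) + 1) * (zchoose u (m - 1) : ℚ) := by exact_mod_cast h
      linear_combination -hq
    have e3 : (zchoose (u - 1) (m - 1) : ℚ)
        = ((m : ℤ) : ℚ) * (zchoose u m : ℚ) / ((u : ℤ) : ℚ) := by
      rw [eq_div_iff hu0]
      have h := zchoose_absorb (a := u) (b := m) (by omega)
      have hq : ((m : ℤ) : ℚ) * (zchoose u m : ℚ)
          = ((u : ℤ) : ℚ) * (zchoose (u - 1) (m - 1) : ℚ) := by exact_mod_cast h
      linear_combination -hq
    have e4 : (zchoose (u - 1) m : ℚ)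
        = (((u : ℤ) : ℚ) - m) * (zchoose u m : ℚ) / ((u : ℤ) : ℚ) := by
      rw [eq_div_iff hu0]
      have h := zchoose_absorb2 (a := u) (b := m) (by omega)
      have hq : (((u : ℤ) : ℚ) - m) * (zchoose u m : ℚ)
          = ((u : ℤ) : ℚ) * (zchoose (u - 1) m : ℚ) := by exact_mod_cast h
      linear_combination -hq
    have e5 : (zchoose (u - 1) (m - t - 1) : ℚ)
        = (((u : ℤ) : ℚ) - m + t + 1) * (zchoose u (m - t - 1) : ℚ) / ((u : ℤ) : ℚ) := by
      rw [eq_div_iff hu0]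
      have h := zchoose_absorb2 (a := u) (b := m - t - 1) (by omega)
      rw [show (u - (m - t - 1) : ℤ) = u - m + t + 1 from by ring] at h
      have hq : (((u : ℤ) : ℚ) - m + t + 1) * (zchoose u (m - t - 1) : ℚ)
          = ((u : ℤ) : ℚ) * (zchoose (u - 1) (m - t - 1) : ℚ) := by exact_mod_cast h
      linear_combination -hq
    have e6 : (zchoose (u - 1) (m - t - 2) : ℚ)
        = (((m : ℤ) : ℚ) - t - 1) * (zchoose u (m - t - 1) : ℚ) / ((u : ℤ) : ℚ) := by
      rw [eq_div_iff hu0]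
      have h := zchoose_absorb (a := u) (b := m - t - 1) (by omega)
      rw [show (m - t - 1 - 1 : ℤ) = m - t - 2 from by ring] at h
      have hq : (((m : ℤ) : ℚ) - t - 1) * (zchoose u (m - t - 1) : ℚ)
          = ((u : ℤ) : ℚ) * (zchoose (u - 1) (m - t - 2) : ℚ) := by exact_mod_cast h
      linear_combination -hq
    unfold Rz
    rw [if_neg (by omega : ¬ m = u + 1), if_pos (by omega : m < u + 1),
      if_neg (by omega : ¬ m - 1 = u), if_pos (by omega : m - 1 < u)]
    rw [if_neg (by omega : ¬ m = u)]
    rw [if_neg (by omega : ¬ m = u)]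
    rw [if_pos hmu]
    rw [show (u + 1 - 1 : ℤ) = u from by ring,
      show (m - 1 - t - 1 : ℤ) = m - t - 2 from by ring,
      show (m - 1 - (t - 1) - 1 : ℤ) = m - t - 1 from by ring,
      show (m - (t + 1) - 1 : ℤ) = m - t - 2 from by ring]
    rw [e2, e1, e3, e4, e5, e6]
    by_cases htt : 1 ≤ t
    · rw [if_pos htt]
      push_cast
      field_simp
      all_goals (ring_nf; field_simp)
    · rw [if_neg htt]
      have ht0 : t = 0 := by omega
      subst ht0
      push_cast
      field_simp
      all_goals (ring_nf; field_simp)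
  · -- case m = u
    have f2 : zchoose m m = 1 := zchoose_self (by omega)
    have f3 : zchoose (m - 1) (m - 1) = 1 := zchoose_self (by omega)
    have f1 : zchoose (m + 1) m = m + 1 := by
      have h := zchoose_absorb2 (a := m + 1) (b := m) (by omega)
      rw [show (m + 1 - 1 : ℤ) = m from by ring, f2] at h
      linear_combination h
    have f5 : zchoose m (m - 1) = m := by
      have h := zchoose_absorb2 (a := m) (b := m - 1) (by omega)
      rw [f3] at h
      linear_combination h
    have f4 : zchoose (m - 1) m = 0 := zchoose_gt (by omega)
    have g1 : (zchoose (m - 1) (m - t - 2) : ℚ)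
        = (((m : ℤ) : ℚ) - t - 1) * (zchoose m (m - t - 1) : ℚ) / ((m : ℤ) : ℚ) := by
      rw [eq_div_iff hu0]
      have h := zchoose_absorb (a := m) (b := m - t - 1) (by omega)
      rw [show (m - t - 1 - 1 : ℤ) = m - t - 2 from by ring] at h
      have hq : (((m : ℤ) : ℚ) - t - 1) * (zchoose m (m - t - 1) : ℚ)
          = ((m : ℤ) : ℚ) * (zchoose (m - 1) (m - t - 2) : ℚ) := by exact_mod_cast h
      linear_combination -hq
    have g2 : (zchoose (m - 1) (m - t - 1) : ℚ)
        = (((t : ℤ) : ℚ) + 1) * (zchoose m (m - t - 1) : ℚ) / ((m : ℤ) : ℚ) := by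
      rw [eq_div_iff hu0]
      have h := zchoose_absorb2 (a := m) (b := m - t - 1) (by omega)
      rw [show (m - (m - t - 1) : ℤ) = t + 1 from by ring] at h
      have hq : (((t : ℤ) : ℚ) + 1) * (zchoose m (m - t - 1) : ℚ)
          = ((m : ℤ) : ℚ) * (zchoose (m - 1) (m - t - 1) : ℚ) := by exact_mod_cast h
      linear_combination -hq
    have g3 : zchoose (m - 1) t = zchoose (m - 1) (m - t - 1) := by
      have h := zchoose_symm (a := m - 1) (b := t)
      rw [show (m - 1 - t : ℤ) = m - t - 1 from by ring] at h
      exact h.symm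
    unfold Rz
    rw [if_neg (by omega : ¬ m = m + 1), if_pos (by omega : m < m + 1),
      if_neg (by omega : ¬ m - 1 = m), if_pos (by omega : m - 1 < m)]
    rw [if_pos (rfl : m = m)]
    rw [if_pos (rfl : m = m), if_neg (lt_irrefl m)]
    rw [show (m + 1 - 1 : ℤ) = m from by ring,
      show (m - 1 - t - 1 : ℤ) = m - t - 2 from by ring,
      show (m - 1 - (t - 1) - 1 : ℤ) = m - t - 1 from by ring,
      show (m - (t + 1) - 1 : ℤ) = m - t - 2 from by ring,
      show (t + 1 - 1 : ℤ) = t from by ring]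
    rw [f1, f2, f3, f4, f5, g3, g2, g1]
    by_cases htt : 1 ≤ t
    · rw [if_pos htt]
      push_cast
      field_simp
      all_goals (ring_nf; field_simp; ring)
    · rw [if_neg htt]
      have ht0 : t = 0 := by omega
      subst ht0
      push_cast
      field_simp
      all_goals (ring_nf; field_simp; ring)
  · -- case u < m
    rcases eq_or_lt_of_le (by omega : u + 1 ≤ m) with hm1 | hm1
    · -- m = u + 1
      subst hm1
      rw [Rz_self (show (1:ℤ) ≤ u + 1 by omega)]
      rw [show (u + 1 - 1 : ℤ) = u from by ring]
      rw [Rz_self (show (1:ℤ) ≤ u by omega), Rz_self (show (1:ℤ) ≤ u by omega),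
        if_neg (by omega : ¬ (u + 1 : ℤ) = u),
        Rz_eq_zero (n := u) (m := u + 1) (by omega) t,
        Rz_eq_zero (n := u) (m := u + 1) (by omega) (t + 1)]
      by_cases htt : 1 ≤ t
      · rw [if_pos htt]
        have hp := zchoose_pascal (a := u) (b := t - 1) (by omega)
        have hq : (zchoose u (t - 1) : ℚ)
            = (zchoose (u - 1) (t - 1) : ℚ) + (zchoose (u - 1) (t - 1 - 1) : ℚ) := by
          exact_mod_cast hp
        rw [hq]; ring
      · rw [if_neg htt]
        have ht0 : t = 0 := by omega
        subst ht0
        rw [zchoose_neg (by omega : (0 : ℤ) - 1 < 0)]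
        norm_num
    · -- m > u + 1
      rw [Rz_eq_zero (n := u + 1) (m := m) hm1 t,
        Rz_eq_zero (n := u) (m := m - 1) (by omega) t,
        Rz_eq_zero (n := u) (m := m - 1) (by omega) (t - 1),
        Rz_eq_zero (n := u) (m := m) (by omega) t,
        Rz_eq_zero (n := u) (m := m) (by omega) (t + 1),
        if_neg (by omega : ¬ m = u)]
      simp

lemma Rz_rec_one {m t : ℤ} (hm : 1 ≤ m) (ht : 0 ≤ t) :
    Rz 2 m t = (if 1 ≤ t then Rz 1 (m - 1) t + Rz 1 (m - 1) (t - 1) else 0)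
      + (if m = 1 then 0 else Rz 1 m t) + Rz 1 m (t + 1) := by
  rcases eq_or_lt_of_le hm with h1 | h1
  · -- m = 1
    have hm1 : m = 1 := h1.symm
    subst hm1
    rw [if_pos (rfl : (1:ℤ) = 1), Rz_one, Rz_one, Rz_one,
      if_neg (by omega : ¬ (1:ℤ) - 1 = 1), if_pos (rfl : (1:ℤ) = 1)]
    rw [show (t + 1 - 1 : ℤ) = t from by ring]
    unfold Rz
    rw [if_neg (by omega : ¬ (1:ℤ) = 2), if_pos (by omega : (1:ℤ) < 2)]
    rw [show ((1:ℤ) - t - 1) = -t from by ring, show ((2:ℤ) - 1) = 1 from by ring]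
    have hz1 : zchoose 2 1 = 2 := by decide
    have hz2 : zchoose 1 1 = 1 := by decide
    rw [hz1, hz2]
    by_cases htt : 1 ≤ t
    · rw [if_pos htt, zchoose_neg (by omega : -t < 0), zchoose_zero_left t, if_neg (by omega : ¬ t = 0)]
      push_cast
      norm_num
    · have ht0 : t = 0 := by omega
      subst ht0
      rw [if_neg htt, show (-(0:ℤ)) = 0 from by ring, zchoose_zero (by omega : (0:ℤ) ≤ 1),
        zchoose_zero_left 0, if_pos rfl]
      push_cast
      norm_num
  · rcases eq_or_lt_of_le (by omega : (2:ℤ) ≤ m) with h2 | h2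
    · -- m = 2
      have hm2 : m = 2 := h2.symm
      subst hm2
      rw [Rz_self (by omega : (1:ℤ) ≤ 2), Rz_one, Rz_one, Rz_one, Rz_one,
        if_neg (by omega : ¬ (2:ℤ) = 1), if_neg (by omega : ¬ (2:ℤ) = 1),
        if_pos (by omega : (2:ℤ) - 1 = 1)]
      rw [show ((2:ℤ) - 1) = 1 from by ring]
      by_cases htt : 1 ≤ t
      · rw [if_pos htt]
        have hp := zchoose_pascal (a := 1) (b := t - 1) (by omega)
        rw [show ((1:ℤ) - 1) = 0 from by ring] at hp
        rw [hp]
        push_cast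
        ring
      · rw [if_neg htt]
        have ht0 : t = 0 := by omega
        subst ht0
        rw [zchoose_neg (by omega : (0:ℤ) - 1 < 0)]
        push_cast
        ring
    · -- m > 2
      rw [Rz_eq_zero (n := 2) (m := m) h2 t,
        Rz_eq_zero (n := 1) (m := m - 1) (by omega) t,
        Rz_eq_zero (n := 1) (m := m - 1) (by omega) (t - 1),
        Rz_eq_zero (n := 1) (m := m) (by omega) t,
        Rz_eq_zero (n := 1) (m := m) (by omega) (t + 1),
        if_neg (by omega : ¬ m = 1)]
      simp

end SVTAlg

namespace SVTComb

open Finset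

def SVTSet (n t m : ℕ) : Set (ℕ × (ℕ × ℕ → Finset ℕ)) :=
  {x | IsSVT n x.1 t 0 x.2 ∧ rowEntries (x.1 + t) 0 x.2 = m}

lemma inShape_iff {e t : ℕ} {p : ℕ × ℕ} :
    InShape e t 0 p ↔ (p.1 = 0 ∧ 1 ≤ p.2 ∧ p.2 ≤ e + t) ∨ (p.1 = 1 ∧ 1 ≤ p.2 ∧ p.2 ≤ e) := by
  unfold InShape; norm_num

section Basic

variable {n e t : ℕ} {T : ℕ × ℕ → Finset ℕ}

lemma mem_shape (h : IsSVT n e t 0 T) {p : ℕ × ℕ} {k : ℕ} (hk : k ∈ T p) :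
    InShape e t 0 p := by
  by_contra hc
  rw [h.1 p hc] at hk
  exact absurd hk (Finset.notMem_empty k)

lemma mem_bounds (h : IsSVT n e t 0 T) {p : ℕ × ℕ} {k : ℕ} (hk : k ∈ T p) :
    1 ≤ k ∧ k ≤ n := by
  have := h.2.2.1 p k hk
  exact Finset.mem_Icc.mp this

lemma cell_unique (h : IsSVT n e t 0 T) {p q : ℕ × ℕ} {k : ℕ}
    (hk : k ∈ T p) (hk' : k ∈ T q) : p = q := by
  obtain ⟨r, _, hr⟩ := h.2.2.2.1 k (h.2.2.1 p k hk)
  rw [hr p hk, hr q hk']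

lemma card_sum (h : IsSVT n e t 0 T) :
    rowEntries (e + t) 0 T + rowEntries (e + t) 1 T = n := by
  classical
  set P : Finset (ℕ × ℕ) := Finset.range 2 ×ˢ Finset.range (e + t + 1) with hP
  have hcover : Finset.Icc 1 n = P.biUnion (fun p => T p) := by
    ext k
    simp only [Finset.mem_biUnion]
    constructor
    · intro hk
      obtain ⟨p, hp, -⟩ := h.2.2.2.1 k hk
      refine ⟨p, ?_, hp⟩
      have hs := mem_shape h hp
      rw [inShape_iff] at hs
      rw [hP, Finset.mem_product, Finset.mem_range, Finset.mem_range]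
      rcases hs with ⟨h0, -, h2⟩ | ⟨h0, -, h2⟩
      · exact ⟨by omega, by omega⟩
      · exact ⟨by omega, by omega⟩
    · rintro ⟨p, -, hk⟩
      exact h.2.2.1 p k hk
  have hdisj : ∀ p ∈ P, ∀ q ∈ P, p ≠ q → Disjoint (T p) (T q) := by
    intro p _ q _ hpq
    rw [Finset.disjoint_left]
    intro k hk hk'
    exact hpq (cell_unique h hk hk')
  have hcard : n = ∑ p ∈ P, (T p).card := by
    have h1 : (Finset.Icc 1 n).card = n := by rw [Nat.card_Icc]; omega
    rw [← h1, hcover, Finset.card_biUnion hdisj]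
  rw [hP, Finset.sum_product] at hcard
  rw [Finset.sum_range_succ, Finset.sum_range_one] at hcard
  unfold rowEntries
  omega

lemma et_le (h : IsSVT n e t 0 T) : e + t ≤ rowEntries (e + t) 0 T := by
  have h1 : ∀ j ∈ Finset.Icc 1 (e + t), 1 ≤ (T (0, j)).card := by
    intro j hj
    rw [Finset.mem_Icc] at hj
    have : (T (0, j)).Nonempty := h.2.1 (0, j) (by rw [inShape_iff]; left; exact ⟨rfl, hj.1, hj.2⟩)
    exact Finset.card_pos.mpr this
  calc e + t = ∑ _j ∈ Finset.Icc 1 (e + t), 1 := by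
        rw [Finset.sum_const, smul_eq_mul, mul_one, Nat.card_Icc]; omega
    _ ≤ ∑ j ∈ Finset.Icc 1 (e + t), (T (0, j)).card := Finset.sum_le_sum h1
    _ ≤ ∑ j ∈ Finset.range (e + t + 1), (T (0, j)).card := by
        apply Finset.sum_le_sum_of_subset
        intro j hj
        rw [Finset.mem_Icc] at hj
        rw [Finset.mem_range]
        omega

lemma e_le (h : IsSVT n e t 0 T) : e ≤ rowEntries (e + t) 1 T := by
  have h1 : ∀ j ∈ Finset.Icc 1 e, 1 ≤ (T (1, j)).card := by
    intro j hj
    rw [Finset.mem_Icc] at hj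
    have : (T (1, j)).Nonempty := h.2.1 (1, j) (by rw [inShape_iff]; right; exact ⟨rfl, hj.1, hj.2⟩)
    exact Finset.card_pos.mpr this
  calc e = ∑ _j ∈ Finset.Icc 1 e, 1 := by
        rw [Finset.sum_const, smul_eq_mul, mul_one, Nat.card_Icc]; omega
    _ ≤ ∑ j ∈ Finset.Icc 1 e, (T (1, j)).card := Finset.sum_le_sum h1
    _ ≤ ∑ j ∈ Finset.range (e + t + 1), (T (1, j)).card := by
        apply Finset.sum_le_sum_of_subset
        intro j hj
        rw [Finset.mem_Icc] at hj
        rw [Finset.mem_range]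
        omega

lemma et_pos (h : IsSVT n e t 0 T) (hn : 1 ≤ n) : 1 ≤ e + t := by
  obtain ⟨p, hp, -⟩ := h.2.2.2.1 1 (Finset.mem_Icc.mpr ⟨le_refl 1, hn⟩)
  have hs := mem_shape h hp
  rw [inShape_iff] at hs
  rcases hs with ⟨-, h1, h2⟩ | ⟨-, h1, h2⟩ <;> omega

lemma rowEntries0_pos (h : IsSVT n e t 0 T) (hn : 1 ≤ n) :
    1 ≤ rowEntries (e + t) 0 T := by
  have := et_le h
  have := et_pos h hn
  omega

lemma max_cell (h : IsSVT n e t 0 T) {p : ℕ × ℕ} (hp : n ∈ T p) :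
    p = (0, e + t) ∨ p = (1, e) := by
  have hs := mem_shape h hp
  rw [inShape_iff] at hs
  rcases hs with ⟨h0, h1, h2⟩ | ⟨h0, h1, h2⟩
  · left
    obtain ⟨r, j⟩ := p
    simp only at h0 h1 h2 ⊢
    subst h0
    rcases eq_or_lt_of_le h2 with hj | hj
    · rw [hj]
    · exfalso
      have hq : InShape e t 0 (0, e + t) := by rw [inShape_iff]; left; exact ⟨rfl, by omega, le_refl _⟩
      obtain ⟨b, hb⟩ := h.2.1 (0, e + t) hq
      have hlt := h.2.2.2.2 (0, j) (0, e + t) (mem_shape h hp) hq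
        (by simp; omega) (le_refl 0) (by simp; omega) n hp b hb
      have := mem_bounds h hb
      omega
  · right
    obtain ⟨r, j⟩ := p
    simp only at h0 h1 h2 ⊢
    subst h0
    rcases eq_or_lt_of_le h2 with hj | hj
    · rw [hj]
    · exfalso
      have hq : InShape e t 0 (1, e) := by rw [inShape_iff]; right; exact ⟨rfl, by omega, le_refl _⟩
      obtain ⟨b, hb⟩ := h.2.1 (1, e) hq
      have hlt := h.2.2.2.2 (1, j) (1, e) (mem_shape h hp) hq
        (by simp; omega) (le_refl 1) (by simp; omega) n hp b hb
      have := mem_bounds h hb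
      omega

lemma not_row0_of_t0 (h : IsSVT n e 0 0 T) (hn : 1 ≤ n) {p : ℕ × ℕ} (hp : n ∈ T p) :
    p = (1, e) := by
  rcases max_cell h hp with h0 | h0
  · exfalso
    have he : 1 ≤ e := by have := et_pos h hn; omega
    have hq : InShape e 0 0 (1, e) := by rw [inShape_iff]; right; exact ⟨rfl, he, le_refl _⟩
    obtain ⟨b, hb⟩ := h.2.1 (1, e) hq
    subst h0
    have hlt := h.2.2.2.2 (0, e + 0) (1, e) (mem_shape h hp) hq
      (by simp) (by simp) (by simp) n hp b hb
    have := mem_bounds h hb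
    omega
  · exact h0

lemma e0_iff (h : IsSVT n e t 0 T) (hm : rowEntries (e + t) 0 T = m) (hn : 1 ≤ n) :
    e = 0 ↔ m = n := by
  constructor
  · intro he
    subst he
    have hs := card_sum h
    have h1 : rowEntries (0 + t) 1 T = 0 := by
      unfold rowEntries
      apply Finset.sum_eq_zero
      intro j _
      rw [h.1 (1, j) (by rw [inShape_iff]; push_neg; exact ⟨fun hc => by omega, fun hc => by omega⟩)]
      exact Finset.card_empty
    omega
  · intro hmn
    by_contra he
    have he1 : 1 ≤ e := by omega
    have hne : (T (1, 1)).Nonempty := h.2.1 (1, 1) (by rw [inShape_iff]; right; exact ⟨rfl, le_refl 1, he1⟩)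
    have h1 : 1 ≤ rowEntries (e + t) 1 T := by
      unfold rowEntries
      calc 1 ≤ (T (1, 1)).card := Finset.card_pos.mpr hne
        _ ≤ _ := Finset.single_le_sum (f := fun j => (T (1, j)).card) (fun _ _ => Nat.zero_le _)
            (Finset.mem_range.mpr (by omega))
    have hs := card_sum h
    omega

end Basic
section Finiteness

lemma svt_finite (n t m : ℕ) (hn : 1 ≤ n) : (SVTSet n t m).Finite := by
  classical
  rw [← Set.finite_coe_iff]
  let D : Finset (ℕ × ℕ) := Finset.range 2 ×ˢ Finset.range (n + 1)
  let P : Finset (Finset ℕ) := (Finset.Icc 1 n).powerset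
  have hbound : ∀ x : ↥(SVTSet n t m), x.1.1 ≤ n ∧ x.1.1 + t ≤ n := by
    rintro ⟨⟨e, T⟩, hsvt, hrow⟩
    have h1 := et_le hsvt
    have h2 := e_le hsvt
    have h3 := card_sum hsvt
    simp only at h1 h2 h3 hrow ⊢
    omega
  have hsub : ∀ x : ↥(SVTSet n t m), ∀ p : ℕ × ℕ, x.1.2 p ⊆ Finset.Icc 1 n := by
    rintro ⟨⟨e, T⟩, hsvt, hrow⟩ p k hk
    exact hsvt.2.2.1 p k hk
  let F : ↥(SVTSet n t m) → Fin (n + 1) × (↥D → ↥P) := fun x =>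
    ⟨⟨x.1.1, by have := (hbound x).1; omega⟩,
     fun p => ⟨x.1.2 p.1, Finset.mem_powerset.mpr (hsub x p.1)⟩⟩
  have hinj : Function.Injective F := by
    rintro x y hxy
    have he : x.1.1 = y.1.1 := by
      have := congrArg (fun z => (z.1 : ℕ)) hxy
      simpa using this
    have hT : x.1.2 = y.1.2 := by
      funext p
      by_cases hp : p ∈ D
      · have := congrArg (fun z => (z.2 ⟨p, hp⟩ : Finset ℕ)) hxy
        simpa [F] using this
      · have hshape : ∀ z : ↥(SVTSet n t m), ¬ InShape z.1.1 t 0 p := by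
          rintro ⟨⟨e, T⟩, hsvt, hrow⟩ hc
        -- p in shape implies p ∈ D
          apply hp
          rw [inShape_iff] at hc
          have hb := hbound ⟨⟨e, T⟩, hsvt, hrow⟩
          simp only at hb hc
          rw [Finset.mem_product, Finset.mem_range, Finset.mem_range]
          rcases hc with ⟨h0, h1, h2⟩ | ⟨h0, h1, h2⟩
          · exact ⟨by omega, by omega⟩
          · exact ⟨by omega, by omega⟩
        rw [x.2.1.1 p (hshape x), y.2.1.1 p (hshape y)]
    exact Subtype.ext (Prod.ext he hT)
  exact Finite.of_injective F hinj

end Finiteness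

section Helpers

lemma ncard_eq_of_maps {α : Type*} {A B : Set α} (f g : α → α)
    (hf : ∀ x ∈ A, f x ∈ B) (hg : ∀ y ∈ B, g y ∈ A)
    (hgf : ∀ x ∈ A, g (f x) = x) (hfg : ∀ y ∈ B, f (g y) = y) :
    A.ncard = B.ncard := by
  have hbij : Set.BijOn f A B := by
    refine ⟨hf, ?_, ?_⟩
    · intro x hx y hy hxy
      rw [← hgf x hx, ← hgf y hy, hxy]
    · intro y hy
      exact ⟨g y, hg y hy, hfg y hy⟩
  rw [← hbij.image_eq, Set.ncard_image_of_injOn hbij.injOn]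

lemma rowEntries_update_ne {M r : ℕ} {T : ℕ × ℕ → Finset ℕ} {p₀ : ℕ × ℕ}
    {v : Finset ℕ} (h : p₀.1 ≠ r) :
    rowEntries M r (Function.update T p₀ v) = rowEntries M r T := by
  unfold rowEntries
  apply Finset.sum_congr rfl
  intro j _
  rw [Function.update_of_ne (fun hc => h (by rw [← hc]))]

lemma rowEntries_update {M r j₀ : ℕ} {T : ℕ × ℕ → Finset ℕ} {v : Finset ℕ}
    (hj₀ : j₀ < M + 1) :
    rowEntries M r (Function.update T (r, j₀) v) + (T (r, j₀)).card
      = rowEntries M r T + v.card := by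
  classical
  unfold rowEntries
  have hmem : j₀ ∈ Finset.range (M + 1) := Finset.mem_range.mpr hj₀
  rw [← Finset.add_sum_erase _ (fun j => ((Function.update T (r, j₀) v) (r, j)).card) hmem,
    ← Finset.add_sum_erase _ (fun j => (T (r, j)).card) hmem]
  have h1 : (Function.update T (r, j₀) v) (r, j₀) = v := Function.update_self _ _ _
  have h2 : ∀ j ∈ (Finset.range (M + 1)).erase j₀,
      ((Function.update T (r, j₀) v) (r, j)).card = (T (r, j)).card := by
    intro j hj
    have hne : j ≠ j₀ := (Finset.mem_erase.mp hj).1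
    rw [Function.update_of_ne (by simp [hne])]
  rw [h1, Finset.sum_congr rfl h2]
  ring

lemma rowEntries_succ {M r : ℕ} {T : ℕ × ℕ → Finset ℕ} :
    rowEntries (M + 1) r T = rowEntries M r T + (T (r, M + 1)).card := by
  unfold rowEntries
  rw [Finset.sum_range_succ]

end Helpers
section Surgery

variable {n e t : ℕ} {T : ℕ × ℕ → Finset ℕ}

lemma isSVT_remove (h : IsSVT (n + 1) e t 0 T) {p₀ : ℕ × ℕ}
    (hp : (n + 1) ∈ T p₀) (hne : T p₀ ≠ {n + 1}) :
    IsSVT n e t 0 (Function.update T p₀ (T p₀ \ {n + 1})) := by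
  classical
  set T' := Function.update T p₀ (T p₀ \ {n + 1}) with hT'
  have hsub : ∀ p, T' p ⊆ T p := by
    intro p k hk
    by_cases hpp : p = p₀
    · subst hpp; rw [hT', Function.update_self] at hk; exact (Finset.mem_sdiff.mp hk).1
    · rwa [hT', Function.update_of_ne hpp] at hk
  have hnotn : ∀ p k, k ∈ T' p → k ≠ n + 1 := by
    intro p k hk
    by_cases hpp : p = p₀
    · subst hpp; rw [hT', Function.update_self] at hk
      intro hc; subst hc; exact (Finset.mem_sdiff.mp hk).2 (Finset.mem_singleton_self _)
    · rw [hT', Function.update_of_ne hpp] at hk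
      intro hc; subst hc
      exact hpp (cell_unique h hk hp)
  refine ⟨?_, ?_, ?_, ?_, ?_⟩
  · intro p hps
    by_cases hpp : p = p₀
    · exfalso; subst hpp; exact hps (mem_shape h hp)
    · rw [hT', Function.update_of_ne hpp]; exact h.1 p hps
  · intro p hps
    by_cases hpp : p = p₀
    · subst hpp
      rw [hT', Function.update_self]
      by_contra hc
      rw [Finset.not_nonempty_iff_eq_empty, Finset.sdiff_eq_empty_iff_subset] at hc
      exact hne (Finset.Subset.antisymm hc (Finset.singleton_subset_iff.mpr hp))
    · rw [hT', Function.update_of_ne hpp]; exact h.2.1 p hps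
  · intro p k hk
    have h1 := mem_bounds h (hsub p hk)
    have h2 := hnotn p k hk
    rw [Finset.mem_Icc]; omega
  · intro k hk
    rw [Finset.mem_Icc] at hk
    obtain ⟨p, hp1, hp2⟩ := h.2.2.2.1 k (Finset.mem_Icc.mpr ⟨hk.1, by omega⟩)
    refine ⟨p, ?_, ?_⟩
    · show k ∈ T' p
      by_cases hpp : p = p₀
      · subst hpp; rw [hT', Function.update_self, Finset.mem_sdiff]
        exact ⟨hp1, by rw [Finset.mem_singleton]; omega⟩
      · rw [hT', Function.update_of_ne hpp]; exact hp1
    · intro q hq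
      exact hp2 q (hsub q hq)
  · intro p q hps hqs hpq h1 h2 a ha b hb
    exact h.2.2.2.2 p q hps hqs hpq h1 h2 a (hsub p ha) b (hsub q hb)

lemma isSVT_insert_row0 (h : IsSVT n e t 0 T) (ht : 1 ≤ t) :
    IsSVT (n + 1) e t 0 (Function.update T (0, e + t) (insert (n + 1) (T (0, e + t)))) := by
  classical
  have hshape₀ : InShape e t 0 (0, e + t) := by
    rw [inShape_iff]; left; exact ⟨rfl, by omega, le_refl _⟩
  set T' := Function.update T (0, e + t) (insert (n + 1) (T (0, e + t))) with hT'
  have hsup : ∀ p, T p ⊆ T' p := by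
    intro p k hk
    by_cases hpp : p = (0, e + t)
    · subst hpp; rw [hT', Function.update_self]; exact Finset.mem_insert_of_mem hk
    · rwa [hT', Function.update_of_ne hpp]
  have hmem' : ∀ p k, k ∈ T' p → k ∈ T p ∨ (k = n + 1 ∧ p = (0, e + t)) := by
    intro p k hk
    by_cases hpp : p = (0, e + t)
    · subst hpp; rw [hT', Function.update_self, Finset.mem_insert] at hk
      rcases hk with hk | hk
      · exact Or.inr ⟨hk, rfl⟩
      · exact Or.inl hk
    · rw [hT', Function.update_of_ne hpp] at hk; exact Or.inl hk
  refine ⟨?_, ?_, ?_, ?_, ?_⟩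
  · intro p hps
    have hpp : p ≠ (0, e + t) := fun hc => hps (hc ▸ hshape₀)
    rw [hT', Function.update_of_ne hpp]; exact h.1 p hps
  · intro p hps
    by_cases hpp : p = (0, e + t)
    · subst hpp; rw [hT', Function.update_self]; exact Finset.insert_nonempty _ _
    · rw [hT', Function.update_of_ne hpp]; exact h.2.1 p hps
  · intro p k hk
    rcases hmem' p k hk with hk | ⟨hk, -⟩
    · have := mem_bounds h hk; rw [Finset.mem_Icc]; omega
    · subst hk; rw [Finset.mem_Icc]; omega
  · intro k hk
    rw [Finset.mem_Icc] at hk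
    by_cases hkn : k = n + 1
    · subst hkn
      refine ⟨(0, e + t), ?_, ?_⟩
      · show (n + 1) ∈ T' (0, e + t)
        rw [hT', Function.update_self]; exact Finset.mem_insert_self _ _
      intro q hq
      rcases hmem' q _ hq with hq | ⟨-, hq⟩
      · exfalso; have := mem_bounds h hq; omega
      · exact hq
    · obtain ⟨p, hp1, hp2⟩ := h.2.2.2.1 k (Finset.mem_Icc.mpr ⟨hk.1, by omega⟩)
      refine ⟨p, hsup p hp1, ?_⟩
      intro q hq
      replace hq : k ∈ T' q := hq
      rcases hmem' q _ hq with hq | ⟨hq, -⟩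
      · exact hp2 q hq
      · exact absurd hq hkn
  · intro p q hps hqs hpq h1 h2 a ha b hb
    rcases hmem' p a ha with ha' | ⟨ha', hp'⟩
    · rcases hmem' q b hb with hb' | ⟨hb', hq'⟩
      · exact h.2.2.2.2 p q hps hqs hpq h1 h2 a ha' b hb'
      · have := mem_bounds h ha'
        omega
    · exfalso
      subst hp'
      rw [inShape_iff] at hqs
      simp only at h1 h2
      rcases hqs with ⟨hq0, hq1, hq2⟩ | ⟨hq0, hq1, hq2⟩
      · exact hpq (Prod.ext (by omega) (by omega)).symm
      · omega

lemma isSVT_insert_row1 (h : IsSVT n e t 0 T) (he : 1 ≤ e) :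
    IsSVT (n + 1) e t 0 (Function.update T (1, e) (insert (n + 1) (T (1, e)))) := by
  classical
  have hshape₀ : InShape e t 0 (1, e) := by
    rw [inShape_iff]; right; exact ⟨rfl, he, le_refl _⟩
  set T' := Function.update T (1, e) (insert (n + 1) (T (1, e))) with hT'
  have hsup : ∀ p, T p ⊆ T' p := by
    intro p k hk
    by_cases hpp : p = (1, e)
    · subst hpp; rw [hT', Function.update_self]; exact Finset.mem_insert_of_mem hk
    · rwa [hT', Function.update_of_ne hpp]
  have hmem' : ∀ p k, k ∈ T' p → k ∈ T p ∨ (k = n + 1 ∧ p = (1, e)) := by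
    intro p k hk
    by_cases hpp : p = (1, e)
    · subst hpp; rw [hT', Function.update_self, Finset.mem_insert] at hk
      rcases hk with hk | hk
      · exact Or.inr ⟨hk, rfl⟩
      · exact Or.inl hk
    · rw [hT', Function.update_of_ne hpp] at hk; exact Or.inl hk
  refine ⟨?_, ?_, ?_, ?_, ?_⟩
  · intro p hps
    have hpp : p ≠ (1, e) := fun hc => hps (hc ▸ hshape₀)
    rw [hT', Function.update_of_ne hpp]; exact h.1 p hps
  · intro p hps
    by_cases hpp : p = (1, e)
    · subst hpp; rw [hT', Function.update_self]; exact Finset.insert_nonempty _ _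
    · rw [hT', Function.update_of_ne hpp]; exact h.2.1 p hps
  · intro p k hk
    rcases hmem' p k hk with hk | ⟨hk, -⟩
    · have := mem_bounds h hk; rw [Finset.mem_Icc]; omega
    · subst hk; rw [Finset.mem_Icc]; omega
  · intro k hk
    rw [Finset.mem_Icc] at hk
    by_cases hkn : k = n + 1
    · subst hkn
      refine ⟨(1, e), ?_, ?_⟩
      · show (n + 1) ∈ T' (1, e)
        rw [hT', Function.update_self]; exact Finset.mem_insert_self _ _
      intro q hq
      rcases hmem' q _ hq with hq | ⟨-, hq⟩
      · exfalso; have := mem_bounds h hq; omega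
      · exact hq
    · obtain ⟨p, hp1, hp2⟩ := h.2.2.2.1 k (Finset.mem_Icc.mpr ⟨hk.1, by omega⟩)
      refine ⟨p, hsup p hp1, ?_⟩
      intro q hq
      replace hq : k ∈ T' q := hq
      rcases hmem' q _ hq with hq | ⟨hq, -⟩
      · exact hp2 q hq
      · exact absurd hq hkn
  · intro p q hps hqs hpq h1 h2 a ha b hb
    rcases hmem' p a ha with ha' | ⟨ha', hp'⟩
    · rcases hmem' q b hb with hb' | ⟨hb', hq'⟩
      · exact h.2.2.2.2 p q hps hqs hpq h1 h2 a ha' b hb'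
      · have := mem_bounds h ha'
        omega
    · exfalso
      subst hp'
      rw [inShape_iff] at hqs
      simp only at h1 h2
      rcases hqs with ⟨hq0, hq1, hq2⟩ | ⟨hq0, hq1, hq2⟩
      · omega
      · exact hpq (Prod.ext (by omega) (by omega)).symm

end Surgery
section CellSurgery

variable {n e t : ℕ} {T : ℕ × ℕ → Finset ℕ}

lemma shape_mono_b {p : ℕ × ℕ} (hp : InShape e t 0 p) : InShape e (t + 1) 0 p := by
  obtain ⟨r, j⟩ := p
  simp only [inShape_iff] at *
  omega

lemma shape_mono_d {p : ℕ × ℕ} (hp : InShape e (t + 1) 0 p) : InShape (e + 1) t 0 p := by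
  obtain ⟨r, j⟩ := p
  simp only [inShape_iff] at *
  omega

lemma isSVT_removecell_b (h : IsSVT (n + 1) e (t + 1) 0 T) (hb : T (0, e + t + 1) = {n + 1}) :
    IsSVT n e t 0 (Function.update T (0, e + t + 1) ∅) := by
  classical
  set c₀ : ℕ × ℕ := (0, e + t + 1) with hc₀
  set T' := Function.update T c₀ ∅ with hT'
  have hnmem : (n + 1) ∈ T c₀ := by rw [hb]; exact Finset.mem_singleton_self _
  have hsub : ∀ p, T' p ⊆ T p := by
    intro p k hk
    by_cases hpp : p = c₀
    · subst hpp; rw [hT', Function.update_self] at hk; exact absurd hk (Finset.notMem_empty k)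
    · rwa [hT', Function.update_of_ne hpp] at hk
  have hnc : ∀ p k, k ∈ T' p → p ≠ c₀ ∧ k ∈ T p ∧ k ≠ n + 1 := by
    intro p k hk
    by_cases hpp : p = c₀
    · subst hpp; rw [hT', Function.update_self] at hk; exact absurd hk (Finset.notMem_empty k)
    · refine ⟨hpp, hsub p hk, ?_⟩
      intro hc; subst hc
      exact hpp (cell_unique h (hsub p hk) hnmem)
  refine ⟨?_, ?_, ?_, ?_, ?_⟩
  · intro p hps
    by_cases hpp : p = c₀
    · subst hpp; rw [hT', Function.update_self]
    · rw [hT', Function.update_of_ne hpp]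
      apply h.1 p
      intro hc
      apply hps
      obtain ⟨r, j⟩ := p
      simp only [hc₀, inShape_iff, Prod.mk.injEq] at hc hpp ⊢
      omega
  · intro p hps
    have hpp : p ≠ c₀ := by
      intro hc; subst hc
      rw [hc₀, inShape_iff] at hps
      simp only [] at hps
      omega
    rw [hT', Function.update_of_ne hpp]
    exact h.2.1 p (shape_mono_b hps)
  · intro p k hk
    obtain ⟨-, hk1, hk2⟩ := hnc p k hk
    have := mem_bounds h hk1
    rw [Finset.mem_Icc]; omega
  · intro k hk
    rw [Finset.mem_Icc] at hk
    obtain ⟨p, hp1, hp2⟩ := h.2.2.2.1 k (Finset.mem_Icc.mpr ⟨hk.1, by omega⟩)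
    have hpp : p ≠ c₀ := by
      intro hc; subst hc
      rw [hb, Finset.mem_singleton] at hp1
      omega
    refine ⟨p, ?_, ?_⟩
    · show k ∈ T' p
      rw [hT', Function.update_of_ne hpp]; exact hp1
    · intro q hq
      replace hq : k ∈ T' q := hq
      exact hp2 q (hsub q hq)
  · intro p q hps hqs hpq h1 h2 a ha b hb'
    exact h.2.2.2.2 p q (shape_mono_b hps) (shape_mono_b hqs) hpq h1 h2
      a (hsub p ha) b (hsub q hb')

lemma isSVT_addcell_b (h : IsSVT n e t 0 T) :
    IsSVT (n + 1) e (t + 1) 0 (Function.update T (0, e + t + 1) {n + 1}) := by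
  classical
  set c₀ : ℕ × ℕ := (0, e + t + 1) with hc₀
  set T' := Function.update T c₀ {n + 1} with hT'
  have hc₀shape : InShape e (t + 1) 0 c₀ := by
    rw [hc₀, inShape_iff]; left; exact ⟨rfl, by omega, by omega⟩
  have hc₀empty : T c₀ = ∅ := by
    apply h.1
    rw [hc₀, inShape_iff]
    simp only []
    omega
  have hmem' : ∀ p k, k ∈ T' p → (k ∈ T p ∧ p ≠ c₀) ∨ (k = n + 1 ∧ p = c₀) := by
    intro p k hk
    by_cases hpp : p = c₀
    · subst hpp; rw [hT', Function.update_self, Finset.mem_singleton] at hk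
      exact Or.inr ⟨hk, rfl⟩
    · rw [hT', Function.update_of_ne hpp] at hk; exact Or.inl ⟨hk, hpp⟩
  refine ⟨?_, ?_, ?_, ?_, ?_⟩
  · intro p hps
    have hpp : p ≠ c₀ := fun hc => hps (hc ▸ hc₀shape)
    rw [hT', Function.update_of_ne hpp]
    apply h.1 p
    intro hc
    exact hps (shape_mono_b hc)
  · intro p hps
    by_cases hpp : p = c₀
    · subst hpp; rw [hT', Function.update_self]; exact Finset.singleton_nonempty _
    · rw [hT', Function.update_of_ne hpp]
      apply h.2.1 p
      obtain ⟨r, j⟩ := p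
      rw [inShape_iff] at hps ⊢
      simp only [hc₀, Prod.mk.injEq] at hpp
      simp only [] at hps ⊢
      omega
  · intro p k hk
    rcases hmem' p k hk with ⟨hk1, -⟩ | ⟨hk1, -⟩
    · have := mem_bounds h hk1; rw [Finset.mem_Icc]; omega
    · rw [Finset.mem_Icc]; omega
  · intro k hk
    rw [Finset.mem_Icc] at hk
    by_cases hkn : k = n + 1
    · subst hkn
      refine ⟨c₀, ?_, ?_⟩
      · show (n + 1) ∈ T' c₀
        rw [hT', Function.update_self]; exact Finset.mem_singleton_self _
      · intro q hq
        replace hq : (n + 1) ∈ T' q := hq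
        rcases hmem' q _ hq with ⟨hq1, -⟩ | ⟨-, hq2⟩
        · exfalso; have := mem_bounds h hq1; omega
        · exact hq2
    · obtain ⟨p, hp1, hp2⟩ := h.2.2.2.1 k (Finset.mem_Icc.mpr ⟨hk.1, by omega⟩)
      have hpp : p ≠ c₀ := by
        intro hc; subst hc
        rw [hc₀empty] at hp1
        exact absurd hp1 (Finset.notMem_empty k)
      refine ⟨p, ?_, ?_⟩
      · show k ∈ T' p
        rw [hT', Function.update_of_ne hpp]; exact hp1
      · intro q hq
        replace hq : k ∈ T' q := hq
        rcases hmem' q _ hq with ⟨hq1, -⟩ | ⟨hq1, -⟩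
        · exact hp2 q hq1
        · exact absurd hq1 hkn
  · intro p q hps hqs hpq h1 h2 a ha b hb'
    rcases hmem' p a ha with ⟨ha1, -⟩ | ⟨ha1, hp1⟩
    · rcases hmem' q b hb' with ⟨hb1, -⟩ | ⟨hb1, -⟩
      · exact h.2.2.2.2 p q (mem_shape h ha1) (mem_shape h hb1) hpq h1 h2 a ha1 b hb1
      · have := mem_bounds h ha1; omega
    · exfalso
      subst hp1
      obtain ⟨r, j⟩ := q
      rw [inShape_iff] at hqs
      simp [hc₀, Prod.mk.injEq] at hpq h1 h2 hqs
      omega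

lemma isSVT_removecell_d (h : IsSVT (n + 1) (e + 1) t 0 T) (hd : T (1, e + 1) = {n + 1}) :
    IsSVT n e (t + 1) 0 (Function.update T (1, e + 1) ∅) := by
  classical
  set c₀ : ℕ × ℕ := (1, e + 1) with hc₀
  set T' := Function.update T c₀ ∅ with hT'
  have hnmem : (n + 1) ∈ T c₀ := by rw [hd]; exact Finset.mem_singleton_self _
  have hsub : ∀ p, T' p ⊆ T p := by
    intro p k hk
    by_cases hpp : p = c₀
    · subst hpp; rw [hT', Function.update_self] at hk; exact absurd hk (Finset.notMem_empty k)
    · rwa [hT', Function.update_of_ne hpp] at hk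
  have hnc : ∀ p k, k ∈ T' p → p ≠ c₀ ∧ k ∈ T p ∧ k ≠ n + 1 := by
    intro p k hk
    by_cases hpp : p = c₀
    · subst hpp; rw [hT', Function.update_self] at hk; exact absurd hk (Finset.notMem_empty k)
    · refine ⟨hpp, hsub p hk, ?_⟩
      intro hc; subst hc
      exact hpp (cell_unique h (hsub p hk) hnmem)
  refine ⟨?_, ?_, ?_, ?_, ?_⟩
  · intro p hps
    by_cases hpp : p = c₀
    · subst hpp; rw [hT', Function.update_self]
    · rw [hT', Function.update_of_ne hpp]
      apply h.1 p
      intro hc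
      apply hps
      obtain ⟨r, j⟩ := p
      simp only [hc₀, inShape_iff, Prod.mk.injEq] at hc hpp ⊢
      omega
  · intro p hps
    have hpp : p ≠ c₀ := by
      intro hc; subst hc
      rw [hc₀, inShape_iff] at hps
      simp only [] at hps
      omega
    rw [hT', Function.update_of_ne hpp]
    exact h.2.1 p (shape_mono_d hps)
  · intro p k hk
    obtain ⟨-, hk1, hk2⟩ := hnc p k hk
    have := mem_bounds h hk1
    rw [Finset.mem_Icc]; omega
  · intro k hk
    rw [Finset.mem_Icc] at hk
    obtain ⟨p, hp1, hp2⟩ := h.2.2.2.1 k (Finset.mem_Icc.mpr ⟨hk.1, by omega⟩)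
    have hpp : p ≠ c₀ := by
      intro hc; subst hc
      rw [hd, Finset.mem_singleton] at hp1
      omega
    refine ⟨p, ?_, ?_⟩
    · show k ∈ T' p
      rw [hT', Function.update_of_ne hpp]; exact hp1
    · intro q hq
      replace hq : k ∈ T' q := hq
      exact hp2 q (hsub q hq)
  · intro p q hps hqs hpq h1 h2 a ha b hb'
    exact h.2.2.2.2 p q (shape_mono_d hps) (shape_mono_d hqs) hpq h1 h2
      a (hsub p ha) b (hsub q hb')

lemma isSVT_addcell_d (h : IsSVT n e (t + 1) 0 T) :
    IsSVT (n + 1) (e + 1) t 0 (Function.update T (1, e + 1) {n + 1}) := by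
  classical
  set c₀ : ℕ × ℕ := (1, e + 1) with hc₀
  set T' := Function.update T c₀ {n + 1} with hT'
  have hc₀shape : InShape (e + 1) t 0 c₀ := by
    rw [hc₀, inShape_iff]; right; exact ⟨rfl, by omega, by omega⟩
  have hc₀empty : T c₀ = ∅ := by
    apply h.1
    rw [hc₀, inShape_iff]
    simp only []
    omega
  have hmem' : ∀ p k, k ∈ T' p → (k ∈ T p ∧ p ≠ c₀) ∨ (k = n + 1 ∧ p = c₀) := by
    intro p k hk
    by_cases hpp : p = c₀
    · subst hpp; rw [hT', Function.update_self, Finset.mem_singleton] at hk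
      exact Or.inr ⟨hk, rfl⟩
    · rw [hT', Function.update_of_ne hpp] at hk; exact Or.inl ⟨hk, hpp⟩
  refine ⟨?_, ?_, ?_, ?_, ?_⟩
  · intro p hps
    have hpp : p ≠ c₀ := fun hc => hps (hc ▸ hc₀shape)
    rw [hT', Function.update_of_ne hpp]
    apply h.1 p
    intro hc
    exact hps (shape_mono_d hc)
  · intro p hps
    by_cases hpp : p = c₀
    · subst hpp; rw [hT', Function.update_self]; exact Finset.singleton_nonempty _
    · rw [hT', Function.update_of_ne hpp]
      apply h.2.1 p
      obtain ⟨r, j⟩ := p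
      rw [inShape_iff] at hps ⊢
      simp only [hc₀, Prod.mk.injEq] at hpp
      simp only [] at hps ⊢
      omega
  · intro p k hk
    rcases hmem' p k hk with ⟨hk1, -⟩ | ⟨hk1, -⟩
    · have := mem_bounds h hk1; rw [Finset.mem_Icc]; omega
    · rw [Finset.mem_Icc]; omega
  · intro k hk
    rw [Finset.mem_Icc] at hk
    by_cases hkn : k = n + 1
    · subst hkn
      refine ⟨c₀, ?_, ?_⟩
      · show (n + 1) ∈ T' c₀
        rw [hT', Function.update_self]; exact Finset.mem_singleton_self _
      · intro q hq
        replace hq : (n + 1) ∈ T' q := hq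
        rcases hmem' q _ hq with ⟨hq1, -⟩ | ⟨-, hq2⟩
        · exfalso; have := mem_bounds h hq1; omega
        · exact hq2
    · obtain ⟨p, hp1, hp2⟩ := h.2.2.2.1 k (Finset.mem_Icc.mpr ⟨hk.1, by omega⟩)
      have hpp : p ≠ c₀ := by
        intro hc; subst hc
        rw [hc₀empty] at hp1
        exact absurd hp1 (Finset.notMem_empty k)
      refine ⟨p, ?_, ?_⟩
      · show k ∈ T' p
        rw [hT', Function.update_of_ne hpp]; exact hp1
      · intro q hq
        replace hq : k ∈ T' q := hq
        rcases hmem' q _ hq with ⟨hq1, -⟩ | ⟨hq1, -⟩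
        · exact hp2 q hq1
        · exact absurd hq1 hkn
  · intro p q hps hqs hpq h1 h2 a ha b hb'
    rcases hmem' p a ha with ⟨ha1, -⟩ | ⟨ha1, hp1⟩
    · rcases hmem' q b hb' with ⟨hb1, -⟩ | ⟨hb1, -⟩
      · exact h.2.2.2.2 p q (mem_shape h ha1) (mem_shape h hb1) hpq h1 h2 a ha1 b hb1
      · have := mem_bounds h ha1; omega
    · exfalso
      subst hp1
      obtain ⟨r, j⟩ := q
      rw [inShape_iff] at hqs
      simp [hc₀, Prod.mk.injEq] at hpq h1 h2 hqs
      omega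

end CellSurgery
section Recursion

lemma rowEntries_update_out {M r j₀ : ℕ} {T : ℕ × ℕ → Finset ℕ} {v : Finset ℕ}
    (h : M < j₀) :
    rowEntries M r (Function.update T (r, j₀) v) = rowEntries M r T := by
  unfold rowEntries
  apply Finset.sum_congr rfl
  intro j hj
  rw [Finset.mem_range] at hj
  rw [Function.update_of_ne (by simp; omega)]

def Sa (n t m : ℕ) : Set (ℕ × (ℕ × ℕ → Finset ℕ)) :=
  {x | x ∈ SVTSet (n + 1) t m ∧ (n + 1) ∈ x.2 (0, x.1 + t) ∧ x.2 (0, x.1 + t) ≠ {n + 1}}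

def Sb (n t m : ℕ) : Set (ℕ × (ℕ × ℕ → Finset ℕ)) :=
  {x | x ∈ SVTSet (n + 1) t m ∧ x.2 (0, x.1 + t) = {n + 1}}

def Sc (n t m : ℕ) : Set (ℕ × (ℕ × ℕ → Finset ℕ)) :=
  {x | x ∈ SVTSet (n + 1) t m ∧ (n + 1) ∈ x.2 (1, x.1) ∧ x.2 (1, x.1) ≠ {n + 1}}

def Sd (n t m : ℕ) : Set (ℕ × (ℕ × ℕ → Finset ℕ)) :=
  {x | x ∈ SVTSet (n + 1) t m ∧ x.2 (1, x.1) = {n + 1}}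

lemma ncard_c (n t m : ℕ) :
    (Sc n t m).ncard = {y ∈ SVTSet n t m | 1 ≤ y.1}.ncard := by
  classical
  apply ncard_eq_of_maps
    (fun x => (x.1, Function.update x.2 (1, x.1) (x.2 (1, x.1) \ {n + 1})))
    (fun y => (y.1, Function.update y.2 (1, y.1) (insert (n + 1) (y.2 (1, y.1)))))
  · rintro ⟨e, T⟩ ⟨⟨hsvt, hrow⟩, hmem, hne⟩
    simp only at hsvt hrow hmem hne
    have he : 1 ≤ e := by
      have hs := mem_shape hsvt hmem
      rw [inShape_iff] at hs
      simp only at hs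
      omega
    refine ⟨⟨isSVT_remove hsvt hmem hne, ?_⟩, he⟩
    · show rowEntries (e + t) 0 (Function.update T (1, e) (T (1, e) \ {n + 1})) = m
      rw [rowEntries_update_ne (by simp)]
      exact hrow
  · rintro ⟨e, T⟩ ⟨⟨hsvt, hrow⟩, he⟩
    simp only at hsvt hrow he
    have hcell : InShape e t 0 (1, e) := by rw [inShape_iff]; right; exact ⟨rfl, he, le_refl e⟩
    obtain ⟨k, hk⟩ := hsvt.2.1 (1, e) hcell
    have hkn : k ≠ n + 1 := by have := mem_bounds hsvt hk; omega
    refine ⟨⟨isSVT_insert_row1 hsvt he, ?_⟩, ?_, ?_⟩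
    · show rowEntries (e + t) 0 (Function.update T (1, e) _) = m
      rw [rowEntries_update_ne (by simp)]
      exact hrow
    · show (n + 1) ∈ Function.update T (1, e) (insert (n + 1) (T (1, e))) (1, e)
      rw [Function.update_self]
      exact Finset.mem_insert_self _ _
    · show Function.update T (1, e) (insert (n + 1) (T (1, e))) (1, e) ≠ {n + 1}
      rw [Function.update_self]
      intro hc
      have : k ∈ insert (n + 1) (T (1, e)) := Finset.mem_insert_of_mem hk
      rw [hc, Finset.mem_singleton] at this
      exact hkn this
  · rintro ⟨e, T⟩ ⟨⟨hsvt, hrow⟩, hmem, hne⟩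
    simp only at hsvt hrow hmem hne
    simp only [Prod.mk.injEq, true_and]
    rw [Function.update_self, Function.update_idem, Finset.sdiff_singleton_eq_erase,
      Finset.insert_erase hmem, Function.update_eq_self]
  · rintro ⟨e, T⟩ ⟨⟨hsvt, hrow⟩, he⟩
    simp only at hsvt hrow he
    simp only [Prod.mk.injEq, true_and]
    have hnmem : (n + 1) ∉ T (1, e) := by
      intro hc; have := mem_bounds hsvt hc; omega
    rw [Function.update_self, Function.update_idem, Finset.sdiff_singleton_eq_erase,
      Finset.erase_insert hnmem, Function.update_eq_self]

lemma ncard_a (n t m : ℕ) (ht : 1 ≤ t) (hm : 1 ≤ m) :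
    (Sa n t m).ncard = (SVTSet n t (m - 1)).ncard := by
  classical
  apply ncard_eq_of_maps
    (fun x => (x.1, Function.update x.2 (0, x.1 + t) (x.2 (0, x.1 + t) \ {n + 1})))
    (fun y => (y.1, Function.update y.2 (0, y.1 + t) (insert (n + 1) (y.2 (0, y.1 + t)))))
  · rintro ⟨e, T⟩ ⟨⟨hsvt, hrow⟩, hmem, hne⟩
    simp only at hsvt hrow hmem hne
    refine ⟨isSVT_remove hsvt hmem hne, ?_⟩
    show rowEntries (e + t) 0 (Function.update T (0, e + t) (T (0, e + t) \ {n + 1})) = m - 1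
    have h1 := rowEntries_update (M := e + t) (r := 0) (j₀ := e + t) (T := T)
      (v := T (0, e + t) \ {n + 1}) (by omega)
    have h2 : (T (0, e + t) \ {n + 1}).card = (T (0, e + t)).card - 1 := by
      rw [Finset.card_sdiff_of_subset (Finset.singleton_subset_iff.mpr hmem), Finset.card_singleton]
    have h3 : 1 ≤ (T (0, e + t)).card := Finset.card_pos.mpr ⟨n + 1, hmem⟩
    omega
  · rintro ⟨e, T⟩ ⟨hsvt, hrow⟩
    simp only at hsvt hrow
    have hcell : InShape e t 0 (0, e + t) := by
      rw [inShape_iff]; left; exact ⟨rfl, by omega, le_refl _⟩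
    obtain ⟨k, hk⟩ := hsvt.2.1 (0, e + t) hcell
    have hkn : k ≠ n + 1 := by have := mem_bounds hsvt hk; omega
    have hnmem : (n + 1) ∉ T (0, e + t) := by
      intro hc; have := mem_bounds hsvt hc; omega
    refine ⟨⟨isSVT_insert_row0 hsvt ht, ?_⟩, ?_, ?_⟩
    · show rowEntries (e + t) 0
          (Function.update T (0, e + t) (insert (n + 1) (T (0, e + t)))) = m
      have h1 := rowEntries_update (M := e + t) (r := 0) (j₀ := e + t) (T := T)
        (v := insert (n + 1) (T (0, e + t))) (by omega)
      have h2 : (insert (n + 1) (T (0, e + t))).card = (T (0, e + t)).card + 1 :=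
        Finset.card_insert_of_notMem hnmem
      omega
    · show (n + 1) ∈ Function.update T (0, e + t) (insert (n + 1) (T (0, e + t))) (0, e + t)
      rw [Function.update_self]
      exact Finset.mem_insert_self _ _
    · show Function.update T (0, e + t) (insert (n + 1) (T (0, e + t))) (0, e + t) ≠ {n + 1}
      rw [Function.update_self]
      intro hc
      have : k ∈ insert (n + 1) (T (0, e + t)) := Finset.mem_insert_of_mem hk
      rw [hc, Finset.mem_singleton] at this
      exact hkn this
  · rintro ⟨e, T⟩ ⟨⟨hsvt, hrow⟩, hmem, hne⟩
    simp only at hsvt hrow hmem hne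
    simp only [Prod.mk.injEq, true_and]
    rw [Function.update_self, Function.update_idem, Finset.sdiff_singleton_eq_erase,
      Finset.insert_erase hmem, Function.update_eq_self]
  · rintro ⟨e, T⟩ ⟨hsvt, hrow⟩
    simp only at hsvt hrow
    simp only [Prod.mk.injEq, true_and]
    have hnmem : (n + 1) ∉ T (0, e + t) := by
      intro hc; have := mem_bounds hsvt hc; omega
    rw [Function.update_self, Function.update_idem, Finset.sdiff_singleton_eq_erase,
      Finset.erase_insert hnmem, Function.update_eq_self]

lemma ncard_b (n t m : ℕ) (hm : 1 ≤ m) :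
    (Sb n (t + 1) m).ncard = (SVTSet n t (m - 1)).ncard := by
  classical
  apply ncard_eq_of_maps
    (fun x => (x.1, Function.update x.2 (0, x.1 + t + 1) ∅))
    (fun y => (y.1, Function.update y.2 (0, y.1 + t + 1) {n + 1}))
  · rintro ⟨e, T⟩ ⟨⟨hsvt, hrow⟩, hb⟩
    simp only at hsvt hrow hb
    have hb' : T (0, e + t + 1) = {n + 1} := hb
    refine ⟨isSVT_removecell_b hsvt hb', ?_⟩
    show rowEntries (e + t) 0 (Function.update T (0, e + t + 1) ∅) = m - 1
    rw [rowEntries_update_out (by omega)]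
    have h1 : rowEntries (e + t + 1) 0 T = rowEntries (e + t) 0 T + (T (0, e + t + 1)).card :=
      rowEntries_succ
    have h2 : rowEntries (e + (t + 1)) 0 T = m := hrow
    have h3 : (T (0, e + t + 1)).card = 1 := by rw [hb']; exact Finset.card_singleton _
    have h4 : rowEntries (e + (t + 1)) 0 T = rowEntries (e + t + 1) 0 T := rfl
    omega
  · rintro ⟨e, T⟩ ⟨hsvt, hrow⟩
    simp only at hsvt hrow
    have hempty : T (0, e + t + 1) = ∅ := by
      apply hsvt.1
      rw [inShape_iff]
      simp only []
      omega
    refine ⟨⟨isSVT_addcell_b hsvt, ?_⟩, ?_⟩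
    · show rowEntries (e + (t + 1)) 0 (Function.update T (0, e + t + 1) {n + 1}) = m
      have h4 : rowEntries (e + (t + 1)) 0 (Function.update T (0, e + t + 1) {n + 1})
          = rowEntries (e + t + 1) 0 (Function.update T (0, e + t + 1) {n + 1}) := rfl
      rw [h4, rowEntries_succ, rowEntries_update_out (by omega), Function.update_self]
      rw [Finset.card_singleton]
      omega
    · show Function.update T (0, e + t + 1) {n + 1} (0, e + (t + 1)) = {n + 1}
      exact Function.update_self _ _ _
  · rintro ⟨e, T⟩ ⟨⟨hsvt, hrow⟩, hb⟩
    simp only at hsvt hrow hb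
    have hb' : T (0, e + t + 1) = {n + 1} := hb
    simp only [Prod.mk.injEq, true_and]
    rw [Function.update_idem, ← hb', Function.update_eq_self]
  · rintro ⟨e, T⟩ ⟨hsvt, hrow⟩
    simp only at hsvt hrow
    have hempty : T (0, e + t + 1) = ∅ := by
      apply hsvt.1
      rw [inShape_iff]
      simp only []
      omega
    simp only [Prod.mk.injEq, true_and]
    rw [Function.update_idem, ← hempty, Function.update_eq_self]

lemma ncard_d (n t m : ℕ) :
    (Sd n t m).ncard = (SVTSet n (t + 1) m).ncard := by
  classical
  apply ncard_eq_of_maps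
    (fun x => (x.1 - 1, Function.update x.2 (1, x.1) ∅))
    (fun y => (y.1 + 1, Function.update y.2 (1, y.1 + 1) {n + 1}))
  · rintro ⟨e, T⟩ ⟨⟨hsvt, hrow⟩, hd⟩
    simp only at hsvt hrow hd
    have hmem : (n + 1) ∈ T (1, e) := by rw [hd]; exact Finset.mem_singleton_self _
    have he : 1 ≤ e := by
      have hs := mem_shape hsvt hmem
      rw [inShape_iff] at hs
      simp only at hs
      omega
    obtain ⟨e', rfl⟩ : ∃ e', e = e' + 1 := ⟨e - 1, by omega⟩
    refine ⟨isSVT_removecell_d hsvt hd, ?_⟩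
    show rowEntries (e' + 1 - 1 + (t + 1)) 0 (Function.update T (1, e' + 1) ∅) = m
    rw [rowEntries_update_ne (by simp)]
    have : e' + 1 - 1 + (t + 1) = e' + 1 + t := by omega
    rw [this]
    exact hrow
  · rintro ⟨e', T⟩ ⟨hsvt, hrow⟩
    simp only at hsvt hrow
    have hempty : T (1, e' + 1) = ∅ := by
      apply hsvt.1
      rw [inShape_iff]
      simp only []
      omega
    refine ⟨⟨isSVT_addcell_d hsvt, ?_⟩, ?_⟩
    · show rowEntries (e' + 1 + t) 0 (Function.update T (1, e' + 1) {n + 1}) = m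
      rw [rowEntries_update_ne (by simp)]
      have : e' + 1 + t = e' + (t + 1) := by omega
      rw [this]
      exact hrow
    · show Function.update T (1, e' + 1) {n + 1} (1, e' + 1) = {n + 1}
      exact Function.update_self _ _ _
  · rintro ⟨e, T⟩ ⟨⟨hsvt, hrow⟩, hd⟩
    simp only at hsvt hrow hd
    have hmem : (n + 1) ∈ T (1, e) := by rw [hd]; exact Finset.mem_singleton_self _
    have he : 1 ≤ e := by
      have hs := mem_shape hsvt hmem
      rw [inShape_iff] at hs
      simp only at hs
      omega
    obtain ⟨e', rfl⟩ : ∃ e', e = e' + 1 := ⟨e - 1, by omega⟩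
    simp only [Prod.mk.injEq]
    constructor
    · omega
    · show Function.update (Function.update T (1, e' + 1) ∅) (1, e' + 1 - 1 + 1) {n + 1} = T
      have h5 : e' + 1 - 1 + 1 = e' + 1 := by omega
      rw [h5, Function.update_idem, ← hd, Function.update_eq_self]
  · rintro ⟨e', T⟩ ⟨hsvt, hrow⟩
    simp only at hsvt hrow
    have hempty : T (1, e' + 1) = ∅ := by
      apply hsvt.1
      rw [inShape_iff]
      simp only []
      omega
    simp only [Prod.mk.injEq]
    constructor
    · omega
    · show Function.update (Function.update T (1, e' + 1) {n + 1}) (1, e' + 1) ∅ = T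
      rw [Function.update_idem, ← hempty, Function.update_eq_self]

end Recursion
section Assembly

lemma partition (n t m : ℕ) :
    SVTSet (n + 1) t m = Sa n t m ∪ Sb n t m ∪ Sc n t m ∪ Sd n t m := by
  ext x
  constructor
  · intro hx
    obtain ⟨e, T⟩ := x
    have hsvt := hx.1
    simp only at hsvt
    obtain ⟨p, hp, -⟩ := hsvt.2.2.2.1 (n + 1) (Finset.mem_Icc.mpr ⟨by omega, le_refl _⟩)
    rcases max_cell hsvt hp with rfl | rfl
    · by_cases hb : T (0, e + t) = {n + 1}
      · exact Or.inl (Or.inl (Or.inr ⟨hx, hb⟩))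
      · exact Or.inl (Or.inl (Or.inl ⟨hx, hp, hb⟩))
    · by_cases hd : T (1, e) = {n + 1}
      · exact Or.inr ⟨hx, hd⟩
      · exact Or.inl (Or.inr ⟨hx, hp, hd⟩)
  · rintro (((h | h) | h) | h) <;> exact h.1

lemma disj_cells {n e t : ℕ} {T : ℕ × ℕ → Finset ℕ} (hsvt : IsSVT (n + 1) e t 0 T)
    (h1 : (n + 1) ∈ T (0, e + t)) (h2 : (n + 1) ∈ T (1, e)) : False := by
  have := cell_unique hsvt h1 h2
  simp at this

lemma disjointness (n t m : ℕ) :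
    Disjoint (Sa n t m) (Sb n t m) ∧ Disjoint (Sa n t m ∪ Sb n t m) (Sc n t m) ∧
      Disjoint (Sa n t m ∪ Sb n t m ∪ Sc n t m) (Sd n t m) := by
  refine ⟨?_, ?_, ?_⟩
  · rw [Set.disjoint_left]
    rintro ⟨e, T⟩ ⟨-, -, hne⟩ ⟨-, hb⟩
    exact hne hb
  · rw [Set.disjoint_left]
    rintro ⟨e, T⟩ hab ⟨hx, hc, -⟩
    simp only at hc
    rcases hab with ⟨hx', ha, -⟩ | ⟨hx', hb⟩
    · simp only at ha
      exact disj_cells hx.1 ha hc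
    · simp only at hb
      exact disj_cells hx.1
        (by show (n + 1) ∈ T (0, e + t); rw [hb]; exact Finset.mem_singleton_self _) hc
  · rw [Set.disjoint_left]
    rintro ⟨e, T⟩ habc ⟨hx, hd⟩
    simp only at hd
    have hd' : (n + 1) ∈ T (1, e) := by rw [hd]; exact Finset.mem_singleton_self _
    rcases habc with (⟨hx', ha, -⟩ | ⟨hx', hb⟩) | ⟨hx', hc, hcne⟩
    · simp only at ha
      exact disj_cells hx.1 ha hd'
    · simp only at hb
      exact disj_cells hx.1
        (by show (n + 1) ∈ T (0, e + t); rw [hb]; exact Finset.mem_singleton_self _) hd'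
    · simp only at hcne
      exact hcne hd

lemma Sab_empty_t0 (n m : ℕ) : Sa n 0 m = ∅ ∧ Sb n 0 m = ∅ := by
  constructor
  · rw [Set.eq_empty_iff_forall_notMem]
    rintro ⟨e, T⟩ ⟨hx, ha, -⟩
    simp only at ha
    have := not_row0_of_t0 hx.1 (by omega) ha
    simp at this
  · rw [Set.eq_empty_iff_forall_notMem]
    rintro ⟨e, T⟩ ⟨hx, hb⟩
    simp only at hb
    have hb' : (n + 1) ∈ T (0, e + 0) := by rw [hb]; exact Finset.mem_singleton_self _
    have := not_row0_of_t0 hx.1 (by omega) hb'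
    simp at this

lemma sc_target (n t m : ℕ) (hn : 1 ≤ n) :
    {y ∈ SVTSet n t m | 1 ≤ y.1}.ncard
      = if m = n then 0 else (SVTSet n t m).ncard := by
  by_cases hmn : m = n
  · rw [if_pos hmn]
    have : {y ∈ SVTSet n t m | 1 ≤ y.1} = ∅ := by
      rw [Set.eq_empty_iff_forall_notMem]
      rintro ⟨e, T⟩ ⟨⟨hsvt, hrow⟩, he⟩
      simp only at hsvt hrow he
      have := (e0_iff hsvt hrow hn).mpr hmn
      omega
    rw [this, Set.ncard_empty]
  · rw [if_neg hmn]
    congr 1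
    ext ⟨e, T⟩
    constructor
    · rintro ⟨hy, -⟩; exact hy
    · intro hy
      refine ⟨hy, ?_⟩
      show 1 ≤ e
      by_contra he
      have he0 : e = 0 := by omega
      exact hmn ((e0_iff hy.1 hy.2 hn).mp he0)

lemma Arec (n m t : ℕ) (hn : 1 ≤ n) (hm : 1 ≤ m) :
    (SVTSet (n + 1) t m).ncard
      = (if 1 ≤ t then (SVTSet n t (m - 1)).ncard + (SVTSet n (t - 1) (m - 1)).ncard else 0)
        + (if m = n then 0 else (SVTSet n t m).ncard) + (SVTSet n (t + 1) m).ncard := by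
  have hfinS := svt_finite (n + 1) t m (by omega)
  have hfina : (Sa n t m).Finite := hfinS.subset (fun x hx => hx.1)
  have hfinb : (Sb n t m).Finite := hfinS.subset (fun x hx => hx.1)
  have hfinc : (Sc n t m).Finite := hfinS.subset (fun x hx => hx.1)
  have hfind : (Sd n t m).Finite := hfinS.subset (fun x hx => hx.1)
  obtain ⟨d1, d2, d3⟩ := disjointness n t m
  have hcard : (SVTSet (n + 1) t m).ncard
      = (Sa n t m).ncard + (Sb n t m).ncard + (Sc n t m).ncard + (Sd n t m).ncard := by
    rw [partition n t m]
    rw [Set.ncard_union_eq d3 ((hfina.union hfinb).union hfinc) hfind,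
      Set.ncard_union_eq d2 (hfina.union hfinb) hfinc,
      Set.ncard_union_eq d1 hfina hfinb]
  rw [hcard, ncard_c, sc_target n t m hn, ncard_d]
  by_cases ht : 1 ≤ t
  · obtain ⟨t', rfl⟩ : ∃ t', t = t' + 1 := ⟨t - 1, by omega⟩
    rw [if_pos ht, ncard_a n (t' + 1) m ht hm, ncard_b n t' m hm]
    have : (t' + 1) - 1 = t' := by omega
    rw [this]
    all_goals ring
  · have ht0 : t = 0 := by omega
    subst ht0
    obtain ⟨ha0, hb0⟩ := Sab_empty_t0 n m
    rw [if_neg ht, ha0, hb0, Set.ncard_empty]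
    all_goals omega

end Assembly
section Base

lemma ncard_m0 (n t : ℕ) (hn : 1 ≤ n) : (SVTSet n t 0).ncard = 0 := by
  have : SVTSet n t 0 = ∅ := by
    rw [Set.eq_empty_iff_forall_notMem]
    rintro ⟨e, T⟩ ⟨hsvt, hrow⟩
    simp only at hsvt hrow
    have := rowEntries0_pos hsvt hn
    omega
  rw [this, Set.ncard_empty]

lemma svt_one_char {e t m : ℕ} {T : ℕ × ℕ → Finset ℕ}
    (hx : (e, T) ∈ SVTSet 1 t m) :
    e = 0 ∧ t = 1 ∧ m = 1 ∧ T = fun p => if p = (0, 1) then {1} else ∅ := by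
  obtain ⟨hsvt, hrow⟩ := hx
  simp only at hsvt hrow
  have huniq : ∀ p, (T p).Nonempty → 1 ∈ T p := by
    intro p ⟨k, hk⟩
    have := mem_bounds hsvt hk
    have hk1 : k = 1 := by omega
    rwa [hk1] at hk
  have he : e = 0 := by
    by_contra he
    have he1 : 1 ≤ e := by omega
    have h1 : (T (0, 1)).Nonempty := hsvt.2.1 (0, 1) (by rw [inShape_iff]; left; exact ⟨rfl, le_refl 1, by omega⟩)
    have h2 : (T (1, 1)).Nonempty := hsvt.2.1 (1, 1) (by rw [inShape_iff]; right; exact ⟨rfl, le_refl 1, he1⟩)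
    have := cell_unique hsvt (huniq _ h1) (huniq _ h2)
    simp at this
  subst he
  have het := et_pos hsvt (le_refl 1)
  have ht : t = 1 := by
    by_contra ht
    have ht2 : 2 ≤ t := by omega
    have h1 : (T (0, 1)).Nonempty := hsvt.2.1 (0, 1) (by rw [inShape_iff]; left; exact ⟨rfl, le_refl 1, by omega⟩)
    have h2 : (T (0, 2)).Nonempty := hsvt.2.1 (0, 2) (by rw [inShape_iff]; left; exact ⟨rfl, by omega, by omega⟩)
    have := cell_unique hsvt (huniq _ h1) (huniq _ h2)
    simp at this
  subst ht
  have hT : T = fun p => if p = (0, 1) then {1} else ∅ := by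
    funext p
    by_cases hp : p = (0, 1)
    · subst hp
      rw [if_pos rfl]
      have h1 : (T (0, 1)).Nonempty := hsvt.2.1 (0, 1) (by rw [inShape_iff]; left; exact ⟨rfl, le_refl 1, by omega⟩)
      have hsub : T (0, 1) ⊆ {1} := by
        intro k hk
        have := mem_bounds hsvt hk
        rw [Finset.mem_singleton]; omega
      rcases Finset.subset_singleton_iff.mp hsub with h | h
      · rw [h] at h1; exact absurd h1 Finset.not_nonempty_empty
      · exact h
    · rw [if_neg hp]
      apply hsvt.1
      intro hc
      apply hp
      obtain ⟨r, j⟩ := p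
      rw [inShape_iff] at hc
      simp only [Prod.mk.injEq] at hc ⊢
      omega
  have hm : m = 1 := by
    rw [← hrow, hT]
    unfold rowEntries
    rw [show (0 + 1) + 1 = 2 from rfl, Finset.sum_range_succ, Finset.sum_range_one]
    norm_num [Prod.ext_iff]
  exact ⟨rfl, rfl, hm, hT⟩

lemma ncard_one (t m : ℕ) :
    (SVTSet 1 t m).ncard = if m = 1 ∧ t = 1 then 1 else 0 := by
  classical
  by_cases h : m = 1 ∧ t = 1
  · obtain ⟨rfl, rfl⟩ : m = 1 ∧ t = 1 := h
    rw [if_pos ⟨rfl, rfl⟩]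
    have hset : SVTSet 1 1 1 = {(0, fun p => if p = (0, 1) then {1} else ∅)} := by
      ext ⟨e, T⟩
      constructor
      · intro hx
        obtain ⟨he, -, -, hT⟩ := svt_one_char hx
        rw [Set.mem_singleton_iff, Prod.mk.injEq]
        exact ⟨he, hT⟩
      · intro hx
        rw [Set.mem_singleton_iff, Prod.mk.injEq] at hx
        obtain ⟨rfl, rfl⟩ := hx
        constructor
        · refine ⟨?_, ?_, ?_, ?_, ?_⟩
          · intro p hp
            show (if p = (0, 1) then ({1} : Finset ℕ) else ∅) = ∅
            rw [if_neg]
            intro hc; subst hc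
            exact hp (by rw [inShape_iff]; left; exact ⟨rfl, le_refl 1, by omega⟩)
          · intro p hp
            have hp1 : p = (0, 1) := by
              obtain ⟨r, j⟩ := p
              rw [inShape_iff] at hp
              simp only [Prod.mk.injEq] at hp ⊢
              omega
            subst hp1
            show (if ((0 : ℕ), (1 : ℕ)) = (0, 1) then ({1} : Finset ℕ) else ∅).Nonempty
            rw [if_pos rfl]
            exact Finset.singleton_nonempty 1
          · intro p k hk
            replace hk : k ∈ (if p = (0, 1) then ({1} : Finset ℕ) else ∅) := hk
            by_cases hp : p = (0, 1)
            · subst hp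
              rw [if_pos rfl] at hk
              rw [Finset.mem_singleton] at hk
              subst hk
              exact Finset.mem_Icc.mpr ⟨le_refl 1, le_refl 1⟩
            · rw [if_neg hp] at hk
              exact absurd hk (Finset.notMem_empty k)
          · intro k hk
            rw [Finset.mem_Icc] at hk
            have hk1 : k = 1 := by omega
            subst hk1
            refine ⟨(0, 1), ?_, ?_⟩
            · show 1 ∈ (if ((0:ℕ), (1:ℕ)) = (0, 1) then ({1} : Finset ℕ) else ∅)
              rw [if_pos rfl]
              exact Finset.mem_singleton_self 1
            · intro q hq
              replace hq : 1 ∈ (if q = (0, 1) then ({1} : Finset ℕ) else ∅) := hq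
              by_cases hq1 : q = (0, 1)
              · exact hq1
              · rw [if_neg hq1] at hq
                exact absurd hq (Finset.notMem_empty 1)
          · intro p q hp hq hpq h1 h2 a ha b hb
            exfalso
            have hp1 : p = (0, 1) := by
              obtain ⟨r, j⟩ := p
              rw [inShape_iff] at hp
              simp only [Prod.mk.injEq] at hp ⊢
              omega
            have hq1 : q = (0, 1) := by
              obtain ⟨r, j⟩ := q
              rw [inShape_iff] at hq
              simp only [Prod.mk.injEq] at hq ⊢
              omega
            exact hpq (hp1.trans hq1.symm)
        · show rowEntries (0 + 1) 0 _ = 1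
          unfold rowEntries
          rw [show (0 + 1) + 1 = 2 from rfl, Finset.sum_range_succ, Finset.sum_range_one]
          norm_num [Prod.ext_iff]
    rw [hset, Set.ncard_singleton]
  · rw [if_neg h]
    have : SVTSet 1 t m = ∅ := by
      rw [Set.eq_empty_iff_forall_notMem]
      rintro ⟨e, T⟩ hx
      obtain ⟨-, ht, hm, -⟩ := svt_one_char hx
      exact h ⟨hm, ht⟩
    rw [this, Set.ncard_empty]

end Base

section Main

open SVTAlg

lemma Rz_m0 {k : ℤ} (hk : 1 ≤ k) {t : ℤ} (ht : 0 ≤ t) : Rz k 0 t = 0 := by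
  unfold Rz
  rw [if_neg (by omega : ¬ (0:ℤ) = k), if_pos (by omega : (0:ℤ) < k),
    zchoose_neg (by omega : (0:ℤ) - t - 1 < 0)]
  push_cast
  ring

lemma main_count (n : ℕ) (hn : 1 ≤ n) : ∀ m t : ℕ,
    ((SVTSet n t m).ncard : ℚ) = Rz (n : ℤ) (m : ℤ) (t : ℤ) := by
  induction n, hn using Nat.le_induction with
  | base =>
    intro m t
    rw [ncard_one, Nat.cast_one, Rz_one, zchoose_zero_left]
    by_cases hm : m = 1
    · subst hm
      by_cases ht : t = 1
      · subst ht
        rw [if_pos ⟨rfl, rfl⟩, if_pos (by norm_num), if_pos (by norm_num)]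
        norm_num
      · rw [if_neg (by simp [ht]), if_pos (by norm_num),
          if_neg (by omega : ¬ ((t:ℤ) - 1 = 0))]
        norm_num
    · rw [if_neg (by simp [hm]), if_neg (by omega : ¬ ((m:ℤ) = 1))]
      norm_num
  | succ n hn ih =>
    intro m t
    by_cases hm : 1 ≤ m
    · have hcast : ((n + 1 : ℕ) : ℤ) = (n : ℤ) + 1 := by push_cast; ring
      have key : Rz ((n:ℤ) + 1) (m:ℤ) (t:ℤ)
          = (if 1 ≤ (t:ℤ) then Rz (n:ℤ) ((m:ℤ) - 1) (t:ℤ)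
              + Rz (n:ℤ) ((m:ℤ) - 1) ((t:ℤ) - 1) else 0)
            + (if (m:ℤ) = (n:ℤ) then 0 else Rz (n:ℤ) (m:ℤ) (t:ℤ))
            + Rz (n:ℤ) (m:ℤ) ((t:ℤ) + 1) := by
        rcases eq_or_lt_of_le hn with h1 | h1
        · have hn1 : (n : ℤ) = 1 := by omega
          rw [hn1, show ((1:ℤ) + 1) = 2 from by norm_num]
          exact Rz_rec_one (by omega) (by omega)
        · exact Rz_rec (by omega) (by omega) (by omega)
      rw [Arec n m t hn hm, hcast, key]
      have e1 : ((SVTSet n t (m - 1)).ncard : ℚ) = Rz (n:ℤ) ((m:ℤ) - 1) (t:ℤ) := by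
        rw [ih (m - 1) t, show (((m - 1 : ℕ)) : ℤ) = (m:ℤ) - 1 from by omega]
      have e3 : ((SVTSet n t m).ncard : ℚ) = Rz (n:ℤ) (m:ℤ) (t:ℤ) := ih m t
      have e4 : ((SVTSet n (t + 1) m).ncard : ℚ) = Rz (n:ℤ) (m:ℤ) ((t:ℤ) + 1) := by
        rw [ih m (t + 1), show (((t + 1 : ℕ)) : ℤ) = (t:ℤ) + 1 from by push_cast; ring]
      by_cases ht : 1 ≤ t
      · have e2 : ((SVTSet n (t - 1) (m - 1)).ncard : ℚ)
            = Rz (n:ℤ) ((m:ℤ) - 1) ((t:ℤ) - 1) := by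
          rw [ih (m - 1) (t - 1), show (((m - 1 : ℕ)) : ℤ) = (m:ℤ) - 1 from by omega,
            show (((t - 1 : ℕ)) : ℤ) = (t:ℤ) - 1 from by omega]
        rw [if_pos ht, if_pos (show (1:ℤ) ≤ (t:ℤ) from by omega)]
        by_cases hmn : m = n
        · rw [if_pos hmn, if_pos (show (m:ℤ) = (n:ℤ) from by omega)]
          push_cast
          rw [e1, e2, e4]
          all_goals ring
        · rw [if_neg hmn, if_neg (show ¬ (m:ℤ) = (n:ℤ) from by omega)]
          push_cast
          rw [e1, e2, e3, e4]
          all_goals ring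
      · rw [if_neg ht, if_neg (show ¬ (1:ℤ) ≤ (t:ℤ) from by omega)]
        by_cases hmn : m = n
        · rw [if_pos hmn, if_pos (show (m:ℤ) = (n:ℤ) from by omega)]
          push_cast
          rw [e4]
          all_goals ring
        · rw [if_neg hmn, if_neg (show ¬ (m:ℤ) = (n:ℤ) from by omega)]
          push_cast
          rw [e3, e4]
          all_goals ring
    · have hm0 : m = 0 := by omega
      subst hm0
      rw [ncard_m0 (n + 1) t (by omega)]
      rw [show (((0:ℕ)) : ℤ) = 0 from rfl, Rz_m0 (by omega) (by omega)]
      norm_num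

end Main

end SVTComb

/-- The number of set-valued standard tableaux of shape `(e+t,e)`, for some
non-negative integer `e`, with `m` entries in the first row and `n` entries in total
equals `[m=n]·C(n-1,t-1) + [m<n]·(t/(n-1))·C(n,m)·C(n-1,m-t-1)
+ (1/(n-1))·C(n-1,m)·C(n-1,m-t-1)`. -/
theorem count_svt_firstRow (n m t : ℕ) (hn : 1 ≤ n) (hm : 1 ≤ m) :
    (Nat.card {p : ℕ × (ℕ × ℕ → Finset ℕ) //
        IsSVT n p.1 t 0 p.2 ∧ rowEntries (p.1 + t) 0 p.2 = m} : ℚ) =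
      (if m = n then 1 else 0) * (zchoose ((n : ℤ) - 1) ((t : ℤ) - 1) : ℚ)
        + (if m < n then 1 else 0) * ((t : ℚ) / ((n : ℚ) - 1))
            * (zchoose (n : ℤ) (m : ℤ) : ℚ) * (zchoose ((n : ℤ) - 1) ((m : ℤ) - t - 1) : ℚ)
        + (1 / ((n : ℚ) - 1)) * (zchoose ((n : ℤ) - 1) (m : ℤ) : ℚ)
            * (zchoose ((n : ℤ) - 1) ((m : ℤ) - t - 1) : ℚ) := by
  have h0 : Nat.card {p : ℕ × (ℕ × ℕ → Finset ℕ) //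
      IsSVT n p.1 t 0 p.2 ∧ rowEntries (p.1 + t) 0 p.2 = m}
      = (SVTComb.SVTSet n t m).ncard := Nat.card_coe_set_eq (SVTComb.SVTSet n t m)
  rw [h0, SVTComb.main_count n hn m t]
  simp only [SVTAlg.Rz, Int.cast_natCast, Nat.cast_inj, Nat.cast_lt]
end

section
/- Let f(z) be a formal Laurent/power series with f(0)=0 and f'(0)≠0, let F(z) be its compositional inverse, and let g(z) be a formal Laurent series with only finitely many negative-power terms. Then for every integer n, the coefficient of z^n in g(F(z)) equals the coefficient of z^{-1} in g(z)·f(z)^{-n-1}·f'(z). -/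
/-- Composition `g(F(z))` of formal power series (meaningful when `F` has zero
constant term): the coefficient of `z^n` is `Σ_{k ≤ n} g_k · [z^n] F^k`. -/
noncomputable def pcomp {R : Type*} [CommRing R] (g F : PowerSeries R) : PowerSeries R :=
  PowerSeries.mk fun n =>
    ∑ k ∈ Finset.range (n + 1), PowerSeries.coeff k g * PowerSeries.coeff n (F ^ k)

/-- The formal derivative of a power series. -/
noncomputable def pderiv {R : Type*} [CommRing R] (f : PowerSeries R) : PowerSeries R :=
  PowerSeries.mk fun n => (n + 1 : R) * PowerSeries.coeff (n + 1) f

namespace Lagrange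

open PowerSeries Finset HahnSeries

variable {K : Type*} [Field K]

/-- integer-indexed coefficient of a power series -/
noncomputable def cf (P : PowerSeries K) (d : ℤ) : K :=
  if 0 ≤ d then PowerSeries.coeff d.toNat P else 0

lemma cf_neg {P : PowerSeries K} {d : ℤ} (h : d < 0) : cf P d = 0 := by
  simp [cf, not_le.mpr h]

lemma cf_nonneg {P : PowerSeries K} {d : ℤ} (h : 0 ≤ d) :
    cf P d = PowerSeries.coeff d.toNat P := by simp [cf, h]

lemma cf_coe (P : PowerSeries K) (d : ℕ) : cf P (d : ℤ) = PowerSeries.coeff d P := by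
  simp [cf]

lemma cf_add (P Q : PowerSeries K) (d : ℤ) : cf (P + Q) (d) = cf P d + cf Q d := by
  unfold cf; split_ifs <;> simp

lemma cf_sub (P Q : PowerSeries K) (d : ℤ) : cf (P - Q) (d) = cf P d - cf Q d := by
  unfold cf; split_ifs <;> simp

lemma cf_sum {α : Type*} (t : Finset α) (c : α → K) (P : α → PowerSeries K) (d : ℤ) :
    cf (∑ k ∈ t, c k • P k) d = ∑ k ∈ t, c k * cf (P k) d := by
  unfold cf; split_ifs <;> simp

lemma cf_X_pow_mul (G : PowerSeries K) (k : ℕ) (d : ℤ) :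
    cf (X ^ k * G) d = cf G (d - k) := by
  by_cases h : 0 ≤ d - k
  · have hd : 0 ≤ d := by omega
    rw [cf_nonneg h, cf_nonneg hd]
    have : d.toNat = (d - k).toNat + k := by omega
    rw [this, coeff_X_pow_mul]
  · rw [cf_neg (show d - (k:ℤ) < 0 by omega)]
    by_cases hd : 0 ≤ d
    · rw [cf_nonneg hd]
      have hdk : d.toNat < k := by omega
      exact X_pow_dvd_iff.mp (dvd_mul_right _ _) _ hdk
    · rw [cf_neg (show d < 0 by omega)]

lemma cf_X_mul (G : PowerSeries K) (d : ℤ) : cf (X * G) d = cf G (d - 1) := by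
  simpa using cf_X_pow_mul G 1 d

lemma cf_mul_expand (P Q : PowerSeries K) (d : ℤ) (J : ℕ) (hJ : d < J) :
    cf (P * Q) d = ∑ k ∈ range J, PowerSeries.coeff k Q * cf P (d - k) := by
  by_cases h : 0 ≤ d
  · have hsub : range (d.toNat + 1) ⊆ range J := by
      apply Finset.range_subset_range.mpr; omega
    rw [cf_nonneg h, mul_comm P Q, PowerSeries.coeff_mul,
      Finset.Nat.sum_antidiagonal_eq_sum_range_succ
        (fun i j => PowerSeries.coeff i Q * PowerSeries.coeff j P) d.toNat,
      ← Finset.sum_subset hsub (by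
        intro k _ hk
        rw [Finset.mem_range] at hk
        rw [cf_neg (show d - (k:ℤ) < 0 by omega), mul_zero])]
    apply Finset.sum_congr rfl
    intro k hk
    rw [Finset.mem_range] at hk
    have h1 : 0 ≤ d - (k:ℤ) := by omega
    rw [cf_nonneg h1, show (d - (k:ℤ)).toNat = d.toNat - k from by omega]
  · rw [cf_neg (show d < 0 by omega), Finset.sum_eq_zero]
    intro k _
    rw [cf_neg (show d - (k:ℤ) < 0 by omega), mul_zero]

lemma pderiv_eq (g : PowerSeries K) : pderiv g = d⁄dX K g := by
  ext n
  rw [pderiv, coeff_mk, coeff_derivative]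
  ring

lemma coeff_pcomp (g F : PowerSeries K) (n : ℕ) :
    PowerSeries.coeff n (pcomp g F) =
      ∑ k ∈ range (n + 1), PowerSeries.coeff k g * PowerSeries.coeff n (F ^ k) := by
  rw [pcomp, coeff_mk]

lemma coeff_pow_eq_zero {F : PowerSeries K} (hF : constantCoeff F = 0) {k N : ℕ}
    (h : N < k) : PowerSeries.coeff N (F ^ k) = 0 :=
  X_pow_dvd_iff.mp (pow_dvd_pow_of_dvd (X_dvd_iff.mpr hF) k) N h

lemma coeff_pcomp_ext {F : PowerSeries K} (hF : constantCoeff F = 0) (g : PowerSeries K)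
    {N J : ℕ} (h : N < J) :
    PowerSeries.coeff N (pcomp g F) =
      ∑ k ∈ range J, PowerSeries.coeff k g * PowerSeries.coeff N (F ^ k) := by
  rw [coeff_pcomp]
  apply Finset.sum_subset (Finset.range_subset_range.mpr (by omega))
  intro k _ hk
  rw [Finset.mem_range] at hk
  rw [coeff_pow_eq_zero hF (by omega), mul_zero]

lemma pcomp_sum_mod {f : PowerSeries K} (hf : constantCoeff f = 0) (g : PowerSeries K)
    (J : ℕ) : ∃ E : PowerSeries K,
      (∑ k ∈ range J, PowerSeries.coeff k g • f ^ k) = pcomp g f + X ^ J * E := by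
  have hdvd : (X : PowerSeries K) ^ J ∣
      (∑ k ∈ range J, PowerSeries.coeff k g • f ^ k) - pcomp g f := by
    rw [X_pow_dvd_iff]
    intro N hN
    rw [map_sub, map_sum, sub_eq_zero, coeff_pcomp_ext hf g hN]
    apply Finset.sum_congr rfl
    intro k _
    rw [PowerSeries.coeff_smul, smul_eq_mul]
  obtain ⟨E, hE⟩ := hdvd
  exact ⟨E, by linear_combination hE⟩

lemma coeff_aeval_trunc {f : PowerSeries K} (hf : constantCoeff f = 0) (g : PowerSeries K)
    {N J : ℕ} (h : N < J) :
    PowerSeries.coeff N (pcomp g f) =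
      PowerSeries.coeff N (Polynomial.aeval f (trunc J g)) := by
  have hdeg : (trunc J g).natDegree < J := by
    by_cases h0 : trunc J g = 0
    · rw [h0]; simpa using by omega
    · exact Polynomial.natDegree_lt_iff_degree_lt h0 |>.mpr (by
        simpa using degree_trunc_lt g J)
  rw [Polynomial.aeval_eq_sum_range' hdeg, coeff_pcomp_ext hf g h, map_sum]
  apply Finset.sum_congr rfl
  intro k hk
  rw [Finset.mem_range] at hk
  rw [PowerSeries.coeff_smul, smul_eq_mul, coeff_trunc, if_pos hk]

lemma aeval_coeff_of_dvd {f : PowerSeries K} (hf : constantCoeff f = 0)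
    {p : Polynomial K} {J : ℕ} (hdvd : Polynomial.X ^ J ∣ p) {N : ℕ} (hN : N < J) :
    PowerSeries.coeff N (Polynomial.aeval f p) = 0 := by
  obtain ⟨q, rfl⟩ := hdvd
  rw [map_mul, map_pow, Polynomial.aeval_X]
  have : (X : PowerSeries K) ^ J ∣ f ^ J * Polynomial.aeval f q :=
    Dvd.dvd.mul_right (pow_dvd_pow_of_dvd (X_dvd_iff.mpr hf) J) _
  exact X_pow_dvd_iff.mp this N hN

lemma pcomp_mul {f : PowerSeries K} (hf : constantCoeff f = 0) (a b : PowerSeries K) :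
    pcomp (a * b) f = pcomp a f * pcomp b f := by
  ext N
  set J := N + 1 with hJ
  have hNJ : N < J := by omega
  rw [coeff_aeval_trunc hf (a * b) hNJ]
  have key : PowerSeries.coeff N (Polynomial.aeval f (trunc J (a * b)))
      = PowerSeries.coeff N (Polynomial.aeval f (trunc J a * trunc J b)) := by
    have hdvd : Polynomial.X ^ J ∣ (trunc J (a*b) - trunc J a * trunc J b) := by
      rw [Polynomial.X_pow_dvd_iff]
      intro d hd
      rw [Polynomial.coeff_sub, coeff_trunc, if_pos hd, Polynomial.coeff_mul,
        PowerSeries.coeff_mul, sub_eq_zero]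
      apply Finset.sum_congr rfl
      intro x hx
      rw [Finset.HasAntidiagonal.mem_antidiagonal] at hx
      rw [coeff_trunc, coeff_trunc, if_pos (by omega), if_pos (by omega)]
    have := aeval_coeff_of_dvd hf hdvd hNJ
    rw [map_sub, map_sub] at this
    exact sub_eq_zero.mp this
  rw [key, map_mul, PowerSeries.coeff_mul, PowerSeries.coeff_mul]
  apply Finset.sum_congr rfl
  intro x hx
  rw [Finset.HasAntidiagonal.mem_antidiagonal] at hx
  rw [← coeff_aeval_trunc hf a (show x.1 < J by omega),
    ← coeff_aeval_trunc hf b (show x.2 < J by omega)]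

lemma pcomp_one (f : PowerSeries K) : pcomp 1 f = 1 := by
  ext N
  rw [coeff_pcomp]
  rcases Nat.eq_zero_or_pos N with h | h
  · subst h; simp
  · rw [Finset.sum_eq_single 0]
    · simp
    · intro k _ hk
      rw [PowerSeries.coeff_one, if_neg hk, zero_mul]
    · intro h'; simp at h'

lemma pcomp_X {f : PowerSeries K} (hf : constantCoeff f = 0) : pcomp X f = f := by
  ext N
  rcases Nat.eq_zero_or_pos N with h | h
  · subst h
    rw [coeff_pcomp, Finset.sum_range_one]
    simp [hf]
  · rw [coeff_pcomp, Finset.sum_eq_single 1]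
    · simp
    · intro k _ hk
      rw [PowerSeries.coeff_X, if_neg hk, zero_mul]
    · intro h'
      rw [Finset.mem_range] at h'
      omega

lemma coeffI (P : PowerSeries K) (n : ℤ) :
    (HahnSeries.ofPowerSeries ℤ K P).coeff n = cf P n := by
  by_cases h : 0 ≤ n
  · lift n to ℕ using h
    rw [HahnSeries.ofPowerSeries_apply_coeff]
    simp [cf]
  · rw [cf_neg (by omega), HahnSeries.ofPowerSeries_apply, HahnSeries.embDomain_notin_range]
    simp only [Set.mem_range, RelEmbedding.coe_mk, Function.Embedding.coeFn_mk]
    rintro ⟨m, hm⟩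
    simp [Nat.castOrderEmbedding] at hm
    omega

lemma single_mul_ofPS_coeff (t : ℤ) (P : PowerSeries K) (n : ℤ) :
    ((HahnSeries.single t (1 : K)) * HahnSeries.ofPowerSeries ℤ K P).coeff n
      = cf P (n - t) := by
  have h := HahnSeries.coeff_single_mul_add (r := (1:K))
    (x := HahnSeries.ofPowerSeries ℤ K P) (a := n - t) (b := t)
  rw [show n - t + t = n by ring] at h
  rw [h, one_mul, coeffI]

lemma single_zero_one' : (HahnSeries.single (0:ℤ) (1:K)) = 1 := by
  rw [← HahnSeries.C_apply, HahnSeries.C_one]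

lemma zpow_NF (W : (PowerSeries K)ˣ) {g : PowerSeries K} (hg : g = X * (↑W : PowerSeries K))
    (t : ℤ) :
    (HahnSeries.ofPowerSeries ℤ K g) ^ t
      = HahnSeries.single t 1 * HahnSeries.ofPowerSeries ℤ K ↑(W ^ t) := by
  set ι := HahnSeries.ofPowerSeries ℤ K with hι
  have hgNF : ι g = HahnSeries.single 1 1 * ι ↑W := by
    rw [hg, map_mul, HahnSeries.ofPowerSeries_X]
  have hgne : ι g ≠ 0 := by
    intro h0
    have hg0 : g = 0 := HahnSeries.ofPowerSeries_injective (by rw [h0, map_zero])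
    rw [hg] at hg0
    rcases mul_eq_zero.mp hg0 with h | h
    · exact X_ne_zero h
    · exact Units.ne_zero W h
  have hinv : (ι g)⁻¹ = HahnSeries.single (-1) 1 * ι ↑(W⁻¹) := by
    refine (inv_eq_of_mul_eq_one_right ?_)
    rw [hgNF]
    calc HahnSeries.single 1 1 * ι ↑W * (HahnSeries.single (-1) 1 * ι ↑(W⁻¹))
        = (HahnSeries.single (1:ℤ) 1 * HahnSeries.single (-1) 1) * ι (↑W * ↑(W⁻¹)) := by
          rw [map_mul]; ring
      _ = 1 := by
          rw [HahnSeries.single_mul_single, Units.mul_inv, map_one, mul_one, mul_one,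
            show (1:ℤ) + -1 = 0 by ring, single_zero_one']
  induction t using Int.induction_on with
  | zero => simp [single_zero_one']
  | succ k ih =>
      rw [zpow_add_one₀ hgne, ih, hgNF]
      calc HahnSeries.single (k:ℤ) 1 * ι ↑(W ^ (k:ℤ)) * (HahnSeries.single 1 1 * ι ↑W)
          = (HahnSeries.single (k:ℤ) 1 * HahnSeries.single 1 1) * ι (↑(W ^ (k:ℤ)) * ↑W) := by
            rw [map_mul]; ring
        _ = HahnSeries.single ((k:ℤ)+1) 1 * ι ↑(W ^ ((k:ℤ)+1)) := by
            rw [HahnSeries.single_mul_single, one_mul, ← Units.val_mul, ← zpow_add_one]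
  | pred k ih =>
      rw [show (-(k:ℤ) - 1) = (-(k:ℤ)) - 1 by ring, zpow_sub_one₀ hgne, ih, hinv]
      calc HahnSeries.single (-(k:ℤ)) 1 * ι ↑(W ^ (-(k:ℤ))) *
            (HahnSeries.single (-1) 1 * ι ↑(W⁻¹))
          = (HahnSeries.single (-(k:ℤ)) 1 * HahnSeries.single (-1) 1)
              * ι (↑(W ^ (-(k:ℤ))) * ↑(W⁻¹)) := by rw [map_mul]; ring
        _ = HahnSeries.single (-(k:ℤ)-1) 1 * ι ↑(W ^ (-(k:ℤ)-1)) := by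
            rw [HahnSeries.single_mul_single, one_mul, ← Units.val_mul, ← zpow_sub_one,
              show (-(k:ℤ)) + -1 = -(k:ℤ) - 1 by ring]

section Star


variable [CharZero K] (Wu Wv : (PowerSeries K)ˣ) (f F : PowerSeries K)
variable (hfu : f = X * (↑Wu : PowerSeries K)) (hFv : F = X * (↑Wv : PowerSeries K))
variable (hFf : pcomp F f = X)

include hfu in
lemma uval_pow (j : ℕ) : f ^ j = X ^ j * (↑(Wu ^ (j:ℤ)) : PowerSeries K) := by
  rw [hfu, mul_pow, zpow_natCast, Units.val_pow_eq_pow_val]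

include hfu in
lemma hf0' : constantCoeff f = 0 := by
  rw [hfu, map_mul, constantCoeff_X, zero_mul]

lemma uval_add (a b : ℤ) :
    (↑(Wu ^ (a + b)) : PowerSeries K) = ↑(Wu ^ a) * ↑(Wu ^ b) := by
  rw [zpow_add, Units.val_mul]

include hfu in
lemma pderiv_f_eq :
    pderiv f = (↑Wu : PowerSeries K) + X * (d⁄dX K (↑Wu : PowerSeries K)) := by
  rw [pderiv_eq, hfu, Derivation.leibniz, derivative_X, smul_eq_mul, smul_eq_mul,
    mul_one, add_comm]

include hfu in
lemma basepos (d : ℕ) (hd : 1 ≤ d) :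
    PowerSeries.coeff d ((↑(Wu ^ (-(d:ℤ) - 1)) : PowerSeries K) * pderiv f) = 0 := by
  obtain ⟨e, rfl⟩ : ∃ e, d = e + 1 := ⟨d - 1, by omega⟩
  set u := (↑Wu : PowerSeries K) with hu
  set w := (↑(Wu⁻¹) : PowerSeries K) with hw
  set du := d⁄dX K u with hdu
  have hwu : w * u = 1 := by rw [hw, hu, ← Units.val_mul, inv_mul_cancel, Units.val_one]
  have hval : (↑(Wu ^ (-((e+1:ℕ):ℤ) - 1)) : PowerSeries K) = w ^ (e+2) := by
    rw [show -((e+1:ℕ):ℤ) - 1 = -((e+2 : ℕ) : ℤ) by push_cast; ring, zpow_neg, zpow_natCast,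
      ← inv_pow, Units.val_pow_eq_pow_val]
  have hdw := Derivation.leibniz_of_mul_eq_one (D := d⁄dX K) hwu
  rw [← hdu] at hdw
  rw [show (-((e+1:ℕ):ℤ) - 1) = -((e+1:ℕ):ℤ) - 1 from rfl] at hval ⊢
  rw [show ((e+1:ℕ):ℤ) = ((e:ℤ)+1) from by push_cast; ring] at hval ⊢
  rw [show (-((e:ℤ)+1) - 1) = -((e:ℤ)) - 2 by ring] at hval ⊢
  rw [hval, pderiv_f_eq Wu f hfu, ← hu, ← hdu, mul_add, map_add]
  have h1 : w ^ (e+2) * u = w ^ (e+1) := by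
    rw [pow_succ, mul_assoc, hwu, mul_one]
  have h2 : w ^ (e+2) * (X * du) = X * (w ^ (e+2) * du) := by ring
  rw [h1, h2, coeff_succ_X_mul]
  have hder : d⁄dX K (w ^ (e+1)) = -(((e+1 : ℕ) : PowerSeries K) * (w ^ (e+2) * du)) := by
    have hl := Derivation.leibniz_pow (d⁄dX K) (a := w) (e+1)
    rw [hdw] at hl
    simp only [smul_eq_mul, nsmul_eq_mul] at hl
    rw [hl]
    push_cast
    ring
  have hc1 : PowerSeries.coeff e (d⁄dX K (w ^ (e+1)))
      = PowerSeries.coeff (e+1) (w^(e+1)) * ((e:K)+1) := by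
    have := coeff_derivative (w ^ (e+1)) e
    push_cast at this
    exact this
  have hc2 : PowerSeries.coeff e (d⁄dX K (w ^ (e+1)))
      = -(((e+1:ℕ):K) * PowerSeries.coeff e (w^(e+2) * du)) := by
    rw [hder, map_neg,
      show ((e+1:ℕ) : PowerSeries K) = PowerSeries.C ((e+1:ℕ):K) from
        (map_natCast (PowerSeries.C (R := K)) (e+1)).symm, coeff_C_mul]
  have hE := hc1.symm.trans hc2
  have he : ((e:K)+1) ≠ 0 := by
    have : ((e+1 : ℕ) : K) ≠ 0 := Nat.cast_ne_zero.mpr e.succ_ne_zero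
    push_cast at this
    exact this
  apply mul_left_cancel₀ he
  push_cast at hE ⊢
  linear_combination hE

include hfu hFv hFf in
lemma star : ∀ s n : ℤ,
    cf ((↑(Wv ^ s) : PowerSeries K)) (n - s)
      = cf ((↑(Wu ^ (-n - 1)) : PowerSeries K) * pderiv f) (n - s) := by
  have hf0 : constantCoeff f = 0 := hf0' Wu f hfu
  have hF0 : PowerSeries.coeff 0 F = 0 := by
    rw [hFv, coeff_zero_eq_constantCoeff, map_mul, constantCoeff_X, zero_mul]
  have hFk : ∀ k' : ℕ, PowerSeries.coeff (k'+1) F = PowerSeries.coeff k' (↑Wv) := by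
    intro k'; rw [hFv, coeff_succ_X_mul]
  have hpv : (↑Wu : PowerSeries K) * pcomp (↑Wv) f = 1 := by
    have h1 : pcomp (X * (↑Wv : PowerSeries K)) f = X := by rw [← hFv]; exact hFf
    rw [pcomp_mul hf0, pcomp_X hf0] at h1
    have h1' : X * ((↑Wu : PowerSeries K) * pcomp (↑Wv) f) = X * 1 := by
      rw [mul_one, ← mul_assoc, ← hfu]; exact h1
    exact mul_left_cancel₀ X_ne_zero h1'
  have hpwv : pcomp (↑(Wv⁻¹) : PowerSeries K) f = (↑Wu : PowerSeries K) := by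
    have h2 : pcomp (↑(Wv⁻¹) : PowerSeries K) f * pcomp (↑Wv) f = 1 := by
      rw [← pcomp_mul hf0, ← Units.val_mul, inv_mul_cancel, Units.val_one, pcomp_one]
    calc pcomp (↑(Wv⁻¹) : PowerSeries K) f
        = pcomp (↑(Wv⁻¹) : PowerSeries K) f * ((↑Wu : PowerSeries K) * pcomp (↑Wv) f) := by
          rw [hpv, mul_one]
      _ = (↑Wu : PowerSeries K) * (pcomp (↑(Wv⁻¹) : PowerSeries K) f * pcomp (↑Wv) f) := by
          ring
      _ = ↑Wu := by rw [h2, mul_one]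
  intro s
  induction s using Int.induction_on with
  | zero =>
      intro n
      rcases lt_trichotomy n 0 with hn | hn | hn
      · rw [cf_neg (by omega), cf_neg (by omega)]
      · subst hn
        rw [zpow_zero, Units.val_one, sub_zero]
        rw [cf_nonneg le_rfl, cf_nonneg le_rfl]
        simp only [Int.toNat_zero, coeff_zero_eq_constantCoeff, map_one, map_mul]
        have h3 : (↑(Wu ^ (-0 - 1 : ℤ)) : PowerSeries K) = ↑(Wu⁻¹) := by
          norm_num
        rw [h3, pderiv_f_eq Wu f hfu, map_add, map_mul, constantCoeff_X, zero_mul, add_zero,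
          ← map_mul, ← Units.val_mul, inv_mul_cancel, Units.val_one, map_one]
      · rw [zpow_zero, Units.val_one, sub_zero, cf_nonneg (by omega),
          cf_nonneg (by omega), PowerSeries.coeff_one, if_neg (by omega),
          show (-n - 1 : ℤ) = -((n.toNat : ℕ) : ℤ) - 1 by omega,
          basepos Wu f hfu n.toNat (by omega)]
  | succ k ih =>
      intro n
      set s : ℤ := (k : ℤ) with hs
      set G : PowerSeries K := (↑(Wu ^ (-n - 1)) : PowerSeries K) * pderiv f with hG
      set J : ℕ := (n - s).toNat with hJdef
      obtain ⟨E, hE⟩ := pcomp_sum_mod hf0 F (J+1)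
      have hA : cf ((↑(Wv ^ (s+1)) : PowerSeries K)) (n - (s+1))
          = ∑ k' ∈ range J, PowerSeries.coeff k' (↑Wv : PowerSeries K)
              * cf ((↑(Wv ^ s) : PowerSeries K)) (n - s - 1 - k') := by
        rw [show ((↑(Wv ^ (s+1)) : PowerSeries K)) = ↑(Wv ^ s) * ↑Wv from by
              rw [zpow_add_one, Units.val_mul],
          show n - (s+1) = n - s - 1 by ring]
        exact cf_mul_expand _ _ _ J (by omega)
      have hB : ∀ k' : ℕ,
          cf ((↑(Wu ^ (-(n-1-(k':ℤ)) - 1)) : PowerSeries K) * pderiv f) (n - 1 - k' - s)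
            = cf ((f ^ (k'+1)) * G) (n - s) := by
        intro k'
        rw [hG, uval_pow Wu f hfu (k'+1), mul_assoc, cf_X_pow_mul, ← mul_assoc,
          ← uval_add, show (((k'+1:ℕ)):ℤ) + (-n-1) = -(n-1-(k':ℤ)) - 1 by push_cast; ring,
          show n - s - (((k'+1:ℕ)):ℤ) = n - 1 - k' - s by push_cast; ring]
      rw [hA]
      calc ∑ k' ∈ range J, PowerSeries.coeff k' (↑Wv : PowerSeries K)
              * cf ((↑(Wv ^ s) : PowerSeries K)) (n - s - 1 - k')
          = ∑ k' ∈ range J, PowerSeries.coeff k' (↑Wv : PowerSeries K)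
              * cf ((f ^ (k'+1)) * G) (n - s) := by
            apply Finset.sum_congr rfl
            intro k' _
            rw [show n - s - 1 - (k':ℤ) = (n - 1 - k') - s by ring, ih (n - 1 - k'), hB k']
        _ = cf ((∑ k' ∈ range J,
              PowerSeries.coeff k' (↑Wv : PowerSeries K) • f ^ (k'+1)) * G) (n - s) := by
            rw [Finset.sum_mul, ← cf_sum]
            congr 1
            apply Finset.sum_congr rfl
            intro k' _
            rw [smul_mul_assoc]
        _ = cf ((∑ j ∈ range (J+1), PowerSeries.coeff j F • f ^ j) * G) (n - s) := by
            rw [Finset.sum_range_succ' (fun j => PowerSeries.coeff j F • f ^ j) J]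
            rw [hF0, zero_smul, add_zero]
            congr 2
            apply Finset.sum_congr rfl
            intro k' _
            rw [hFk]
        _ = cf ((X + X^(J+1) * E) * G) (n - s) := by rw [hE, hFf]
        _ = cf (X * G) (n - s) + cf (X^(J+1) * (E * G)) (n - s) := by
            rw [add_mul, mul_assoc, cf_add]
        _ = cf G (n - s - 1) := by
            rw [cf_X_mul, cf_X_pow_mul,
              cf_neg (show n - s - ((J+1:ℕ):ℤ) < 0 by push_cast; omega), add_zero]
        _ = cf ((↑(Wu ^ (-n - 1)) : PowerSeries K) * pderiv f) (n - (s+1)) := by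
            rw [hG, show n - s - 1 = n - (s+1) by ring]
  | pred k ih =>
      intro n
      set s : ℤ := (-k : ℤ) with hs
      set G : PowerSeries K := (↑(Wu ^ (-n - 2)) : PowerSeries K) * pderiv f with hG
      set J : ℕ := (n - s).toNat + 2 with hJdef
      obtain ⟨E, hE⟩ := pcomp_sum_mod hf0 (↑(Wv⁻¹) : PowerSeries K) J
      have hA : cf ((↑(Wv ^ (s-1)) : PowerSeries K)) (n - (s-1))
          = ∑ k' ∈ range J, PowerSeries.coeff k' (↑(Wv⁻¹) : PowerSeries K)
              * cf ((↑(Wv ^ s) : PowerSeries K)) (n - s + 1 - k') := by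
        rw [show ((↑(Wv ^ (s-1)) : PowerSeries K)) = ↑(Wv ^ s) * ↑(Wv⁻¹) from by
              rw [zpow_sub_one, Units.val_mul],
          show n - (s-1) = n - s + 1 by ring]
        exact cf_mul_expand _ _ _ J (by omega)
      have hB : ∀ k' : ℕ,
          cf ((↑(Wu ^ (-(n+1-(k':ℤ)) - 1)) : PowerSeries K) * pderiv f) (n + 1 - k' - s)
            = cf ((f ^ k') * G) (n - s + 1) := by
        intro k'
        rw [hG, uval_pow Wu f hfu k', mul_assoc, cf_X_pow_mul, ← mul_assoc,
          ← uval_add, show ((k':ℕ):ℤ) + (-n-2) = -(n+1-(k':ℤ)) - 1 by push_cast; ring,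
          show n - s + 1 - ((k':ℕ):ℤ) = n + 1 - k' - s by push_cast; ring]
      rw [show (-(k:ℤ) - 1) = s - 1 by rw [hs], hA]
      calc ∑ k' ∈ range J, PowerSeries.coeff k' (↑(Wv⁻¹) : PowerSeries K)
              * cf ((↑(Wv ^ s) : PowerSeries K)) (n - s + 1 - k')
          = ∑ k' ∈ range J, PowerSeries.coeff k' (↑(Wv⁻¹) : PowerSeries K)
              * cf ((f ^ k') * G) (n - s + 1) := by
            apply Finset.sum_congr rfl
            intro k' _
            rw [show n - s + 1 - (k':ℤ) = (n + 1 - k') - s by ring, ih (n + 1 - k'), hB k']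
        _ = cf ((∑ k' ∈ range J,
              PowerSeries.coeff k' (↑(Wv⁻¹) : PowerSeries K) • f ^ k') * G) (n - s + 1) := by
            rw [Finset.sum_mul, ← cf_sum]
            congr 1
            apply Finset.sum_congr rfl
            intro k' _
            rw [smul_mul_assoc]
        _ = cf (((↑Wu : PowerSeries K) + X^J * E) * G) (n - s + 1) := by rw [hE, hpwv]
        _ = cf ((↑Wu : PowerSeries K) * G) (n - s + 1) + cf (X^J * (E * G)) (n - s + 1) := by
            rw [add_mul, mul_assoc, cf_add]
        _ = cf ((↑Wu : PowerSeries K) * G) (n - s + 1) := by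
            rw [cf_X_pow_mul, cf_neg (show n - s + 1 - ((J:ℕ):ℤ) < 0 by push_cast; omega),
              add_zero]
        _ = cf ((↑(Wu ^ (-n - 1)) : PowerSeries K) * pderiv f) (n - (s-1)) := by
            rw [hG, ← mul_assoc, show (↑Wu : PowerSeries K) = (↑(Wu ^ (1:ℤ)) : PowerSeries K)
              from by rw [zpow_one], ← uval_add,
              show (1:ℤ) + (-n-2) = -n-1 by ring, show n - s + 1 = n - (s-1) by ring]

end Star

lemma zpow_X (t : ℤ) :
    (HahnSeries.ofPowerSeries ℤ K (X : PowerSeries K)) ^ t = HahnSeries.single t 1 := by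
  have hX1 : (X : PowerSeries K) = X * ((1 : (PowerSeries K)ˣ) : PowerSeries K) := by
    rw [Units.val_one, mul_one]
  rw [zpow_NF 1 hX1 t, one_zpow]
  simp


end Lagrange

/-- The second form of the Lagrange inversion formula.  Let `f` be a power series with
`f(0) = 0` and `f'(0) ≠ 0`, let `F` be its compositional inverse, and let
`g(z) = z^{-m} h(z)` be a Laurent series with only finitely many negative-power terms
(`h` a power series, `m : ℕ`).  Then for every integer `n`, the coefficient of `z^n` in
`g(F(z)) = F(z)^{-m}·h(F(z))` equals the coefficient of `z^{-1}` in
`g(z)·f(z)^{-n-1}·f'(z)`, all read in the field of formal Laurent series. -/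
theorem lagrange_inversion_second_form {K : Type*} [Field K] [CharZero K]
    (f F : PowerSeries K)
    (hf0 : PowerSeries.coeff 0 f = 0) (hf1 : PowerSeries.coeff 1 f ≠ 0)
    (hF0 : PowerSeries.coeff 0 F = 0)
    (hfF : pcomp f F = PowerSeries.X) (hFf : pcomp F f = PowerSeries.X)
    (m : ℕ) (h : PowerSeries K) (n : ℤ) :
    HahnSeries.coeff
        ((HahnSeries.ofPowerSeries ℤ K F) ^ (-(m : ℤ))
          * HahnSeries.ofPowerSeries ℤ K (pcomp h F)) n
      = HahnSeries.coeff
          ((HahnSeries.ofPowerSeries ℤ K (PowerSeries.X : PowerSeries K)) ^ (-(m : ℤ))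
            * HahnSeries.ofPowerSeries ℤ K h
            * (HahnSeries.ofPowerSeries ℤ K f) ^ (-n - 1)
            * HahnSeries.ofPowerSeries ℤ K (pderiv f)) (-1) := by
  classical
  open PowerSeries Finset Lagrange in
  -- set up the unit decompositions f = X·u, F = X·v
  obtain ⟨u, hfu0⟩ : (X : PowerSeries K) ∣ f := by
    rw [PowerSeries.X_dvd_iff, ← PowerSeries.coeff_zero_eq_constantCoeff_apply]
    exact hf0
  have hu0 : PowerSeries.constantCoeff u ≠ 0 := by
    intro h0
    apply hf1
    rw [hfu0, PowerSeries.coeff_succ_X_mul, PowerSeries.coeff_zero_eq_constantCoeff_apply, h0]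
  obtain ⟨Wu, hWu⟩ : IsUnit u :=
    PowerSeries.isUnit_iff_constantCoeff.mpr (isUnit_iff_ne_zero.mpr hu0)
  have hfu : f = X * (↑Wu : PowerSeries K) := by rw [hWu]; exact hfu0
  obtain ⟨v, hFv0⟩ : (X : PowerSeries K) ∣ F := by
    rw [PowerSeries.X_dvd_iff, ← PowerSeries.coeff_zero_eq_constantCoeff_apply]
    exact hF0
  have hF1 : PowerSeries.coeff 1 f * PowerSeries.coeff 1 F = 1 := by
    have h1 : PowerSeries.coeff 1 (pcomp f F) = 1 := by
      rw [hfF, PowerSeries.coeff_X, if_pos rfl]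
    rw [coeff_pcomp] at h1
    rw [Finset.sum_range_succ, Finset.sum_range_succ, Finset.sum_range_zero, zero_add,
      pow_zero, pow_one] at h1
    rw [hf0, zero_mul, zero_add] at h1
    exact h1
  have hv0 : PowerSeries.constantCoeff v ≠ 0 := by
    intro h0
    have : PowerSeries.coeff 1 F = 0 := by
      rw [hFv0, PowerSeries.coeff_succ_X_mul, PowerSeries.coeff_zero_eq_constantCoeff_apply, h0]
    rw [this, mul_zero] at hF1
    exact zero_ne_one hF1
  obtain ⟨Wv, hWv⟩ : IsUnit v :=
    PowerSeries.isUnit_iff_constantCoeff.mpr (isUnit_iff_ne_zero.mpr hv0)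
  have hFv : F = X * (↑Wv : PowerSeries K) := by rw [hWv]; exact hFv0
  have hF0' : PowerSeries.constantCoeff F = 0 := by
    rw [hFv, map_mul, PowerSeries.constantCoeff_X, zero_mul]
  set ι := HahnSeries.ofPowerSeries ℤ K with hι
  -- LHS
  have hLHS : ((ι F) ^ (-(m:ℤ)) * ι (pcomp h F)).coeff n
      = cf ((↑(Wv ^ (-(m:ℤ))) : PowerSeries K) * pcomp h F) (n + m) := by
    rw [zpow_NF Wv hFv (-(m:ℤ)), mul_assoc, ← map_mul, single_mul_ofPS_coeff,
      show n - -(m:ℤ) = n + m by ring]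
  -- RHS
  have hRHS : ((ι X) ^ (-(m:ℤ)) * ι h * (ι f) ^ (-n-1) * ι (pderiv f)).coeff (-1)
      = cf (h * ((↑(Wu ^ (-n-1)) : PowerSeries K) * pderiv f)) (n + m) := by
    rw [zpow_X (-(m:ℤ)), zpow_NF Wu hfu (-n-1)]
    have hre : HahnSeries.single (-(m:ℤ)) (1:K) * ι h
          * (HahnSeries.single (-n-1) 1 * ι ↑(Wu ^ (-n-1))) * ι (pderiv f)
        = (HahnSeries.single (-(m:ℤ)) (1:K) * HahnSeries.single (-n-1) 1)
            * ι (h * ((↑(Wu ^ (-n-1)) : PowerSeries K) * pderiv f)) := by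
      rw [map_mul, map_mul]; ring
    rw [hre, HahnSeries.single_mul_single, one_mul,
      single_mul_ofPS_coeff, show (-1 : ℤ) - (-(m:ℤ) + (-n-1)) = n + m by ring]
  rw [hLHS, hRHS]
  -- both sides as finite sums over coefficients of h
  by_cases hnm : n + (m:ℤ) < 0
  · rw [cf_neg hnm, cf_neg hnm]
  · push_neg at hnm
    set N : ℤ := n + m with hN
    set d : ℕ := N.toNat with hd
    obtain ⟨E, hE⟩ := pcomp_sum_mod hF0' h (d+1)
    have hsplit : (↑(Wv ^ (-(m:ℤ))) : PowerSeries K) * pcomp h F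
        = (∑ j ∈ range (d+1), PowerSeries.coeff j h
            • ((↑(Wv ^ (-(m:ℤ))) : PowerSeries K) * F ^ j))
          - X^(d+1) * (E * (↑(Wv ^ (-(m:ℤ))) : PowerSeries K)) := by
      have h1 : (↑(Wv ^ (-(m:ℤ))) : PowerSeries K)
            * (∑ j ∈ range (d+1), PowerSeries.coeff j h • F ^ j)
          = ∑ j ∈ range (d+1), PowerSeries.coeff j h
              • ((↑(Wv ^ (-(m:ℤ))) : PowerSeries K) * F ^ j) := by
        rw [Finset.mul_sum]
        exact Finset.sum_congr rfl fun j _ => mul_smul_comm _ _ _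
      linear_combination h1 - (↑(Wv ^ (-(m:ℤ))) : PowerSeries K) * hE
    rw [hsplit, cf_sub, cf_X_pow_mul,
      cf_neg (show N - ((d+1:ℕ):ℤ) < 0 by push_cast; omega), sub_zero, cf_sum]
    rw [show h * ((↑(Wu ^ (-n-1)) : PowerSeries K) * pderiv f)
        = ((↑(Wu ^ (-n-1)) : PowerSeries K) * pderiv f) * h from mul_comm _ _,
      cf_mul_expand _ h N (d+1) (by omega)]
    apply Finset.sum_congr rfl
    intro j hj
    congr 1
    have hFj : (↑(Wv ^ (-(m:ℤ))) : PowerSeries K) * F ^ j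
        = X ^ j * (↑(Wv ^ ((j:ℤ) + -(m:ℤ))) : PowerSeries K) := by
      rw [uval_pow Wv F hFv j, uval_add]
      ring
    rw [hFj, cf_X_pow_mul]
    have hstar := star Wu Wv f F hfu hFv hFf ((j:ℤ) + -(m:ℤ)) n
    rw [show n - ((j:ℤ) + -(m:ℤ)) = N - j by omega] at hstar
    rw [hstar]
end

section
/- Let C(z) be the formal power series satisfying C(z) = 1 + 2z C(z) + z² C(z)² (i.e., z C(z) is the compositional inverse of z/(1+z)²). Then for all n ≥ 1 and non-negative integers t, the coefficient of z^n in (zC(z))^{t+2}/(1+zC(z))² equals C(2n-3, n-t-2) - C(2n-3, n-t-3). -/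
open PowerSeries Finset

noncomputable def Cat : PowerSeries ℚ := PowerSeries.mk fun n => (catalan n : ℚ)

lemma Cat_eq : Cat = 1 + X * Cat ^ 2 := by
  ext m
  cases m with
  | zero => simp [Cat]
  | succ m =>
    rw [map_add, PowerSeries.coeff_one, if_neg (by omega)]
    rw [sq, PowerSeries.coeff_succ_X_mul, PowerSeries.coeff_mul]
    simp only [Cat, PowerSeries.coeff_mk, zero_add, catalan_succ']
    push_cast
    rfl

def g (j m : ℕ) : ℤ :=
  if m = 0 then 1 else ((2 * m + j - 1).choose m : ℤ) - (2 * m + j - 1).choose (m - 1)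

lemma g_rec (i m : ℕ) (hm : 1 ≤ m) : g (i + 1) m = g i m + g (i + 2) (m - 1) := by
  match m, hm with
  | 1, _ =>
    have e1 : 2 * 1 + (i + 1) - 1 = i + 2 := by omega
    have e2 : 2 * 1 + i - 1 = i + 1 := by omega
    simp only [g, if_neg one_ne_zero, if_pos rfl, e1, e2]
    simp [Nat.choose_one_right]
    ring
  | (k+2), _ =>
    simp only [g, if_neg (Nat.succ_ne_zero _)]
    have h1 : 2 * (k + 2) + (i + 1) - 1 = (2 * k + i + 3) + 1 := by omega
    have h2 : 2 * (k + 2) + i - 1 = 2 * k + i + 3 := by omega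
    have h3 : 2 * (k + 2 - 1) + (i + 2) - 1 = 2 * k + i + 3 := by omega
    have h4 : k + 2 - 1 = k + 1 := rfl
    rw [h1, h2, h3, h4]
    have p1 : (2 * k + i + 3 + 1).choose (k + 2)
        = (2 * k + i + 3).choose (k + 1) + (2 * k + i + 3).choose (k + 2) :=
      Nat.choose_succ_succ _ _
    have p2 : (2 * k + i + 3 + 1).choose (k + 1)
        = (2 * k + i + 3).choose k + (2 * k + i + 3).choose (k + 1) :=
      Nat.choose_succ_succ _ _
    have hk1 : k + 2 - 1 = k + 1 := rfl
    have hk2 : k + 1 - 1 = k := rfl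
    rw [if_neg (Nat.succ_ne_zero k), hk2, p1, p2]
    push_cast
    ring

lemma coeff_Cat_pow : ∀ m j : ℕ, PowerSeries.coeff m (Cat ^ j) = (g j m : ℚ) := by
  intro m
  induction m with
  | zero =>
    intro j
    simp only [PowerSeries.coeff_zero_eq_constantCoeff, map_pow, g, if_pos rfl]
    have : constantCoeff Cat = 1 := by simp [Cat, PowerSeries.constantCoeff_mk]
    rw [this]; simp
  | succ m ih =>
    intro j
    induction j with
    | zero =>
      simp only [pow_zero, PowerSeries.coeff_one, if_neg (Nat.succ_ne_zero m)]
      have : g 0 (m + 1) = 0 := by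
        simp only [g, if_neg (Nat.succ_ne_zero m)]
        have h1 : 2 * (m + 1) + 0 - 1 = 2 * m + 1 := by omega
        have h2 : m + 1 - 1 = m := rfl
        rw [h1, h2, Nat.choose_symm_half]
        ring
      rw [this]; simp
    | succ j ihj =>
      have step : Cat ^ (j + 1) = Cat ^ j + X * Cat ^ (j + 2) := by
        calc Cat ^ (j + 1) = Cat ^ j * Cat := pow_succ _ _
        _ = Cat ^ j * (1 + X * Cat ^ 2) := by rw [← Cat_eq]
        _ = Cat ^ j + X * Cat ^ (j + 2) := by ring
      rw [step, map_add, ihj, PowerSeries.coeff_succ_X_mul, ih (j + 2)]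
      rw [g_rec j (m + 1) (Nat.succ_le_succ (Nat.zero_le m))]
      push_cast
      simp

lemma zfinal (n t : ℕ) (h : t + 2 ≤ n) :
    g (2 * t + 2) (n - (t + 2)) =
      zchoose (2 * (n : ℤ) - 3) ((n : ℤ) - t - 2) - zchoose (2 * (n : ℤ) - 3) ((n : ℤ) - t - 3) := by
  rcases eq_or_lt_of_le h with he | hl
  · subst he
    have h1 : ((t + 2 : ℕ) : ℤ) - t - 2 = 0 := by push_cast; ring
    have h2 : ((t + 2 : ℕ) : ℤ) - t - 3 = -1 := by push_cast; ring
    simp only [g, Nat.sub_self, zchoose, h1, h2]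
    split_ifs <;>
      first
        | (simp_all; done)
        | omega
  · simp only [g, if_neg (by omega : ¬ n - (t + 2) = 0), zchoose]
    rw [if_pos ⟨by omega, by omega⟩, if_pos ⟨by omega, by omega⟩]
    have e1 : (2 * (n : ℤ) - 3).toNat = 2 * (n - (t + 2)) + (2 * t + 2) - 1 := by omega
    have e2 : ((n : ℤ) - t - 2).toNat = n - (t + 2) := by omega
    have e3 : ((n : ℤ) - t - 3).toNat = n - (t + 2) - 1 := by omega
    rw [e1, e2, e3]

open PowerSeries in
/-- If `C(z)` is the formal power series with `C = 1 + 2zC + z²C²`, then for `n ≥ 1`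
the coefficient of `z^n` in `(zC)^{t+2}/(1+zC)²` equals `C(2n-3,n-t-2) − C(2n-3,n-t-3)`. -/
theorem coeff_motzkin_term1 (C : PowerSeries ℚ)
    (hC : C = 1 + 2 * X * C + X ^ 2 * C ^ 2) (n t : ℕ) (hn : 1 ≤ n) :
    PowerSeries.coeff n ((X * C) ^ (t + 2) * ((1 + X * C) ^ 2)⁻¹) =
      ((zchoose (2 * (n : ℤ) - 3) ((n : ℤ) - t - 2)
        - zchoose (2 * (n : ℤ) - 3) ((n : ℤ) - t - 3) : ℤ) : ℚ) := by
  -- constant coefficient of C is 1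
  have hc : constantCoeff C = 1 := by
    have := congrArg (constantCoeff) hC
    simpa using this
  have hsq : (1 + X * C) ^ 2 = C := by
    conv_rhs => rw [hC]
    ring
  -- D = 1 + X*C satisfies the Catalan equation, so D = Cat
  have hD : (1 + X * C) = 1 + X * (1 + X * C) ^ 2 := by rw [hsq]
  have hDCat : (1 + X * C) = Cat := by
    have hfac : (1 - X * ((1 + X * C) + Cat)) * ((1 + X * C) - Cat) = 0 := by
      linear_combination hD - Cat_eq
    rcases mul_eq_zero.mp hfac with h | h
    · exfalso
      have := congrArg (constantCoeff) h
      simp at this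
    · exact sub_eq_zero.mp h
  have hCCat : C = Cat ^ 2 := by rw [← hsq, hDCat]
  -- simplify the expression
  have key : (X * C) ^ (t + 2) * ((1 + X * C) ^ 2)⁻¹ = X ^ (t + 2) * Cat ^ (2 * t + 2) := by
    rw [hsq, mul_pow, pow_succ C (t + 1), mul_assoc, mul_assoc,
      PowerSeries.mul_inv_cancel C (by rw [hc]; norm_num), mul_one, hCCat, ← pow_mul]
    ring_nf
  rw [key, PowerSeries.coeff_X_pow_mul', coeff_Cat_pow]
  rcases lt_or_ge n (t+2) with h | h
  · rw [if_neg (by omega)]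
    simp only [zchoose]
    rw [if_neg (by omega), if_neg (by omega)]
    norm_num
  · rw [if_pos h, zfinal n t h]
end
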